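/- arXiv:0712.2940 — 6 statements merged into one kernel-verified Lean document; each statement's English description precedes it below -/
import Mathlib

section
/- A real-valued random variable W has the standard Gaussian distribution N(0,1) if, and only if, E[f'(W) − W f(W)] = 0 for every continuous and piecewise continuously differentiable function f : ℝ → ℝ verifying E|f'(Z)| < ∞, where Z is a standard Gaussian random variable. -/
open MeasureTheory ProbabilityTheory Real Set

/-- `f` is continuous and piecewise continuously differentiable, with derivative `f'`
(outside a finite exceptional set). -/
def PiecewiseC1 (f f' : ℝ → ℝ) : Prop :=
  Continuous f ∧ ∃ S : Finset ℝ,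
    (∀ x ∉ S, HasDerivAt f (f' x) x) ∧ ContinuousOn f' ((S : Set ℝ)ᶜ)

open Filter
open scoped ENNReal NNReal Topology

noncomputable def steinρ : ℝ → ℝ := fun x => (Real.sqrt (2 * π))⁻¹ * Real.exp (-(x ^ 2) / 2)

lemma steinρ_pos (x : ℝ) : 0 < steinρ x := by
  have h : (0:ℝ) < Real.sqrt (2 * π) := Real.sqrt_pos.2 (by positivity)
  exact mul_pos (inv_pos.2 h) (Real.exp_pos _)

lemma steinρ_cont : Continuous steinρ := by
  unfold steinρ; fun_prop

lemma hasDerivAt_steinρ (x : ℝ) : HasDerivAt steinρ (-x * steinρ x) x := by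
  have h1 : HasDerivAt (fun y : ℝ => -(y ^ 2) / 2) (-x) x := by
    have := ((hasDerivAt_pow 2 x).neg).div_const 2
    simpa using this.congr_deriv (by ring)
  have h2 : HasDerivAt (fun y : ℝ => Real.exp (-(y ^ 2) / 2)) (Real.exp (-(x ^ 2) / 2) * (-x)) x :=
    (Real.hasDerivAt_exp _).comp x h1
  have := h2.const_mul (Real.sqrt (2 * π))⁻¹
  unfold steinρ
  refine this.congr_deriv ?_
  ring

lemma gaussianReal_eq :
    gaussianReal 0 1 = volume.withDensity (fun x => ENNReal.ofReal (steinρ x)) := by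
  rw [gaussianReal_of_var_ne_zero 0 one_ne_zero]
  congr 1
  funext x
  rw [gaussianPDF]
  congr 1
  simp [gaussianPDFReal, steinρ, neg_div]

lemma integrable_gauss_iff (g : ℝ → ℝ) :
    Integrable g (gaussianReal 0 1) ↔ Integrable (fun x => steinρ x * g x) volume := by
  rw [gaussianReal_eq]
  have hmeas : Measurable (fun x => (steinρ x).toNNReal) :=
    steinρ_cont.measurable.real_toNNReal
  have : (fun x => ENNReal.ofReal (steinρ x)) = (fun x => ((steinρ x).toNNReal : ℝ≥0∞)) := rfl
  rw [this, integrable_withDensity_iff_integrable_smul hmeas]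
  constructor <;> intro h <;> refine h.congr (Filter.Eventually.of_forall fun x => ?_) <;>
    simp [NNReal.smul_def, Real.coe_toNNReal _ (steinρ_pos x).le]

lemma integral_gauss (g : ℝ → ℝ) :
    ∫ x, g x ∂(gaussianReal 0 1) = ∫ x, steinρ x * g x := by
  rw [gaussianReal_eq]
  have hmeas : Measurable (fun x => (steinρ x).toNNReal) :=
    steinρ_cont.measurable.real_toNNReal
  have : (fun x => ENNReal.ofReal (steinρ x)) = (fun x => ((steinρ x).toNNReal : ℝ≥0∞)) := rfl
  rw [this, integral_withDensity_eq_integral_smul hmeas]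
  congr 1; funext x
  simp [NNReal.smul_def, Real.coe_toNNReal _ (steinρ_pos x).le]


lemma limit_zero_atTop {F : ℝ → ℝ} {L : ℝ}
    (hint : Integrable (fun x => x * F x) volume)
    (hlim : Tendsto F atTop (𝓝 L)) : L = 0 := by
  by_contra hL
  have hε : 0 < |L| / 2 := by positivity
  have hev : ∀ᶠ x in atTop, |L| / 2 ≤ |F x| := by
    filter_upwards [hlim.eventually (Metric.ball_mem_nhds L hε)] with x hx
    have : |F x - L| < |L| / 2 := by simpa [Real.dist_eq] using hx
    have := abs_sub_abs_le_abs_sub L (F x)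
    rw [abs_sub_comm] at this
    linarith
  obtain ⟨M, hM⟩ := hev.exists_forall_of_atTop
  set M' : ℝ := max M 1 with hM'
  have hsub : Ioi M' ⊆ {x : ℝ | |L| / 2 ≤ ‖x * F x‖} := by
    intro x hx
    have hx1 : (1:ℝ) ≤ x := le_of_lt (lt_of_le_of_lt (le_max_right M 1) hx)
    have hxM : M ≤ x := le_of_lt (lt_of_le_of_lt (le_max_left M 1) hx)
    have h1 : |L| / 2 ≤ |F x| := hM x hxM
    have : |L| / 2 * 1 ≤ |F x| * |x| := by
      apply mul_le_mul h1 (le_trans hx1 (le_abs_self x)) zero_le_one (abs_nonneg _)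
    simp only [mem_setOf_eq, norm_mul, Real.norm_eq_abs]
    nlinarith [abs_nonneg (F x), abs_nonneg x]
  have hfin := (hint.restrict (s := Ioi M')).measure_norm_ge_lt_top hε
  rw [Measure.restrict_apply' measurableSet_Ioi] at hfin
  have : ({x : ℝ | |L| / 2 ≤ ‖x * F x‖} ∩ Ioi M') = Ioi M' :=
    inter_eq_self_of_subset_right hsub
  rw [this, Real.volume_Ioi] at hfin
  exact (lt_irrefl _ hfin).elim

lemma limit_zero_atBot {F : ℝ → ℝ} {L : ℝ}
    (hint : Integrable (fun x => x * F x) volume)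
    (hlim : Tendsto F atBot (𝓝 L)) : L = 0 := by
  have h1 : Tendsto (fun x : ℝ => F (-x)) atTop (𝓝 L) := hlim.comp tendsto_neg_atTop_atBot
  refine limit_zero_atTop (F := fun x => F (-x)) ?_ h1
  have h2 : Integrable (fun x : ℝ => -x * F (-x)) volume := by
    have := hint.comp_neg (μ := volume)
    simpa using this
  exact h2.neg.congr (Filter.Eventually.of_forall fun x => by simp)


lemma integrable_steinρ : Integrable steinρ volume := by
  have h := integrable_exp_neg_mul_sq (b := (1:ℝ)/2) (by norm_num)
  have h2 : Integrable (fun x : ℝ => Real.exp (-(x ^ 2) / 2)) volume := by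
    refine h.congr (Filter.Eventually.of_forall fun x => ?_)
    ring_nf
  exact h2.const_mul _

lemma stein_integral_exp_mul_Ioi {b : ℝ} (a : ℝ) (hb : 0 < b) :
    ∫ t in Ioi a, Real.exp (-(b * t)) = Real.exp (-(b * a)) / b := by
  have h := integral_comp_mul_left_Ioi (fun x => Real.exp (-x)) a hb
  simp only [smul_eq_mul] at h
  rw [show (fun t : ℝ => Real.exp (-(b * t))) = (fun t : ℝ => Real.exp (-(b * t))) from rfl]
  calc ∫ t in Ioi a, Real.exp (-(b * t)) = b⁻¹ * ∫ x in Ioi (b * a), Real.exp (-x) := h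
    _ = Real.exp (-(b * a)) / b := by rw [integral_exp_neg_Ioi]; field_simp

lemma stein_integral_exp_mul_Iic {b : ℝ} (a : ℝ) (hb : 0 < b) :
    ∫ t in Iic a, Real.exp (b * t) = Real.exp (b * a) / b := by
  have h := integral_comp_neg_Ioi (-a) (fun t => Real.exp (b * t))
  simp only [neg_neg] at h
  rw [← h, show (fun t : ℝ => Real.exp (b * -t)) = (fun t : ℝ => Real.exp (-(b * t))) from
    funext fun t => by ring_nf]
  rw [stein_integral_exp_mul_Ioi _ hb]
  ring_nf

lemma exp_bound_global (x t : ℝ) : steinρ t ≤ (Real.sqrt (2 * π))⁻¹ *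
    (Real.exp (x ^ 2 / 2) * Real.exp (-(x * t))) := by
  have h : (0:ℝ) < Real.sqrt (2 * π) := Real.sqrt_pos.2 (by positivity)
  unfold steinρ
  rw [← Real.exp_add]
  apply mul_le_mul_of_nonneg_left _ (inv_pos.2 h).le
  apply Real.exp_le_exp.2
  nlinarith [sq_nonneg (t - x)]

lemma mills_Ioi {x : ℝ} (hx : 0 < x) : ∫ t in Ioi x, steinρ t ≤ steinρ x / x := by
  have hle : ∀ t ∈ Ioi x, steinρ t ≤ (Real.sqrt (2 * π))⁻¹ *
      (Real.exp (x ^ 2 / 2) * Real.exp (-(x * t))) := fun t _ => exp_bound_global x t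
  have hint2 : IntegrableOn (fun t => (Real.sqrt (2 * π))⁻¹ *
      (Real.exp (x ^ 2 / 2) * Real.exp (-(x * t)))) (Ioi x) := by
    apply Integrable.const_mul
    apply Integrable.const_mul
    have := exp_neg_integrableOn_Ioi x hx
    refine this.congr (Filter.Eventually.of_forall fun t => ?_)
    ring_nf
  have hmono := setIntegral_mono_on integrable_steinρ.integrableOn hint2 measurableSet_Ioi hle
  refine hmono.trans ?_
  rw [integral_const_mul, integral_const_mul, stein_integral_exp_mul_Ioi _ hx]
  have key : Real.exp (x ^ 2 / 2) * (Real.exp (-(x * x)) / x)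
      = Real.exp (-(x ^ 2) / 2) / x := by
    rw [← mul_div_assoc, ← Real.exp_add]; congr 2; ring
  rw [key]
  unfold steinρ
  rw [mul_div_assoc]

lemma mills_Iic {x : ℝ} (hx : x < 0) : ∫ t in Iic x, steinρ t ≤ steinρ x / (-x) := by
  have hle : ∀ t ∈ Iic x, steinρ t ≤ (Real.sqrt (2 * π))⁻¹ *
      (Real.exp (x ^ 2 / 2) * Real.exp (-x * t)) := fun t _ => by
    have := exp_bound_global x t
    rw [show -x * t = -(x * t) by ring]
    exact this
  have hbx : (0:ℝ) < -x := by linarith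
  have hint2 : IntegrableOn (fun t => (Real.sqrt (2 * π))⁻¹ *
      (Real.exp (x ^ 2 / 2) * Real.exp (-x * t))) (Iic x) := by
    apply Integrable.const_mul
    apply Integrable.const_mul
    have A : MeasurableEmbedding (fun t : ℝ => -t) :=
      (Homeomorph.neg ℝ).isClosedEmbedding.measurableEmbedding
    have h := (exp_neg_integrableOn_Ioi (-x) hbx)
    have h' : IntegrableOn (fun t : ℝ => Real.exp (-x * -t)) (Ici (-x)) := by
      rw [integrableOn_Ici_iff_integrableOn_Ioi]
      refine h.congr (Filter.Eventually.of_forall fun t => ?_)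
      ring_nf
    have hrestr : volume.restrict (Iic x)
        = ((volume.restrict (Ici (-x))).map (fun t : ℝ => -t)) := by
      have hpre : (fun t : ℝ => -t) ⁻¹' Iic x = Ici (-x) := by
        ext t
        simp only [mem_preimage, mem_Iic, mem_Ici]
        constructor <;> intro <;> linarith
      conv_lhs => rw [← Measure.map_neg_eq_self (volume : Measure ℝ)]
      rw [Measure.restrict_map measurable_neg measurableSet_Iic, hpre]
    show Integrable _ _
    rw [hrestr, A.integrable_map_iff]
    exact h'
  have hmono := setIntegral_mono_on integrable_steinρ.integrableOn hint2 measurableSet_Iic hle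
  refine hmono.trans ?_
  rw [integral_const_mul, integral_const_mul, stein_integral_exp_mul_Iic _ hbx]
  have key : Real.exp (x ^ 2 / 2) * (Real.exp (-x * x) / -x)
      = Real.exp (-(x ^ 2) / 2) / -x := by
    rw [← mul_div_assoc, ← Real.exp_add]; congr 2; ring
  rw [key]
  unfold steinρ
  rw [mul_div_assoc]

lemma stein_forward_gauss {f f' : ℝ → ℝ} (hfc : Continuous f) (S : Finset ℝ)
    (hSd : ∀ x ∉ S, HasDerivAt f (f' x) x)
    (hint1 : Integrable f' (gaussianReal 0 1))
    (hint2 : Integrable (fun x => f' x - x * f x) (gaussianReal 0 1)) :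
    ∫ x, (f' x - x * f x) ∂(gaussianReal 0 1) = 0 := by
  set F : ℝ → ℝ := fun x => steinρ x * f x with hF
  set G : ℝ → ℝ := fun x => steinρ x * (f' x - x * f x) with hG
  have hFc : Continuous F := steinρ_cont.mul hfc
  have hFd : ∀ x ∉ (S : Set ℝ), HasDerivAt F (G x) x := by
    intro x hx
    have := (hasDerivAt_steinρ x).mul (hSd x hx)
    refine this.congr_deriv ?_
    simp only [hG]
    ring
  have hGi : Integrable G volume := (integrable_gauss_iff _).mp hint2
  have FTC : ∀ a b : ℝ, ∫ x in a..b, G x = F b - F a := by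
    intro a b
    exact integral_eq_of_hasDerivAt_off_countable F G (S : Set ℝ).to_countable
      hFc.continuousOn (fun x hx => hFd x hx.2) hGi.intervalIntegrable
  have hIoi : Tendsto (fun b : ℝ => ∫ x in (0:ℝ)..b, G x) atTop (𝓝 (∫ x in Ioi 0, G x)) :=
    intervalIntegral_tendsto_integral_Ioi 0 hGi.integrableOn tendsto_id
  have hIic : Tendsto (fun a : ℝ => ∫ x in a..(0:ℝ), G x) atBot (𝓝 (∫ x in Iic 0, G x)) :=
    intervalIntegral_tendsto_integral_Iic 0 hGi.integrableOn tendsto_id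
  have hFtop : Tendsto F atTop (𝓝 (F 0 + ∫ x in Ioi 0, G x)) := by
    refine (tendsto_const_nhds.add hIoi).congr fun b => ?_
    rw [FTC 0 b]; ring
  have hFbot : Tendsto F atBot (𝓝 (F 0 - ∫ x in Iic 0, G x)) := by
    refine (tendsto_const_nhds.sub hIic).congr fun a => ?_
    rw [FTC a 0]; ring
  have hxfInt : Integrable (fun x => x * F x) volume := by
    have h1 : Integrable (fun x => steinρ x * f' x) volume := (integrable_gauss_iff f').mp hint1
    refine (h1.sub hGi).congr (Filter.Eventually.of_forall fun x => ?_)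
    simp only [hF, hG, Pi.sub_apply]
    ring
  have htop0 : F 0 + ∫ x in Ioi 0, G x = 0 := limit_zero_atTop hxfInt hFtop
  have hbot0 : F 0 - ∫ x in Iic 0, G x = 0 := limit_zero_atBot hxfInt hFbot
  have htotal : (∫ x in Iic 0, G x) + ∫ x in Ioi 0, G x = ∫ x, G x :=
    intervalIntegral.integral_Iic_add_Ioi hGi.integrableOn hGi.integrableOn
  rw [integral_gauss, ← htotal]
  have : (∫ x in Iic 0, G x) = F 0 := by linarith
  have h2 : (∫ x in Ioi 0, G x) = -F 0 := by linarith
  rw [this, h2]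
  ring

lemma stein_aesm {f f' : ℝ → ℝ} (hfc : Continuous f) (S : Finset ℝ)
    (hSc : ContinuousOn f' ((S : Set ℝ)ᶜ)) :
    AEStronglyMeasurable (fun x => f' x - x * f x) (gaussianReal 0 1) := by
  have hγS : (gaussianReal 0 1) (S : Set ℝ) = 0 :=
    gaussianReal_absolutelyContinuous 0 one_ne_zero (S.finite_toSet.measure_zero _)
  have hrestr : (gaussianReal 0 1).restrict ((S : Set ℝ)ᶜ) = gaussianReal 0 1 := by
    apply Measure.restrict_eq_self_of_ae_mem
    refine Filter.eventually_iff.2 ?_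
    rw [show {x : ℝ | x ∈ ((S : Set ℝ)ᶜ)} = ((S : Set ℝ))ᶜ from rfl,
      mem_ae_iff, compl_compl]
    exact hγS
  have h1 : AEStronglyMeasurable f' (gaussianReal 0 1) := by
    rw [← hrestr]
    exact hSc.aestronglyMeasurable (S.finite_toSet.measurableSet.compl)
  exact h1.sub ((continuous_id.mul hfc).aestronglyMeasurable)

lemma stein_forward {Ω : Type*} [MeasurableSpace Ω] (P : Measure Ω) [IsProbabilityMeasure P]
    (W : Ω → ℝ) (hW : Measurable W) (hmap : P.map W = gaussianReal 0 1)
    {f f' : ℝ → ℝ} (hfc : Continuous f) (S : Finset ℝ)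
    (hSd : ∀ x ∉ S, HasDerivAt f (f' x) x) (hSc : ContinuousOn f' ((S : Set ℝ)ᶜ))
    (hint1 : Integrable f' (gaussianReal 0 1)) :
    ∫ ω, (f' (W ω) - W ω * f (W ω)) ∂P = 0 := by
  have hg_aesm : AEStronglyMeasurable (fun x => f' x - x * f x) (gaussianReal 0 1) :=
    stein_aesm hfc S hSc
  by_cases hgint : Integrable (fun x => f' x - x * f x) (gaussianReal 0 1)
  · have h1 : ∫ ω, (f' (W ω) - W ω * f (W ω)) ∂P
        = ∫ x, (f' x - x * f x) ∂(P.map W) := by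
      rw [integral_map hW.aemeasurable (by rw [hmap]; exact hg_aesm)]
    rw [h1, hmap]
    exact stein_forward_gauss hfc S hSd hint1 hgint
  · refine integral_undef fun h => hgint ?_
    rw [← hmap]
    exact (integrable_map_measure (hmap ▸ hg_aesm) hW.aemeasurable).mpr h

lemma stein_backward_key {Ω : Type*} [MeasurableSpace Ω] (P : Measure Ω)
    [IsProbabilityMeasure P] (W : Ω → ℝ) (hW : Measurable W)
    (hyp : ∀ f f' : ℝ → ℝ,
      (Continuous f ∧ ∃ S : Finset ℝ,
        (∀ x ∉ S, HasDerivAt f (f' x) x) ∧ ContinuousOn f' ((S : Set ℝ)ᶜ)) →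
      Integrable f' (gaussianReal 0 1) →
      ∫ ω, (f' (W ω) - W ω * f (W ω)) ∂P = 0)
    (h : ℝ → ℝ) (hc : Continuous h) (B : ℝ) (hB : ∀ x, |h x| ≤ B) :
    ∫ ω, h (W ω) ∂P = ∫ x, h x ∂(gaussianReal 0 1) := by
  set c : ℝ := ∫ x, h x ∂(gaussianReal 0 1) with hcdef
  have hhint : Integrable h (gaussianReal 0 1) := by
    refine Integrable.mono' (integrable_const B) hc.aestronglyMeasurable ?_
    exact Filter.Eventually.of_forall fun x => by rw [Real.norm_eq_abs]; exact hB x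
  set φ : ℝ → ℝ := fun t => steinρ t * (h t - c) with hφdef
  have hφcont : Continuous φ := steinρ_cont.mul (hc.sub continuous_const)
  have hφint : Integrable φ volume :=
    (integrable_gauss_iff _).mp (hhint.sub (integrable_const c))
  have hφtotal : ∫ t, φ t = 0 := by
    rw [← integral_gauss, integral_sub hhint (integrable_const c)]
    simp [hcdef]
  set I : ℝ → ℝ := fun x => ∫ t in Iic x, φ t with hIdef
  have hIeq : ∀ y, I y = I 0 + ∫ t in (0:ℝ)..y, φ t := by
    intro y
    rw [← intervalIntegral.integral_Iic_sub_Iic hφint.integrableOn hφint.integrableOn]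
    simp [hIdef]
  have hIder : ∀ x, HasDerivAt I (φ x) x := by
    intro x
    have h2 : HasDerivAt (fun u => ∫ t in (0:ℝ)..u, φ t) (φ x) x :=
      intervalIntegral.integral_hasDerivAt_right hφint.intervalIntegrable
        (hφcont.stronglyMeasurable.stronglyMeasurableAtFilter) hφcont.continuousAt
    have h3 := h2.const_add (I 0)
    refine h3.congr_of_eventuallyEq (Filter.Eventually.of_forall fun y => hIeq y)
  set fs : ℝ → ℝ := fun x => (steinρ x)⁻¹ * I x with hfsdef
  set fs' : ℝ → ℝ := fun x => x * fs x + (h x - c) with hfs'def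
  have hρinv : ∀ x : ℝ, HasDerivAt (fun y => (steinρ y)⁻¹) (x * (steinρ x)⁻¹) x := by
    intro x
    have hne : steinρ x ≠ 0 := (steinρ_pos x).ne'
    have := (hasDerivAt_steinρ x).inv hne
    refine this.congr_deriv ?_
    field_simp
  have hfd : ∀ x, HasDerivAt fs (fs' x) x := by
    intro x
    have hne : steinρ x ≠ 0 := (steinρ_pos x).ne'
    have hd := (hρinv x).mul (hIder x)
    have heq : x * (steinρ x)⁻¹ * I x + (steinρ x)⁻¹ * φ x = fs' x := by
      simp only [hfs'def, hfsdef, hφdef]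
      field_simp
    rw [← heq]
    exact hd
  have hfscont : Continuous fs := continuous_iff_continuousAt.2 fun x => (hfd x).continuousAt
  have hfs'cont : Continuous fs' := (continuous_id.mul hfscont).add (hc.sub continuous_const)
  -- bound on |x * fs x|
  set B' : ℝ := B + |c| with hB'def
  have hB'0 : 0 ≤ B' := by
    have := hB 0
    have := abs_nonneg (h 0)
    have := abs_nonneg c
    linarith
  have hφbound : ∀ t, |φ t| ≤ steinρ t * B' := by
    intro t
    rw [hφdef, abs_mul, abs_of_pos (steinρ_pos t)]
    apply mul_le_mul_of_nonneg_left _ (steinρ_pos t).le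
    calc |h t - c| ≤ |h t| + |c| := abs_sub _ _
      _ ≤ B' := by have := hB t; rw [hB'def]; linarith
  have hxfs : ∀ x, |x * fs x| ≤ B' := by
    intro x
    have hρx := steinρ_pos x
    rcases lt_trichotomy x 0 with hx | hx | hx
    · have h1 : |I x| ≤ B' * (steinρ x / (-x)) := by
        calc |I x| ≤ ∫ t in Iic x, |φ t| := by
              simpa [Real.norm_eq_abs] using
                norm_integral_le_integral_norm (μ := volume.restrict (Iic x)) φ
          _ ≤ ∫ t in Iic x, steinρ t * B' := by
              apply setIntegral_mono_on (hφint.abs.integrableOn)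
                ((integrable_steinρ.mul_const B').integrableOn) measurableSet_Iic
              exact fun t _ => hφbound t
          _ = (∫ t in Iic x, steinρ t) * B' := by rw [integral_mul_const]
          _ ≤ B' * (steinρ x / (-x)) := by
              rw [mul_comm]
              exact mul_le_mul_of_nonneg_left (mills_Iic hx) hB'0
      rw [hfsdef]
      rw [abs_mul, abs_mul, abs_inv, abs_of_pos hρx]
      calc |x| * ((steinρ x)⁻¹ * |I x|)
          ≤ |x| * ((steinρ x)⁻¹ * (B' * (steinρ x / (-x)))) := by
            apply mul_le_mul_of_nonneg_left _ (abs_nonneg x)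
            exact mul_le_mul_of_nonneg_left h1 (by positivity)
        _ = B' := by
            rw [abs_of_neg hx]
            field_simp
            rw [mul_comm, mul_div_assoc, div_self hx.ne, mul_one]
    · simp [hx, hB'0]
    · have hIx : I x = - ∫ t in Ioi x, φ t := by
        have := intervalIntegral.integral_Iic_add_Ioi (b := x)
          hφint.integrableOn hφint.integrableOn
        rw [hφtotal] at this
        rw [hIdef]
        linarith
      have h1 : |I x| ≤ B' * (steinρ x / x) := by
        rw [hIx, abs_neg]
        calc |∫ t in Ioi x, φ t| ≤ ∫ t in Ioi x, |φ t| := by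
              simpa [Real.norm_eq_abs] using
                norm_integral_le_integral_norm (μ := volume.restrict (Ioi x)) φ
          _ ≤ ∫ t in Ioi x, steinρ t * B' := by
              apply setIntegral_mono_on (hφint.abs.integrableOn)
                ((integrable_steinρ.mul_const B').integrableOn) measurableSet_Ioi
              exact fun t _ => hφbound t
          _ = (∫ t in Ioi x, steinρ t) * B' := by rw [integral_mul_const]
          _ ≤ B' * (steinρ x / x) := by
              rw [mul_comm]
              exact mul_le_mul_of_nonneg_left (mills_Ioi hx) hB'0
      rw [hfsdef]
      rw [abs_mul, abs_mul, abs_inv, abs_of_pos hρx]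
      calc |x| * ((steinρ x)⁻¹ * |I x|)
          ≤ |x| * ((steinρ x)⁻¹ * (B' * (steinρ x / x))) := by
            apply mul_le_mul_of_nonneg_left _ (abs_nonneg x)
            exact mul_le_mul_of_nonneg_left h1 (by positivity)
        _ = B' := by
            rw [abs_of_pos hx]
            field_simp
  have hfs'int : Integrable fs' (gaussianReal 0 1) := by
    refine Integrable.mono' (integrable_const (B' + B')) hfs'cont.aestronglyMeasurable ?_
    refine Filter.Eventually.of_forall fun x => ?_
    rw [Real.norm_eq_abs, hfs'def]
    calc |x * fs x + (h x - c)| ≤ |x * fs x| + |h x - c| := abs_add_le _ _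
      _ ≤ B' + B' := by
          refine add_le_add (hxfs x) ?_
          calc |h x - c| ≤ |h x| + |c| := abs_sub _ _
            _ ≤ B' := by have := hB x; rw [hB'def]; linarith
  have h0 := hyp fs fs' ⟨hfscont, ∅, fun x _ => hfd x, hfs'cont.continuousOn⟩ hfs'int
  have hinteq : ∀ ω, fs' (W ω) - W ω * fs (W ω) = h (W ω) - c := by
    intro ω
    rw [hfs'def]
    ring
  rw [show (fun ω => fs' (W ω) - W ω * fs (W ω)) = fun ω => h (W ω) - c from
    funext hinteq] at h0
  have hWh_int : Integrable (fun ω => h (W ω)) P := by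
    refine Integrable.mono' (integrable_const B)
      ((hc.measurable.comp hW).aestronglyMeasurable) ?_
    exact Filter.Eventually.of_forall fun ω => by rw [Real.norm_eq_abs]; exact hB _
  rw [integral_sub hWh_int (integrable_const c), integral_const] at h0
  simp only [measure_univ, ENNReal.toReal_one, one_smul, smul_eq_mul, probReal_univ] at h0
  linarith

/-- A real-valued random variable `W` has the standard Gaussian distribution `N(0,1)` if, and
only if, `E[f'(W) − W f(W)] = 0` for every continuous, piecewise continuously differentiable
`f : ℝ → ℝ` with `E|f'(Z)| < ∞`, `Z` standard Gaussian. -/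
theorem stein_characterization_gaussian
    {Ω : Type*} [MeasurableSpace Ω] (P : Measure Ω) [IsProbabilityMeasure P]
    (W : Ω → ℝ) (hW : Measurable W) :
    P.map W = gaussianReal 0 1 ↔
      ∀ f f' : ℝ → ℝ, PiecewiseC1 f f' →
        Integrable f' (gaussianReal 0 1) →
        ∫ ω, (f' (W ω) - W ω * f (W ω)) ∂P = 0 := by
  constructor
  · intro hmap f f' hpc hint
    obtain ⟨hfc, S, hSd, hSc⟩ := hpc
    exact stein_forward P W hW hmap hfc S hSd hSc hint
  · intro hyp
    have key : ∀ h : ℝ → ℝ, Continuous h → ∀ B : ℝ, (∀ x, |h x| ≤ B) →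
        ∫ ω, h (W ω) ∂P = ∫ x, h x ∂(gaussianReal 0 1) :=
      fun h hc B hB => stein_backward_key P W hW (fun f f' hpc => hyp f f' hpc) h hc B hB
    have hprob : IsProbabilityMeasure (P.map W) := Measure.isProbabilityMeasure_map hW.aemeasurable
    apply ext_of_forall_lintegral_eq_of_IsFiniteMeasure
    intro g
    set h : ℝ → ℝ := fun x => ((g x : ℝ≥0) : ℝ) with hhdef
    have hhc : Continuous h := NNReal.continuous_coe.comp g.continuous
    obtain ⟨C, hC⟩ := g.bounded
    set B : ℝ := C + ((g 0 : ℝ≥0) : ℝ) with hBdef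
    have hhB : ∀ x, |h x| ≤ B := by
      intro x
      have h1 : dist (g x) (g 0) ≤ C := hC x 0
      rw [NNReal.dist_eq] at h1
      have h2 : (0:ℝ) ≤ h x := (g x).coe_nonneg
      rw [abs_of_nonneg h2]
      have := abs_sub_abs_le_abs_sub ((g x : ℝ≥0) : ℝ) ((g 0 : ℝ≥0) : ℝ)
      rw [abs_of_nonneg (g x).coe_nonneg, abs_of_nonneg (g 0).coe_nonneg] at this
      rw [hBdef, hhdef]
      linarith
    have hEq := key h hhc B hhB
    have hint1 : Integrable h (P.map W) := by
      refine Integrable.mono' (integrable_const B) hhc.aestronglyMeasurable ?_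
      exact Filter.Eventually.of_forall fun x => by rw [Real.norm_eq_abs]; exact hhB x
    have hint2 : Integrable h (gaussianReal 0 1) := by
      refine Integrable.mono' (integrable_const B) hhc.aestronglyMeasurable ?_
      exact Filter.Eventually.of_forall fun x => by rw [Real.norm_eq_abs]; exact hhB x
    have hofReal : ∀ (μ : Measure ℝ), Integrable h μ →
        ∫⁻ x, (g x : ℝ≥0∞) ∂μ = ENNReal.ofReal (∫ x, h x ∂μ) := by
      intro μ hμ
      rw [ofReal_integral_eq_lintegral_ofReal hμ
        (Filter.Eventually.of_forall fun x => (g x).coe_nonneg)]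
      congr 1
      funext x
      rw [hhdef, ENNReal.ofReal_coe_nnreal]
    rw [hofReal _ hint1, hofReal _ hint2]
    congr 1
    rw [integral_map hW.aemeasurable hhc.aestronglyMeasurable]
    exact hEq
end

section
/- For every z ∈ ℝ, the Stein equation f'(x) − x f(x) = 1_{(−∞,z]}(x) − P(Z ≤ z), x ∈ ℝ, admits a solution f which is bounded by √(2π)/4, piecewise continuously differentiable, and such that ‖f'‖_∞ ≤ 1. -/
open MeasureTheory ProbabilityTheory Real Set

open Filter


noncomputable def phiD (t : ℝ) : ℝ := (Real.sqrt (2 * π))⁻¹ * Real.exp (-(t ^ 2) / 2)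
noncomputable def PhiD (x : ℝ) : ℝ := ∫ t in Iic x, phiD t

lemma phiD_nonneg (t : ℝ) : 0 ≤ phiD t := by
  unfold phiD; positivity

lemma phiD_cont : Continuous phiD := by
  unfold phiD
  fun_prop

lemma phiD_eq (t : ℝ) : phiD t = (Real.sqrt (2 * π))⁻¹ * Real.exp (-(1/2) * t ^ 2) := by
  unfold phiD; ring_nf

lemma integrable_phiD : Integrable phiD := by
  have h : Integrable (fun t : ℝ => Real.exp (-(1/2) * t ^ 2)) :=
    integrable_exp_neg_mul_sq (by norm_num)
  have := h.const_mul (Real.sqrt (2 * π))⁻¹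
  refine this.congr ?_
  filter_upwards with t
  rw [phiD_eq]

lemma sqrt_two_pi_pos : 0 < Real.sqrt (2 * π) := Real.sqrt_pos.2 (by positivity)

lemma integral_phiD : ∫ t, phiD t = 1 := by
  have h : ∫ t : ℝ, Real.exp (-(1/2) * t ^ 2) = Real.sqrt (2 * π) := by
    rw [integral_gaussian]
    rw [show π / (1/2) = 2 * π by ring]
  simp_rw [phiD_eq, integral_const_mul, h]
  field_simp

lemma PhiD_neg (x : ℝ) : PhiD (-x) = ∫ t in Ioi x, phiD t := by
  unfold PhiD
  rw [← integral_comp_neg_Ioi]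
  congr 1
  ext t
  unfold phiD
  ring_nf

lemma PhiD_add (x : ℝ) : PhiD x + PhiD (-x) = 1 := by
  rw [PhiD_neg, ← integral_phiD]
  exact intervalIntegral.integral_Iic_add_Ioi integrable_phiD.integrableOn integrable_phiD.integrableOn

lemma PhiD_mono : Monotone PhiD := by
  intro a b hab
  exact setIntegral_mono_set integrable_phiD.integrableOn
    (ae_of_all _ phiD_nonneg) (HasSubset.Subset.eventuallyLE (Iic_subset_Iic.2 hab))

lemma PhiD_nonneg (x : ℝ) : 0 ≤ PhiD x :=
  setIntegral_nonneg measurableSet_Iic fun t _ => phiD_nonneg t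

lemma PhiD_le_one (x : ℝ) : PhiD x ≤ 1 := by
  have := PhiD_add x
  have := PhiD_nonneg (-x)
  linarith


lemma hasDerivAt_PhiD (x : ℝ) : HasDerivAt PhiD (phiD x) x := by
  have key : ∀ y, PhiD y = PhiD 0 + ∫ t in (0:ℝ)..y, phiD t := by
    intro y
    rw [← intervalIntegral.integral_Iic_sub_Iic integrable_phiD.integrableOn
      integrable_phiD.integrableOn]
    unfold PhiD; ring
  have phiD_cont : Continuous phiD := by unfold phiD; fun_prop
  have h : HasDerivAt (fun y => PhiD 0 + ∫ t in (0:ℝ)..y, phiD t) (phiD x) x := by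
    refine HasDerivAt.const_add _ ?_
    exact intervalIntegral.integral_hasDerivAt_right
      integrable_phiD.intervalIntegrable
      (phiD_cont.stronglyMeasurableAtFilter _ _) phiD_cont.continuousAt
  exact h.congr_of_eventuallyEq (Eventually.of_forall key)

lemma integral_texp (x : ℝ) :
    ∫ t in Ioi x, t * Real.exp (-(t ^ 2) / 2) = Real.exp (-(x ^ 2) / 2) := by
  have hderiv : ∀ t ∈ Ici x, HasDerivAt (fun t : ℝ => -Real.exp (-(t ^ 2) / 2))
      (t * Real.exp (-(t ^ 2) / 2)) t := by
    intro t _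
    have h1 : HasDerivAt (fun t : ℝ => -(t ^ 2) / 2) (-t) t := by
      have := ((hasDerivAt_pow 2 t).neg).div_const 2
      simpa using this.congr_deriv (by ring)
    exact (h1.exp).neg.congr_deriv (by ring)
  have hint : IntegrableOn (fun t : ℝ => t * Real.exp (-(t ^ 2) / 2)) (Ioi x) := by
    have h : Integrable (fun t : ℝ => t * Real.exp (-(1/2) * t ^ 2)) :=
      integrable_mul_exp_neg_mul_sq (by norm_num)
    refine (h.congr ?_).integrableOn
    filter_upwards with t
    ring_nf
  have htend : Tendsto (fun t : ℝ => -Real.exp (-(t ^ 2) / 2)) atTop (nhds 0) := by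
    rw [show (0:ℝ) = -0 by ring]
    refine Tendsto.neg ?_
    refine Real.tendsto_exp_atBot.comp ?_
    have : Tendsto (fun t : ℝ => t ^ 2) atTop atTop := tendsto_pow_atTop two_ne_zero
    exact (tendsto_neg_atBot_iff.mpr this).atBot_div_const (by norm_num)
  have := integral_Ioi_of_hasDerivAt_of_tendsto' hderiv hint htend
  rw [this]; ring

lemma PhiD_neg' (x : ℝ) : PhiD (-x) = ∫ t in Ioi x, phiD t := by
  unfold PhiD
  rw [← integral_comp_neg_Ioi]
  congr 1; ext t; unfold phiD; ring_nf

lemma mills (x : ℝ) : x * PhiD (-x) ≤ phiD x := by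
  have hint2 : IntegrableOn (fun t : ℝ => t * phiD t) (Ioi x) := by
    have h : Integrable (fun t : ℝ => t * Real.exp (-(1/2) * t ^ 2)) :=
      integrable_mul_exp_neg_mul_sq (by norm_num)
    refine ((h.const_mul (Real.sqrt (2 * π))⁻¹).congr ?_).integrableOn
    filter_upwards with t
    unfold phiD; ring_nf
  have h1 : x * PhiD (-x) = ∫ t in Ioi x, x * phiD t := by
    rw [PhiD_neg', integral_const_mul]
  have h2 : (∫ t in Ioi x, x * phiD t) ≤ ∫ t in Ioi x, t * phiD t := by
    refine setIntegral_mono_on (integrable_phiD.integrableOn.const_mul x) hint2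
      measurableSet_Ioi ?_
    intro t ht
    exact mul_le_mul_of_nonneg_right (le_of_lt (by exact ht)) (phiD_nonneg t)
  have h3 : (∫ t in Ioi x, t * phiD t) = phiD x := by
    have : (∫ t in Ioi x, t * phiD t)
        = (Real.sqrt (2 * π))⁻¹ * ∫ t in Ioi x, t * Real.exp (-(t ^ 2) / 2) := by
      rw [← integral_const_mul]
      congr 1; ext t; unfold phiD; ring
    rw [this, integral_texp]; rfl
  rw [h1]; rw [← h3] at *; linarith


lemma integral_texp_Ioc {x : ℝ} (hx : 0 ≤ x) :
    ∫ r in Ioc 0 x, r * Real.exp (-(r ^ 2) / 2) = 1 - Real.exp (-(x ^ 2) / 2) := by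
  rw [← intervalIntegral.integral_of_le hx]
  have hderiv : ∀ t ∈ Set.uIcc (0:ℝ) x, HasDerivAt (fun t : ℝ => -Real.exp (-(t ^ 2) / 2))
      (t * Real.exp (-(t ^ 2) / 2)) t := by
    intro t _
    have h1 : HasDerivAt (fun t : ℝ => -(t ^ 2) / 2) (-t) t := by
      have := ((hasDerivAt_pow 2 t).neg).div_const 2
      simpa using this.congr_deriv (by ring)
    exact (h1.exp).neg.congr_deriv (by ring)
  have hint : IntervalIntegrable (fun t : ℝ => t * Real.exp (-(t ^ 2) / 2)) volume 0 x := by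
    apply Continuous.intervalIntegrable
    fun_prop
  rw [intervalIntegral.integral_eq_sub_of_hasDerivAt hderiv hint]
  simp only [neg_zero, ne_eq, OfNat.ofNat_ne_zero, not_false_eq_true, zero_pow, zero_div,
    Real.exp_zero]
  ring

lemma twoPiPos : (0:ℝ) < 2 * π := by positivity

lemma phiD_mul_phiD (s t : ℝ) :
    phiD s * phiD t = (2 * π)⁻¹ * Real.exp (-(s ^ 2 + t ^ 2) / 2) := by
  unfold phiD
  rw [show (Real.sqrt (2*π))⁻¹ * Real.exp (-(s^2)/2) * ((Real.sqrt (2*π))⁻¹ * Real.exp (-(t^2)/2))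
    = ((Real.sqrt (2*π)) * (Real.sqrt (2*π)))⁻¹ * (Real.exp (-(s^2)/2) * Real.exp (-(t^2)/2)) by ring,
    Real.mul_self_sqrt twoPiPos.le, ← Real.exp_add]
  congr 1
  ring

lemma disk_le_square {x : ℝ} (hx : 0 ≤ x) :
    1 - Real.exp (-(x ^ 2) / 2) ≤ (∫ t in Icc (-x) x, phiD t) ^ 2 := by
  set D : Set (ℝ × ℝ) := {p | p.1 ^ 2 + p.2 ^ 2 ≤ x ^ 2} with hD
  have hDmeas : MeasurableSet D := by
    apply measurableSet_le (by fun_prop) (by fun_prop)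
  have hint : Integrable (fun p : ℝ × ℝ => phiD p.1 * phiD p.2) (volume.prod volume) :=
    integrable_phiD.mul_prod integrable_phiD
  -- the square equals the 2D integral over the square region
  have hA : (∫ t in Icc (-x) x, phiD t) ^ 2
      = ∫ p in (Icc (-x) x) ×ˢ (Icc (-x) x), phiD p.1 * phiD p.2 ∂(volume.prod volume) := by
    rw [setIntegral_prod_mul, sq]
  -- the disk integral computes via polar coordinates
  have hC : (∫ p in D, phiD p.1 * phiD p.2) = 1 - Real.exp (-(x ^ 2) / 2) := by
    rw [← integral_indicator hDmeas, ← integral_comp_polarCoord_symm]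
    set F : ℝ → ℝ := fun r : ℝ =>
      (Ioc 0 x).indicator (fun r : ℝ => (2 * π)⁻¹ * (r * Real.exp (-(r ^ 2) / 2))) r with hF
    set G : ℝ → ℝ := fun _ : ℝ => (1:ℝ) with hG
    have heq : EqOn (fun p : ℝ × ℝ => p.1 • D.indicator (fun p : ℝ × ℝ => phiD p.1 * phiD p.2)
        (polarCoord.symm p))
        (fun p : ℝ × ℝ => F p.1 * G p.2) polarCoord.target := by
      rintro ⟨r, θ⟩ hp
      rw [polarCoord_target] at hp
      obtain ⟨hr, hθ⟩ := hp
      simp only [mem_Ioi] at hr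
      have hsymm : polarCoord.symm (r, θ) = (r * Real.cos θ, r * Real.sin θ) := rfl
      have hval : phiD (r * Real.cos θ) * phiD (r * Real.sin θ)
          = (2 * π)⁻¹ * Real.exp (-(r ^ 2) / 2) := by
        rw [phiD_mul_phiD]
        congr 2
        have := Real.sin_sq_add_cos_sq θ
        nlinarith [Real.sin_sq_add_cos_sq θ]
      simp only [smul_eq_mul]
      have hmem : (polarCoord.symm (r, θ) ∈ D) ↔ r ∈ Ioc 0 x := by
        rw [hsymm, hD]
        simp only [mem_setOf_eq, mem_Ioc]
        constructor
        · intro h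
          refine ⟨hr, ?_⟩
          nlinarith [Real.sin_sq_add_cos_sq θ]
        · intro ⟨_, h⟩
          nlinarith [Real.sin_sq_add_cos_sq θ]
      simp only [hF, hG]
      by_cases hmem2 : r ∈ Ioc 0 x
      · rw [indicator_of_mem (hmem.mpr hmem2), indicator_of_mem hmem2]
        simp only [hsymm]
        rw [hval]; simp; ring
      · rw [indicator_of_notMem (fun h => hmem2 (hmem.mp h)), indicator_of_notMem hmem2]
        simp
    have hpm := setIntegral_prod_mul (μ := (volume : Measure ℝ)) (ν := (volume : Measure ℝ))
      F G (Ioi 0) (Ioo (-π) π)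
    rw [setIntegral_congr_fun polarCoord.open_target.measurableSet heq, polarCoord_target,
      Measure.volume_eq_prod, hpm]
    have h1 : (∫ r in Ioi (0:ℝ), F r)
        = (2 * π)⁻¹ * (1 - Real.exp (-(x ^ 2) / 2)) := by
      rw [hF]
      rw [setIntegral_indicator measurableSet_Ioc]
      rw [show Ioi (0:ℝ) ∩ Ioc 0 x = Ioc 0 x by
        ext t; simp only [mem_inter_iff, mem_Ioi, mem_Ioc]; tauto]
      rw [integral_const_mul, integral_texp_Ioc hx]
    have h2 : (∫ θ in Ioo (-π) π, G θ) = 2 * π := by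
      rw [hG]
      simp [Real.pi_pos.le]
      ring
    rw [h1, h2]
    field_simp
  -- monotonicity
  have hB : (∫ p in D, phiD p.1 * phiD p.2)
      ≤ ∫ p in (Icc (-x) x) ×ˢ (Icc (-x) x), phiD p.1 * phiD p.2 ∂(volume.prod volume) := by
    have hsub : D ⊆ (Icc (-x) x) ×ˢ (Icc (-x) x) := by
      rintro ⟨s, t⟩ h
      simp only [hD, mem_setOf_eq] at h
      constructor <;> constructor <;> nlinarith
    have : (∫ p in D, phiD p.1 * phiD p.2)
        = ∫ p in D, phiD p.1 * phiD p.2 ∂(volume.prod volume) := by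
      rw [← Measure.volume_eq_prod]
    rw [this]
    refine setIntegral_mono_set hint.integrableOn ?_ (HasSubset.Subset.eventuallyLE hsub)
    filter_upwards with p
    exact mul_nonneg (phiD_nonneg _) (phiD_nonneg _)
  rw [hA, ← hC]
  exact hB


lemma phiD_even (x : ℝ) : phiD (-x) = phiD x := by unfold phiD; rw [neg_pow]; ring_nf

lemma PhiD_cont : Continuous PhiD :=
  continuous_iff_continuousAt.2 fun x => (hasDerivAt_PhiD x).continuousAt

lemma PhiD_sub {a b : ℝ} (hab : a ≤ b) :
    PhiD b - PhiD a = ∫ t in Icc a b, phiD t := by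
  rw [MeasureTheory.integral_Icc_eq_integral_Ioc, ← intervalIntegral.integral_of_le hab]
  exact intervalIntegral.integral_Iic_sub_Iic integrable_phiD.integrableOn
    integrable_phiD.integrableOn

lemma keyPhi (x : ℝ) : PhiD x * PhiD (-x) ≤ Real.exp (-(x ^ 2) / 2) / 4 := by
  rcases le_total 0 x with hx | hx
  · have h1 := disk_le_square hx
    have h2 : PhiD x - PhiD (-x) = ∫ t in Icc (-x) x, phiD t :=
      PhiD_sub (by linarith)
    have h3 := PhiD_add x
    have h4 : (PhiD x - PhiD (-x)) ^ 2 = 1 - 4 * (PhiD x * PhiD (-x)) := by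
      linear_combination (PhiD x + PhiD (-x) + 1) * h3
    rw [h2] at h4
    linarith
  · have hx' : 0 ≤ -x := by linarith
    have h1 := disk_le_square hx'
    have h2 : PhiD (-x) - PhiD (-(-x)) = ∫ t in Icc (-(-x)) (-x), phiD t :=
      PhiD_sub (by linarith)
    have h3 := PhiD_add x
    rw [neg_neg] at h2
    rw [show -(-x) ^ 2 = -x ^ 2 by ring, neg_neg] at h1
    have h4 : (PhiD (-x) - PhiD x) ^ 2 = 1 - 4 * (PhiD x * PhiD (-x)) := by
      linear_combination (PhiD x + PhiD (-x) + 1) * h3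
    rw [h2] at h4
    linarith

noncomputable def ED (x : ℝ) : ℝ := Real.sqrt (2 * π) * Real.exp (x ^ 2 / 2)

lemma ED_pos (x : ℝ) : 0 < ED x := by unfold ED; positivity

lemma ED_even (x : ℝ) : ED (-x) = ED x := by unfold ED; rw [neg_pow]; ring_nf

lemma ED_mul_phiD (x : ℝ) : ED x * phiD x = 1 := by
  unfold ED phiD
  rw [show Real.sqrt (2*π) * Real.exp (x^2/2) * ((Real.sqrt (2*π))⁻¹ * Real.exp (-(x^2)/2))
    = (Real.sqrt (2*π) * (Real.sqrt (2*π))⁻¹) * (Real.exp (x^2/2) * Real.exp (-(x^2)/2)) by ring,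
    ← Real.exp_add]
  have h : Real.sqrt (2*π) ≠ 0 := by positivity
  rw [mul_inv_cancel₀ h, show x ^ 2 / 2 + -(x ^ 2) / 2 = 0 by ring, Real.exp_zero]
  ring

lemma millsE {y : ℝ} (hy : 0 ≤ y) : y * ED y * PhiD (-y) ≤ 1 := by
  have h1 := mills y
  have h2 := ED_pos y
  have h3 := ED_mul_phiD y
  nlinarith

lemma keyE (x : ℝ) : ED x * (PhiD x * PhiD (-x)) ≤ Real.sqrt (2 * π) / 4 := by
  have h1 := keyPhi x
  have h2 : ED x * (Real.exp (-(x^2)/2) / 4) = Real.sqrt (2 * π) / 4 := by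
    unfold ED
    rw [show Real.sqrt (2*π) * Real.exp (x^2/2) * (Real.exp (-(x^2)/2)/4)
      = Real.sqrt (2*π) * (Real.exp (x^2/2) * Real.exp (-(x^2)/2)) / 4 by ring, ← Real.exp_add,
      show x ^ 2 / 2 + -(x ^ 2) / 2 = 0 by ring, Real.exp_zero]
    ring
  calc ED x * (PhiD x * PhiD (-x)) ≤ ED x * (Real.exp (-(x^2)/2) / 4) := by
        exact mul_le_mul_of_nonneg_left h1 (ED_pos x).le
    _ = Real.sqrt (2 * π) / 4 := h2

/-- For every `z ∈ ℝ`, the Stein equation `f'(x) − x f(x) = 1_{(−∞,z]}(x) − P(Z ≤ z)` admits a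
solution `f` which is bounded by `√(2π)/4`, piecewise continuously differentiable, and such
that `‖f'‖_∞ ≤ 1`. -/
theorem stein_equation_indicator_solution (z : ℝ) :
    ∃ f f' : ℝ → ℝ, PiecewiseC1 f f' ∧
      (∀ x, |f x| ≤ Real.sqrt (2 * π) / 4) ∧
      (∀ x, |f' x| ≤ 1) ∧
      (∀ x, f' x - x * f x =
        Set.indicator (Set.Iic z) (fun _ => (1 : ℝ)) x
          - ((gaussianReal 0 1) (Set.Iic z)).toReal) := by
  classical
  set c : ℝ := ((gaussianReal 0 1) (Set.Iic z)).toReal with hc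
  have hcPhi : c = PhiD z := by
    rw [hc, gaussianReal_apply_eq_integral 0 one_ne_zero (Set.Iic z),
      ENNReal.toReal_ofReal (setIntegral_nonneg measurableSet_Iic
        (fun t _ => gaussianPDFReal_nonneg 0 1 t))]
    unfold PhiD
    congr 1
    ext t
    unfold gaussianPDFReal phiD
    norm_num
  set f : ℝ → ℝ := fun x => ED x * (PhiD (min x z) * PhiD (-(max x z))) with hf
  set f' : ℝ → ℝ := fun x =>
    x * f x + Set.indicator (Set.Iic z) (fun _ => (1 : ℝ)) x - c with hf'
  have hfc : Continuous f := by
    rw [hf]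
    have hmin : Continuous fun x : ℝ => min x z := continuous_id.min continuous_const
    have hmax : Continuous fun x : ℝ => max x z := continuous_id.max continuous_const
    have hexp : Continuous fun x : ℝ => Real.sqrt (2 * π) * Real.exp (x ^ 2 / 2) := by fun_prop
    have h1 : Continuous fun x : ℝ => PhiD (min x z) := PhiD_cont.comp hmin
    have h2 : Continuous fun x : ℝ => PhiD (-(max x z)) := PhiD_cont.comp hmax.neg
    unfold ED
    exact hexp.mul (h1.mul h2)
  have hf_nonneg : ∀ x, 0 ≤ f x := fun x =>
    mul_nonneg (ED_pos x).le (mul_nonneg (PhiD_nonneg _) (PhiD_nonneg _))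
  -- branch formulas
  have hfle : ∀ x, x ≤ z → f x = ED x * (PhiD x * PhiD (-z)) := by
    intro x hx; rw [hf]; simp only [min_eq_left hx, max_eq_right hx]
  have hfge : ∀ x, z ≤ x → f x = ED x * (PhiD z * PhiD (-x)) := by
    intro x hx; rw [hf]; simp only [min_eq_right hx, max_eq_left hx]
  refine ⟨f, f', ⟨?_, ?_⟩, ?_, ?_, ?_⟩
  · -- continuity of f
    exact hfc
  · -- derivative outside {z}
    refine ⟨{z}, fun x hx => ?_, ?_⟩
    · simp only [Finset.mem_singleton] at hx
      rcases lt_or_gt_of_ne hx with hlt | hgt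
      · -- x < z
        have hg : HasDerivAt (fun y => ED y * (PhiD y * PhiD (-z)))
            (x * f x + (1 - c)) x := by
          have hE : HasDerivAt (fun y : ℝ => Real.exp (y ^ 2 / 2))
              (x * Real.exp (x ^ 2 / 2)) x := by
            have h1 : HasDerivAt (fun y : ℝ => y ^ 2 / 2) x x := by
              have := (hasDerivAt_pow 2 x).div_const 2
              simpa using this.congr_deriv (by ring)
            simpa using h1.exp.congr_deriv (by ring)
          have := ((hE.const_mul (Real.sqrt (2 * π))).mul
            ((hasDerivAt_PhiD x).mul_const (PhiD (-z))))
          refine (this.congr_deriv ?_)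
          have h2 : Real.sqrt (2 * π) * Real.exp (x ^ 2 / 2) * (phiD x * PhiD (-z))
              = PhiD (-z) := by
            have h := ED_mul_phiD x
            unfold ED at h
            linear_combination PhiD (-z) * h
          have h3 : f x = ED x * (PhiD x * PhiD (-z)) := hfle x hlt.le
          have h4 : 1 - c = PhiD (-z) := by rw [hcPhi]; have := PhiD_add z; linarith
          rw [h4]
          unfold ED at h3
          rw [h3]
          linear_combination h2
        have hev : f =ᶠ[nhds x] fun y => ED y * (PhiD y * PhiD (-z)) := by
          filter_upwards [isOpen_Iio.mem_nhds (show x ∈ Iio z from hlt)] with y hy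
          exact hfle y (le_of_lt hy)
        have hind : f' x = x * f x + (1 - c) := by
          rw [hf']
          simp [Set.indicator_of_mem (show x ∈ Set.Iic z from hlt.le)]
          ring
        rw [hind]
        exact (hg.congr_of_eventuallyEq hev)
      · -- x > z
        have hg : HasDerivAt (fun y => ED y * (PhiD z * PhiD (-y)))
            (x * f x + (0 - c)) x := by
          have hE : HasDerivAt (fun y : ℝ => Real.exp (y ^ 2 / 2))
              (x * Real.exp (x ^ 2 / 2)) x := by
            have h1 : HasDerivAt (fun y : ℝ => y ^ 2 / 2) x x := by
              have := (hasDerivAt_pow 2 x).div_const 2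
              simpa using this.congr_deriv (by ring)
            simpa using h1.exp.congr_deriv (by ring)
          have hPn : HasDerivAt (fun y : ℝ => PhiD (-y)) (-phiD x) x := by
            have := (hasDerivAt_PhiD (-x)).comp x (hasDerivAt_neg x)
            simpa [phiD_even, Function.comp_def] using this
          have := ((hE.const_mul (Real.sqrt (2 * π))).mul (hPn.const_mul (PhiD z)))
          refine this.congr_deriv ?_
          have h2 : Real.sqrt (2 * π) * Real.exp (x ^ 2 / 2) * (PhiD z * phiD x)
              = PhiD z := by
            have h := ED_mul_phiD x
            unfold ED at h
            linear_combination PhiD z * h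
          have h3 : f x = ED x * (PhiD z * PhiD (-x)) := hfge x hgt.le
          rw [hcPhi]
          unfold ED at h3
          rw [h3]
          linear_combination -h2
        have hev : f =ᶠ[nhds x] fun y => ED y * (PhiD z * PhiD (-y)) := by
          filter_upwards [isOpen_Ioi.mem_nhds (show x ∈ Ioi z from hgt)] with y hy
          exact hfge y (le_of_lt hy)
        have hind : f' x = x * f x + (0 - c) := by
          rw [hf']
          simp [Set.indicator_of_notMem (show x ∉ Set.Iic z from not_le.2 hgt)]
          ring
        rw [hind]
        exact hg.congr_of_eventuallyEq hev
    · -- continuity of f'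
      intro x hx
      simp only [Finset.coe_singleton, mem_compl_iff, mem_singleton_iff] at hx
      apply ContinuousAt.continuousWithinAt
      have hbase : ContinuousAt (fun y => y * f y - c) x :=
        ((continuous_id.mul hfc).sub continuous_const).continuousAt
      rcases lt_or_gt_of_ne hx with hlt | hgt
      · have : ContinuousAt (fun y => y * f y + 1 - c) x := by
          exact ((continuous_id.mul hfc).add continuous_const).sub continuous_const
            |>.continuousAt
        refine this.congr ?_
        filter_upwards [isOpen_Iio.mem_nhds (show x ∈ Iio z from hlt)] with y hy
        rw [hf']
        simp [Set.indicator_of_mem (Set.mem_Iic.mpr (le_of_lt (Set.mem_Iio.mp hy)))]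
      · have : ContinuousAt (fun y => y * f y + 0 - c) x := by
          exact ((continuous_id.mul hfc).add continuous_const).sub continuous_const
            |>.continuousAt
        refine this.congr ?_
        filter_upwards [isOpen_Ioi.mem_nhds (show x ∈ Ioi z from hgt)] with y hy
        rw [hf']
        simp [Set.indicator_of_notMem (show y ∉ Set.Iic z from not_le.2 (Set.mem_Ioi.mp hy))]
  · -- bound on f
    intro x
    rw [abs_of_nonneg (hf_nonneg x)]
    rcases le_total x z with hxz | hzx
    · rw [hfle x hxz]
      have h1 : PhiD (-z) ≤ PhiD (-x) := PhiD_mono (by linarith)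
      calc ED x * (PhiD x * PhiD (-z)) ≤ ED x * (PhiD x * PhiD (-x)) :=
            mul_le_mul_of_nonneg_left
              (mul_le_mul_of_nonneg_left h1 (PhiD_nonneg x)) (ED_pos x).le
        _ ≤ Real.sqrt (2 * π) / 4 := keyE x
    · rw [hfge x hzx]
      have h1 : PhiD z ≤ PhiD x := PhiD_mono hzx
      calc ED x * (PhiD z * PhiD (-x)) ≤ ED x * (PhiD x * PhiD (-x)) :=
            mul_le_mul_of_nonneg_left
              (mul_le_mul_of_nonneg_right h1 (PhiD_nonneg (-x))) (ED_pos x).le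
        _ ≤ Real.sqrt (2 * π) / 4 := keyE x
  · -- bound on f'
    intro x
    rw [abs_le]
    rcases le_or_gt x z with hxz | hlt
    · have hfx : f x = ED x * (PhiD x * PhiD (-z)) := hfle x hxz
      have hval : f' x = PhiD (-z) * (1 + x * ED x * PhiD x) := by
        have h := PhiD_add z
        simp only [hf', Set.indicator_of_mem (Set.mem_Iic.mpr hxz)]
        rw [hfx, hcPhi]
        linear_combination -h
      have hA1 : -1 ≤ x * ED x * PhiD x := by
        rcases le_total 0 x with h0 | h0
        · have := mul_nonneg (mul_nonneg h0 (ED_pos x).le) (PhiD_nonneg x)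
          linarith
        · have := millsE (y := -x) (by linarith)
          rw [ED_even, neg_neg] at this
          nlinarith
      have hPz1 : PhiD (-z) ≤ 1 := PhiD_le_one _
      have hPz0 : 0 ≤ PhiD (-z) := PhiD_nonneg _
      constructor
      · rw [hval]; nlinarith
      · rw [hval]
        rcases le_total 0 x with h0 | h0
        · have h1 : PhiD (-z) ≤ PhiD (-x) := PhiD_mono (by linarith)
          have h2 := millsE (y := x) h0
          have h3 := PhiD_add x
          have hA0 : 0 ≤ x * ED x * PhiD x :=
            mul_nonneg (mul_nonneg h0 (ED_pos x).le) (PhiD_nonneg x)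
          nlinarith [PhiD_nonneg x, PhiD_nonneg (-x)]
        · have hA2 : x * ED x * PhiD x ≤ 0 := by
            nlinarith [mul_nonneg (mul_nonneg (neg_nonneg.2 h0) (ED_pos x).le) (PhiD_nonneg x)]
          nlinarith
    · have hfx : f x = ED x * (PhiD z * PhiD (-x)) := hfge x hlt.le
      have hB0 : 0 ≤ PhiD z := PhiD_nonneg _
      have hB1 : PhiD z ≤ 1 := PhiD_le_one _
      have hind : Set.indicator (Set.Iic z) (fun _ => (1:ℝ)) x = 0 :=
        Set.indicator_of_notMem (by simpa using not_le.2 hlt) _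
      have hval : f' x = PhiD z * (x * ED x * PhiD (-x) - 1) := by
        simp only [hf', hind]
        rw [hfx, hcPhi]
        ring
      rcases le_total 0 x with h0 | h0
      · have h2 := millsE (y := x) h0
        have hB : 0 ≤ x * ED x * PhiD (-x) := by
          exact mul_nonneg (mul_nonneg h0 (ED_pos x).le) (PhiD_nonneg (-x))
        constructor
        · rw [hval]; nlinarith
        · rw [hval]; nlinarith
      · have h2 := millsE (y := -x) (by linarith)
        rw [ED_even, neg_neg] at h2
        have h3 : PhiD z ≤ PhiD x := PhiD_mono hlt.le
        have h4 := PhiD_add x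
        have hBneg : x * ED x * PhiD (-x) ≤ 0 := by
          nlinarith [mul_nonneg (mul_nonneg (neg_nonneg.2 h0) (ED_pos x).le) (PhiD_nonneg (-x))]
        constructor
        · rw [hval]
          nlinarith [PhiD_nonneg x, PhiD_nonneg (-x)]
        · rw [hval]; nlinarith
  · -- the Stein equation
    intro x
    rw [hf']
    ring
end

section
/- If h : ℝ → ℝ is Borel measurable and bounded by 1/2, then the Stein equation f'(x) − x f(x) = h(x) − E[h(Z)], x ∈ ℝ, admits a solution f which is bounded by √(π/2), Lebesgue-a.e. differentiable, and such that ‖f'‖_∞ ≤ 2. -/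
open MeasureTheory ProbabilityTheory Real Set Metric Filter
open scoped ENNReal NNReal

lemma ftc_ae (φ : ℝ → ℝ) (hφ : Integrable φ) :
    ∀ᵐ x ∂(volume : Measure ℝ), HasDerivAt (fun y => ∫ t in Iic y, φ t) (φ x) x := by
  filter_upwards [IsUnifLocDoublingMeasure.ae_tendsto_average_norm_sub
    (μ := (volume : Measure ℝ)) hφ.locallyIntegrable 1] with x hx
  have key : Tendsto (fun y : ℝ => ⨍ t in closedBall x |y - x|, ‖φ t - φ x‖)
      (nhdsWithin x {x}ᶜ) (nhds 0) := by
    apply hx (fun _ => x) (fun y => |y - x|)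
    · apply tendsto_nhdsWithin_of_tendsto_nhds_of_eventually_within
      · have hcont : Continuous (fun y : ℝ => |y - x|) := by continuity
        have := hcont.tendsto x
        simp only [sub_self, abs_zero] at this
        exact this.mono_left nhdsWithin_le_nhds
      · filter_upwards [self_mem_nhdsWithin] with y hy
        exact abs_pos.2 (sub_ne_zero.2 hy)
    · filter_upwards with y
      simp [abs_nonneg]
  rw [hasDerivAt_iff_isLittleO, Asymptotics.isLittleO_iff]
  intro c hc
  rw [← nhdsNE_sup_pure, Filter.eventually_sup]
  constructor
  · filter_upwards [key.eventually_le_const (by linarith : (0:ℝ) < c/2),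
      self_mem_nhdsWithin] with y hy hyx
    have hr : 0 < |y - x| := abs_pos.2 (sub_ne_zero.2 hyx)
    have hIic : ∀ z : ℝ, IntegrableOn φ (Iic z) := fun z => hφ.integrableOn
    have hsub : (∫ t in Iic y, φ t) - ∫ t in Iic x, φ t = ∫ t in x..y, φ t := by
      rw [← intervalIntegral.integral_Iic_sub_Iic (hIic x) (hIic y)]
    have hconst : (y - x) • φ x = ∫ t in x..y, φ x := by
      simp [intervalIntegral.integral_const, smul_eq_mul]
    have hdiff : (∫ t in Iic y, φ t) - (∫ t in Iic x, φ t) - (y - x) • φ x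
        = ∫ t in x..y, (φ t - φ x) := by
      rw [hsub, hconst, ← intervalIntegral.integral_sub hφ.intervalIntegrable
        intervalIntegrable_const]
    have hball : IntegrableOn (fun t => ‖φ t - φ x‖) (closedBall x |y - x|) :=
      ((hφ.integrableOn.sub (integrableOn_const measure_closedBall_lt_top.ne)).norm)
    calc ‖(∫ t in Iic y, φ t) - (∫ t in Iic x, φ t) - (y - x) • φ x‖
        = ‖∫ t in x..y, (φ t - φ x)‖ := by rw [hdiff]
      _ ≤ ∫ t in uIoc x y, ‖φ t - φ x‖ := intervalIntegral.norm_integral_le_integral_norm_uIoc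
      _ ≤ ∫ t in closedBall x |y - x|, ‖φ t - φ x‖ := by
          apply setIntegral_mono_set hball
          · filter_upwards with t using norm_nonneg _
          · apply HasSubset.Subset.eventuallyLE
            intro t ht
            rw [mem_closedBall, Real.dist_eq]
            rcases le_total x y with hxy | hxy
            · rw [uIoc_of_le hxy] at ht
              rw [abs_of_nonneg (sub_nonneg.2 hxy), abs_le]
              exact ⟨by linarith [ht.1, ht.2], by linarith [ht.1, ht.2]⟩
            · rw [uIoc_of_ge hxy] at ht
              rw [abs_of_nonpos (sub_nonpos.2 hxy), abs_le]
              exact ⟨by linarith [ht.1, ht.2], by linarith [ht.1, ht.2]⟩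
      _ = (volume (closedBall x |y - x|)).toReal • ⨍ t in closedBall x |y - x|, ‖φ t - φ x‖ := by
          rw [setAverage_eq, ← measureReal_def, smul_inv_smul₀]
          simp only [measureReal_def, Real.volume_closedBall, ne_eq, ENNReal.toReal_eq_zero_iff]
          push_neg
          exact ⟨by positivity, ENNReal.ofReal_ne_top⟩
      _ ≤ (2 * |y - x|) * (c / 2) := by
          rw [Real.volume_closedBall, ENNReal.toReal_ofReal (by positivity), smul_eq_mul]
          apply mul_le_mul_of_nonneg_left hy (by positivity)
      _ ≤ c * ‖y - x‖ := by rw [Real.norm_eq_abs]; ring_nf; rfl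
  · rw [Filter.eventually_pure]
    simp

lemma expint : Integrable (fun t : ℝ => Real.exp (-t^2/2)) := by
  have := integrable_exp_neg_mul_sq (b := (1/2:ℝ)) (by norm_num)
  convert this using 2 with t
  ring_nf

lemma gint : ∫ s in Ioi (0:ℝ), Real.exp (-s^2/2) = Real.sqrt (π/2) := by
  have h := integral_gaussian_Ioi (1/2)
  have h2 : ∀ s : ℝ, -s^2/2 = -(1/2) * s^2 := by intro s; ring
  simp_rw [h2]
  rw [h, show π / (1/2:ℝ) = 2 * π by ring,
    Real.sqrt_mul (by norm_num : (0:ℝ) ≤ 2),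
    Real.sqrt_div (by positivity : (0:ℝ) ≤ π)]
  have h3 : Real.sqrt 2 * Real.sqrt 2 = 2 := Real.mul_self_sqrt (by norm_num)
  rw [div_eq_div_iff (by norm_num) (by positivity)]
  nlinarith [Real.sqrt_nonneg π]

lemma gtotal : ∫ s : ℝ, Real.exp (-s^2/2) = Real.sqrt (2*π) := by
  have h := integral_gaussian (1/2)
  have h2 : ∀ s : ℝ, -s^2/2 = -(1/2) * s^2 := by intro s; ring
  simp_rw [h2]
  rw [h, show π / (1/2:ℝ) = 2 * π by ring]

lemma shift_Ioi (f : ℝ → ℝ) (x : ℝ) : ∫ t in Ioi x, f (t - x) = ∫ s in Ioi (0:ℝ), f s := by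
  rw [← integral_indicator measurableSet_Ioi, ← integral_indicator measurableSet_Ioi,
    ← integral_sub_right_eq_self (fun t => (Ioi (0:ℝ)).indicator f t) x]
  congr 1
  ext t
  by_cases h : x < t
  · simp [indicator, mem_Ioi, h, sub_pos.2 h]
  · simp [indicator, mem_Ioi, h, fun hh => h (sub_pos.1 hh)]

lemma tail_le (x : ℝ) (hx : 0 ≤ x) :
    ∫ t in Ioi x, Real.exp (-t^2/2) ≤ Real.sqrt (π/2) * Real.exp (-x^2/2) := by
  have hmono : ∀ t ∈ Ioi x, Real.exp (-t^2/2) ≤ Real.exp (-x^2/2) * Real.exp (-(t-x)^2/2) := by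
    intro t ht
    rw [← Real.exp_add, Real.exp_le_exp]
    have hxt : x ≤ t := le_of_lt ht
    nlinarith [sq_nonneg (t - x)]
  have hint2 : IntegrableOn (fun t => Real.exp (-x^2/2) * Real.exp (-(t-x)^2/2)) (Ioi x) := by
    apply Integrable.integrableOn
    apply Integrable.const_mul
    exact expint.comp_sub_right x
  calc ∫ t in Ioi x, Real.exp (-t^2/2)
      ≤ ∫ t in Ioi x, Real.exp (-x^2/2) * Real.exp (-(t-x)^2/2) := by
        apply setIntegral_mono_on expint.integrableOn hint2 measurableSet_Ioi hmono
    _ = Real.exp (-x^2/2) * ∫ t in Ioi x, Real.exp (-(t-x)^2/2) := by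
        rw [integral_const_mul]
    _ = Real.exp (-x^2/2) * Real.sqrt (π/2) := by
        rw [shift_Ioi (fun s => Real.exp (-s^2/2)) x, gint]
    _ = Real.sqrt (π/2) * Real.exp (-x^2/2) := mul_comm _ _

lemma mul_tail_le (x : ℝ) (hx : 0 ≤ x) :
    x * ∫ t in Ioi x, Real.exp (-t^2/2) ≤ Real.exp (-x^2/2) := by
  rcases eq_or_lt_of_le hx with rfl | hx'
  · simpa using Real.exp_pos (-(0:ℝ)^2/2) |>.le
  have hmono : ∀ t ∈ Ioi x, Real.exp (-t^2/2) ≤ Real.exp (-x^2/2) * Real.exp (-(x*(t-x))) := by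
    intro t ht
    rw [← Real.exp_add, Real.exp_le_exp]
    have hxt : x ≤ t := le_of_lt ht
    nlinarith [sq_nonneg (t - x)]
  have hint2 : IntegrableOn (fun t => Real.exp (-x^2/2) * Real.exp (-(x*(t-x)))) (Ioi x) := by
    apply Integrable.const_mul
    refine IntegrableOn.congr_fun
      ((exp_neg_integrableOn_Ioi x hx').const_mul (Real.exp (x^2))) ?_ measurableSet_Ioi
    intro t ht
    simp only [← Real.exp_add]
    ring_nf
  have h1 : ∫ t in Ioi x, Real.exp (-t^2/2)
      ≤ Real.exp (-x^2/2) * ∫ t in Ioi x, Real.exp (-(x*(t-x))) := by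
    rw [← integral_const_mul]
    exact setIntegral_mono_on expint.integrableOn hint2 measurableSet_Ioi hmono
  have h2 : ∫ t in Ioi x, Real.exp (-(x*(t-x))) = x⁻¹ := by
    rw [shift_Ioi (fun s => Real.exp (-(x*s))) x]
    have := integral_comp_mul_left_Ioi (fun u => Real.exp (-u)) 0 hx'
    simp only [mul_zero] at this
    rw [this, integral_exp_neg_Ioi_zero, smul_eq_mul, mul_one]
  calc x * ∫ t in Ioi x, Real.exp (-t^2/2)
      ≤ x * (Real.exp (-x^2/2) * x⁻¹) := by
        rw [← h2]
        exact mul_le_mul_of_nonneg_left h1 hx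
    _ = Real.exp (-x^2/2) := by field_simp

lemma gauss_integral_eq (h : ℝ → ℝ) :
    ∫ y, h y ∂(gaussianReal 0 1) = (Real.sqrt (2*π))⁻¹ * ∫ x, Real.exp (-x^2/2) * h x := by
  rw [gaussianReal_of_var_ne_zero 0 one_ne_zero]
  have hpdf : (gaussianPDF 0 1) = fun x => ((gaussianPDFReal 0 1 x).toNNReal : ℝ≥0∞) := by
    ext x; rfl
  rw [hpdf, integral_withDensity_eq_integral_smul
    ((measurable_gaussianPDFReal 0 1).real_toNNReal) h]
  rw [← integral_const_mul]
  congr 1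
  ext x
  rw [NNReal.smul_def, smul_eq_mul, Real.coe_toNNReal _ (gaussianPDFReal_nonneg 0 1 x)]
  simp only [gaussianPDFReal, NNReal.coe_one, mul_one, sub_zero]
  ring_nf

/-- If `h` is Borel measurable and bounded by `1/2`, the Stein equation
`f'(x) − x f(x) = h(x) − E[h(Z)]` admits a solution `f` bounded by `√(π/2)`,
Lebesgue-a.e. differentiable, with `‖f'‖_∞ ≤ 2`. -/
theorem stein_equation_bounded_solution (h : ℝ → ℝ) (hmeas : Measurable h)
    (hbound : ∀ x, |h x| ≤ 1 / 2) :
    ∃ f f' : ℝ → ℝ,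
      (∀ x, |f x| ≤ Real.sqrt (π / 2)) ∧
      (∀ᵐ x ∂(volume : Measure ℝ), HasDerivAt f (f' x) x) ∧
      (∀ x, |f' x| ≤ 2) ∧
      (∀ x, f' x - x * f x = h x - ∫ y, h y ∂(gaussianReal 0 1)) := by
  set μ0 : ℝ := ∫ y, h y ∂(gaussianReal 0 1) with hμ0def
  set g : ℝ → ℝ := fun t => h t - μ0 with hgdef
  set φ : ℝ → ℝ := fun t => Real.exp (-t^2/2) * g t with hφdef
  set F : ℝ → ℝ := fun x => ∫ t in Iic x, φ t with hFdef
  set f : ℝ → ℝ := fun x => Real.exp (x^2/2) * F x with hfdef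
  refine ⟨f, fun x => x * f x + g x, ?_, ?_, ?_, ?_⟩
  -- preliminary facts
  all_goals {
  have hμ0 : |μ0| ≤ 1/2 := by
    rw [hμ0def, ← Real.norm_eq_abs]
    calc ‖∫ y, h y ∂(gaussianReal 0 1)‖
        ≤ 1/2 * ((gaussianReal 0 1) univ).toReal :=
          norm_integral_le_of_norm_le_const (ae_of_all _ fun x => by
            rw [Real.norm_eq_abs]; exact hbound x)
      _ = 1/2 := by simp
  have hg1 : ∀ t, |g t| ≤ 1 := by
    intro t
    calc |g t| ≤ |h t| + |μ0| := abs_sub _ _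
      _ ≤ 1/2 + 1/2 := add_le_add (hbound t) hμ0
      _ = 1 := by norm_num
  have hφb : ∀ t, |φ t| ≤ Real.exp (-t^2/2) := by
    intro t
    rw [hφdef, abs_mul, abs_of_pos (Real.exp_pos _)]
    calc Real.exp (-t^2/2) * |g t| ≤ Real.exp (-t^2/2) * 1 :=
          mul_le_mul_of_nonneg_left (hg1 t) (Real.exp_pos _).le
      _ = Real.exp (-t^2/2) := mul_one _
  have hφmeas : Measurable φ := by
    apply Measurable.mul
    · exact (Real.measurable_exp.comp ((measurable_id.pow_const 2).neg.div_const 2))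
    · exact hmeas.sub measurable_const
  have hφint : Integrable φ :=
    Integrable.mono' expint hφmeas.aestronglyMeasurable
      (ae_of_all _ fun t => by rw [Real.norm_eq_abs]; exact hφb t)
  -- total integral is zero
  have hexph : Integrable (fun t : ℝ => Real.exp (-t^2/2) * h t) := by
    apply Integrable.mono' expint
    · exact ((Real.measurable_exp.comp
        ((measurable_id.pow_const 2).neg.div_const 2)).mul hmeas).aestronglyMeasurable
    · refine ae_of_all _ fun t => ?_
      rw [Real.norm_eq_abs, abs_mul, abs_of_pos (Real.exp_pos _)]
      calc Real.exp (-t^2/2) * |h t| ≤ Real.exp (-t^2/2) * 1 :=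
            mul_le_mul_of_nonneg_left (le_trans (hbound t) (by norm_num)) (Real.exp_pos _).le
        _ = Real.exp (-t^2/2) := mul_one _
  have hexphval : ∫ t : ℝ, Real.exp (-t^2/2) * h t = Real.sqrt (2*π) * μ0 := by
    rw [hμ0def, gauss_integral_eq h, ← mul_assoc, mul_inv_cancel₀ (by positivity), one_mul]
  have htotal : ∫ t : ℝ, φ t = 0 := by
    have heq : φ = fun t => Real.exp (-t^2/2) * h t - μ0 * Real.exp (-t^2/2) := by
      ext t; rw [hφdef, hgdef]; ring
    rw [heq, integral_sub hexph (expint.const_mul μ0), integral_const_mul, gtotal,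
      hexphval]
    ring
  -- bound on |F|
  have hFabs : ∀ x, |F x| ≤ ∫ t in Ioi |x|, Real.exp (-t^2/2) := by
    intro x
    have habsle : ∀ s : Set ℝ, |∫ t in s, φ t| ≤ ∫ t in s, Real.exp (-t^2/2) := by
      intro s
      calc |∫ t in s, φ t| ≤ ∫ t in s, |φ t| := by
            rw [← Real.norm_eq_abs]
            exact (norm_integral_le_integral_norm φ)
        _ ≤ ∫ t in s, Real.exp (-t^2/2) := by
            apply integral_mono_of_nonneg (ae_of_all _ fun t => abs_nonneg _)
              expint.integrableOn
            exact ae_of_all _ fun t => hφb t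
    rcases le_total 0 x with hx | hx
    · have hsplit := integral_add_compl (s := Iic x) measurableSet_Iic hφint (f := φ)
      rw [compl_Iic, htotal] at hsplit
      have hFx : F x = -∫ t in Ioi x, φ t := by rw [hFdef]; linarith [hsplit]
      rw [hFx, abs_neg, abs_of_nonneg hx]
      exact habsle (Ioi x)
    · have h1 : |F x| ≤ ∫ t in Iic x, Real.exp (-t^2/2) := habsle (Iic x)
      have h2 : ∫ t in Iic x, Real.exp (-t^2/2) = ∫ t in Ioi (-x), Real.exp (-t^2/2) := by
        have h3 := integral_comp_neg_Iic x (fun t : ℝ => Real.exp (-t^2/2))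
        simp only [neg_sq] at h3
        exact h3
      rw [abs_of_nonpos hx]
      rw [h2] at h1
      exact h1
  have hexpmul : ∀ x : ℝ, Real.exp (x^2/2) * Real.exp (-x^2/2) = 1 := by
    intro x
    rw [← Real.exp_add, show x^2/2 + -x^2/2 = 0 by ring, Real.exp_zero]
  have hfb : ∀ x, |f x| ≤ Real.sqrt (π/2) := by
    intro x
    rw [hfdef]
    simp only
    rw [abs_mul, abs_of_pos (Real.exp_pos _)]
    calc Real.exp (x^2/2) * |F x|
        ≤ Real.exp (x^2/2) * (Real.sqrt (π/2) * Real.exp (-x^2/2)) := by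
          apply mul_le_mul_of_nonneg_left _ (Real.exp_pos _).le
          refine le_trans (hFabs x) ?_
          have := tail_le |x| (abs_nonneg x)
          rwa [sq_abs] at this
      _ = Real.sqrt (π/2) * (Real.exp (x^2/2) * Real.exp (-x^2/2)) := by ring
      _ = Real.sqrt (π/2) := by rw [hexpmul, mul_one]
  have hxfb : ∀ x, |x * f x| ≤ 1 := by
    intro x
    rw [hfdef]
    simp only
    rw [show x * (Real.exp (x^2/2) * F x) = Real.exp (x^2/2) * (x * F x) by ring,
      abs_mul, abs_of_pos (Real.exp_pos _), abs_mul]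
    calc Real.exp (x^2/2) * (|x| * |F x|)
        ≤ Real.exp (x^2/2) * Real.exp (-x^2/2) := by
          apply mul_le_mul_of_nonneg_left _ (Real.exp_pos _).le
          have h1 : |x| * |F x| ≤ |x| * ∫ t in Ioi |x|, Real.exp (-t^2/2) :=
            mul_le_mul_of_nonneg_left (hFabs x) (abs_nonneg x)
          have h2 := mul_tail_le |x| (abs_nonneg x)
          rw [sq_abs] at h2
          linarith
      _ = 1 := hexpmul x
  first
  | -- goal 1 : |f x| ≤ √(π/2)
    exact fun x => by simpa using hfb x
  | -- goal 2 : a.e. derivative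
    (filter_upwards [ftc_ae φ hφint] with x hFd
     have h1 : HasDerivAt (fun y : ℝ => Real.exp (y^2/2)) (x * Real.exp (x^2/2)) x := by
       have h2 : HasDerivAt (fun y : ℝ => y^2/2) x x := by
         simpa using (hasDerivAt_pow 2 x).div_const 2
       simpa [mul_comm, Function.comp_def] using (Real.hasDerivAt_exp (x^2/2)).comp x h2
     have hprod := h1.mul hFd
     have : HasDerivAt f (x * Real.exp (x^2/2) * F x + Real.exp (x^2/2) * φ x) x := hprod
     convert this using 1
     simp only [hfdef, hφdef]
     linear_combination (-(g x)) * hexpmul x)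
  | -- goal 3 : |f' x| ≤ 2
    (intro x
     calc |x * f x + g x| ≤ |x * f x| + |g x| := abs_add_le _ _
       _ ≤ 1 + 1 := add_le_add (hxfb x) (hg1 x)
       _ = 2 := by norm_num)
  | -- goal 4 : the Stein equation
    (intro x
     rw [hgdef, hμ0def]
     ring)
  }
end

section
/- Let Y be an integrable real random variable and Z a standard Gaussian random variable. Then sup_{z∈ℝ} |P(Y ≤ z) − P(Z ≤ z)| ≤ sup_{f ∈ F_Kol} |E[f'(Y) − Y f(Y)]|, where F_Kol is the class of all piecewise continuously differentiable functions f : ℝ → ℝ that are bounded by √(2π)/4 and whose derivative is bounded by 1. -/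
open MeasureTheory ProbabilityTheory Real Set

open Filter

noncomputable def stdPhi (x : ℝ) : ℝ := ((gaussianReal 0 1) (Iic x)).toReal
noncomputable def stdpdf (x : ℝ) : ℝ := (Real.sqrt (2 * π))⁻¹ * Real.exp (-(x ^ 2) / 2)

lemma stdpdf_eq : stdpdf = gaussianPDFReal 0 1 := by
  funext x
  simp [stdpdf, gaussianPDFReal]

lemma stdpdf_pos (x : ℝ) : 0 < stdpdf x := by
  rw [stdpdf_eq]; exact gaussianPDFReal_pos _ _ _ one_ne_zero

lemma stdpdf_cont : Continuous stdpdf := by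
  unfold stdpdf; fun_prop

lemma stdpdf_integrable : Integrable stdpdf := by
  rw [stdpdf_eq]; exact integrable_gaussianPDFReal 0 1

lemma key_identity (x : ℝ) : Real.sqrt (2 * π) * Real.exp (x ^ 2 / 2) * stdpdf x = 1 := by
  have h1 : Real.sqrt (2 * π) ≠ 0 := by positivity
  rw [stdpdf]
  have h2 : rexp (x ^ 2 / 2) * rexp (-(x ^ 2) / 2) = 1 := by
    rw [← Real.exp_add]; ring_nf; exact Real.exp_zero
  calc √(2 * π) * rexp (x ^ 2 / 2) * ((√(2 * π))⁻¹ * rexp (-(x ^ 2) / 2))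
      = (√(2 * π) * (√(2 * π))⁻¹) * (rexp (x ^ 2 / 2) * rexp (-(x ^ 2) / 2)) := by ring
    _ = 1 := by rw [mul_inv_cancel₀ h1, h2, mul_one]

lemma stdPhi_eq_integral (x : ℝ) : stdPhi x = ∫ t in Iic x, stdpdf t := by
  rw [stdPhi, gaussianReal_apply_eq_integral 0 one_ne_zero, stdpdf_eq,
    ENNReal.toReal_ofReal]
  exact integral_nonneg fun t => gaussianPDFReal_nonneg _ _ _

lemma stdPhi_hasDerivAt (x : ℝ) : HasDerivAt stdPhi (stdpdf x) x := by
  have h : ∀ y : ℝ, stdPhi y = (∫ t in (0:ℝ)..y, stdpdf t) + stdPhi 0 := by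
    intro y
    rw [stdPhi_eq_integral, stdPhi_eq_integral,
      ← intervalIntegral.integral_Iic_sub_Iic stdpdf_integrable.integrableOn
        stdpdf_integrable.integrableOn]
    ring
  have hd : HasDerivAt (fun y => (∫ t in (0:ℝ)..y, stdpdf t) + stdPhi 0) (stdpdf x) x := by
    apply HasDerivAt.add_const
    exact (intervalIntegral.integral_hasStrictDerivAt_right
      (stdpdf_integrable.intervalIntegrable)
      (stdpdf_cont.stronglyMeasurable.stronglyMeasurableAtFilter)
      stdpdf_cont.continuousAt).hasDerivAt
  exact hd.congr_of_eventuallyEq (Eventually.of_forall h)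

lemma stdPhi_nonneg (x : ℝ) : 0 ≤ stdPhi x := ENNReal.toReal_nonneg

lemma stdPhi_le_one (x : ℝ) : stdPhi x ≤ 1 := by
  rw [stdPhi]
  have := prob_le_one (μ := gaussianReal 0 1) (s := Iic x)
  exact ENNReal.toReal_le_of_le_ofReal zero_le_one (by simpa using this)

lemma stdPhi_mono : Monotone stdPhi := fun a b hab => by
  rw [stdPhi, stdPhi]
  exact ENNReal.toReal_mono (measure_ne_top _ _) (measure_mono (Iic_subset_Iic.2 hab))

lemma stdPhi_continuous : Continuous stdPhi :=
  continuous_iff_continuousAt.2 fun x => (stdPhi_hasDerivAt x).continuousAt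

lemma gauss_map_neg : (gaussianReal 0 1).map (fun x => -x) = gaussianReal 0 1 := by
  have := gaussianReal_map_const_mul (μ := 0) (v := 1) (-1)
  simp only [neg_one_mul, mul_zero] at this
  convert this using 2
  ext : 1
  norm_num

lemma gauss_singleton (x : ℝ) : (gaussianReal 0 1) {x} = 0 := by
  rw [gaussianReal_apply_eq_integral 0 one_ne_zero]
  rw [show ({x} : Set ℝ) = {x} from rfl]
  rw [Measure.restrict_eq_zero.mpr (measure_singleton x)]
  simp

lemma stdPhi_symm (x : ℝ) : stdPhi (-x) = 1 - stdPhi x := by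
  have h1 : (gaussianReal 0 1) (Iic (-x)) = (gaussianReal 0 1) (Ici x) := by
    conv_lhs => rw [← gauss_map_neg]
    rw [Measure.map_apply (measurable_neg) measurableSet_Iic]
    congr 1
    ext t; simp [neg_le]
  have h2 : (gaussianReal 0 1) (Ici x) = 1 - (gaussianReal 0 1) (Iic x) := by
    rw [← measure_congr (Ioi_ae_eq_Ici' (gauss_singleton x)), ← Set.compl_Iic,
      measure_compl measurableSet_Iic (measure_ne_top _ _), measure_univ]
  rw [stdPhi, stdPhi, h1, h2, ENNReal.toReal_sub_of_le prob_le_one ENNReal.one_ne_top,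
    ENNReal.toReal_one]

lemma stdPhi_zero : stdPhi 0 = 1/2 := by
  have := stdPhi_symm 0
  rw [neg_zero] at this
  linarith

lemma stdPhi_tendsto_one : Tendsto stdPhi atTop (nhds 1) := by
  have h := tendsto_measure_Iic_atTop (gaussianReal 0 1)
  rw [measure_univ] at h
  have := (ENNReal.tendsto_toReal ENNReal.one_ne_top).comp h
  exact this

lemma stdpdf_hasDerivAt (t : ℝ) : HasDerivAt stdpdf (-t * stdpdf t) t := by
  have h1 : HasDerivAt (fun s : ℝ => -(s^2)/2) (-t) t := by
    have := ((hasDerivAt_pow 2 t).neg.div_const 2)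
    refine this.congr_deriv ?_
    ring
  have := (h1.exp).const_mul (Real.sqrt (2 * π))⁻¹
  refine this.congr_deriv ?_
  unfold stdpdf
  ring

lemma stdpdf_tendsto_zero : Tendsto stdpdf atTop (nhds 0) := by
  have h1 : Tendsto (fun t : ℝ => -(t^2)/2) atTop atBot := by
    apply Tendsto.atBot_div_const two_pos
    exact tendsto_neg_atBot_iff.mpr (tendsto_pow_atTop two_ne_zero)
  have := (Real.tendsto_exp_atBot.comp h1).const_mul (Real.sqrt (2 * π))⁻¹
  have heq : stdpdf = fun t => (Real.sqrt (2 * π))⁻¹ * ((Real.exp ∘ fun t : ℝ => -(t^2)/2) t) := rfl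
  rw [heq]
  simpa using this

lemma nonneg_of_antitoneOn_tendsto {f : ℝ → ℝ} {a : ℝ} (hf : AntitoneOn f (Ici a))
    (hl : Tendsto f atTop (nhds 0)) : 0 ≤ f a :=
  le_of_tendsto hl (eventually_atTop.2 ⟨a, fun y hy => hf self_mem_Ici hy hy⟩)

lemma mill (u : ℝ) (hu : 0 < u) : u * (1 - stdPhi u) ≤ stdpdf u := by
  set g : ℝ → ℝ := fun t => stdpdf t / t - (1 - stdPhi t) with hg
  have hderiv : ∀ t : ℝ, t ≠ 0 → HasDerivAt g (-stdpdf t / t^2) t := by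
    intro t ht
    have h1 : HasDerivAt g ((-t * stdpdf t * t - stdpdf t * 1) / t^2 - (0 - stdpdf t)) t :=
      ((stdpdf_hasDerivAt t).div (hasDerivAt_id t) ht).sub
        ((hasDerivAt_const t (1:ℝ)).sub (stdPhi_hasDerivAt t))
    convert h1 using 1
    field_simp
    ring
  have hanti : AntitoneOn g (Ici u) := by
    apply antitoneOn_of_hasDerivWithinAt_nonpos (convex_Ici u)
    · intro t ht
      have htu : u ≤ t := ht
      have ht0 : t ≠ 0 := ne_of_gt (lt_of_lt_of_le hu htu)
      exact (hderiv t ht0).continuousAt.continuousWithinAt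
    · intro t ht
      rw [interior_Ici] at ht
      have htu : u < t := ht
      have ht0 : t ≠ 0 := ne_of_gt (lt_trans hu htu)
      exact (hderiv t ht0).hasDerivWithinAt
    · intro t ht
      rw [interior_Ici] at ht
      have h1 := stdpdf_pos t
      have ht0 : (0:ℝ) < t := lt_trans hu ht
      have h2 : (0:ℝ) < t^2 := by positivity
      exact le_of_lt (div_neg_of_neg_of_pos (neg_neg_of_pos h1) h2)
  have hlim : Tendsto g atTop (nhds 0) := by
    have h1 : Tendsto (fun t : ℝ => stdpdf t / t) atTop (nhds 0) := by
      have := stdpdf_tendsto_zero.mul tendsto_inv_atTop_zero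
      simpa [div_eq_mul_inv] using this
    have h2 : Tendsto (fun t : ℝ => 1 - stdPhi t) atTop (nhds 0) := by
      have := (tendsto_const_nhds (x := (1:ℝ)) (f := atTop)).sub stdPhi_tendsto_one
      simpa using this
    simpa using h1.sub h2
  have h0 : 0 ≤ g u := nonneg_of_antitoneOn_tendsto hanti hlim
  have : 1 - stdPhi u ≤ stdpdf u / u := by
    have := h0
    simp only [hg, sub_nonneg] at this
    exact this
  calc u * (1 - stdPhi u) ≤ u * (stdpdf u / u) := by
        exact mul_le_mul_of_nonneg_left this (le_of_lt hu)
    _ = stdpdf u := by field_simp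

lemma mill_left (u : ℝ) (hu : u < 0) : (-u) * stdPhi u ≤ stdpdf u := by
  have h1 := mill (-u) (by linarith)
  rw [stdPhi_symm] at h1
  have h2 : stdpdf (-u) = stdpdf u := by unfold stdpdf; ring_nf
  simpa [h2] using h1

noncomputable def psiFn (t : ℝ) : ℝ := -t/4 + (Real.sqrt (2*π))⁻¹ * (2 * stdPhi t - 1)
noncomputable def hFn (t : ℝ) : ℝ := Real.exp (-(t^2)/2)/4 - stdPhi t * (1 - stdPhi t)
noncomputable def cthr : ℝ := Real.sqrt (2 * Real.log (4/π))

lemma my_pi_lt_four : π < 4 := by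
  have := Real.pi_lt_d2
  linarith

lemma log_pos' : 0 < Real.log (4/π) := by
  apply Real.log_pos
  rw [lt_div_iff₀ Real.pi_pos]
  linarith [my_pi_lt_four]

lemma cthr_pos : 0 < cthr := Real.sqrt_pos.2 (by linarith [log_pos'])

lemma cthr_sq : cthr^2 = 2 * Real.log (4/π) :=
  Real.sq_sqrt (by linarith [log_pos'])

lemma exp_neg_half_sq_c : Real.exp (-(cthr^2)/2) = π/4 := by
  rw [cthr_sq]
  rw [show -(2 * Real.log (4/π))/2 = -Real.log (4/π) by ring]
  rw [Real.exp_neg, Real.exp_log (by positivity)]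
  rw [inv_div]

lemma psiFn_hasDerivAt (t : ℝ) :
    HasDerivAt psiFn (-(1/4) + (Real.sqrt (2*π))⁻¹ * (2 * stdpdf t)) t := by
  have h1 : HasDerivAt (fun s : ℝ => -s/4) (-(1/4) : ℝ) t := by
    have := ((hasDerivAt_id t).neg.div_const 4)
    refine this.congr_deriv ?_
    norm_num
  have h2 : HasDerivAt (fun s => (Real.sqrt (2*π))⁻¹ * (2 * stdPhi s - 1))
      ((Real.sqrt (2*π))⁻¹ * (2 * stdpdf t)) t := by
    have := (((stdPhi_hasDerivAt t).const_mul (2:ℝ)).sub_const 1).const_mul (Real.sqrt (2*π))⁻¹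
    convert this using 1
  exact h1.add h2

lemma psiFn_deriv_sign_eq (t : ℝ) : -(1/4) + (Real.sqrt (2*π))⁻¹ * (2 * stdpdf t)
    = -(1/4) + Real.exp (-(t^2)/2)/π := by
  unfold stdpdf
  have h : ((Real.sqrt (2*π))⁻¹ * (Real.sqrt (2*π))⁻¹) = (2*π)⁻¹ := by
    rw [← mul_inv]
    rw [Real.mul_self_sqrt (by positivity)]
  have hπ : π ≠ 0 := ne_of_gt Real.pi_pos
  calc -(1/4) + (Real.sqrt (2*π))⁻¹ * (2 * ((Real.sqrt (2*π))⁻¹ * Real.exp (-(t^2)/2)))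
      = -(1/4) + 2 * ((Real.sqrt (2*π))⁻¹ * (Real.sqrt (2*π))⁻¹) * Real.exp (-(t^2)/2) := by ring
    _ = -(1/4) + 2 * (2*π)⁻¹ * Real.exp (-(t^2)/2) := by rw [h]
    _ = -(1/4) + Real.exp (-(t^2)/2)/π := by
        congr 1
        field_simp

lemma hFn_hasDerivAt (t : ℝ) :
    HasDerivAt hFn (Real.exp (-(t^2)/2) * psiFn t) t := by
  have h1 : HasDerivAt (fun s : ℝ => -(s^2)/2) (-t) t := by
    have := ((hasDerivAt_pow 2 t).neg.div_const 2)
    refine this.congr_deriv ?_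
    ring
  have h2 : HasDerivAt (fun s : ℝ => Real.exp (-(s^2)/2)/4) (Real.exp (-(t^2)/2) * (-t) / 4) t :=
    (h1.exp).div_const 4
  have h3 : HasDerivAt (fun s => stdPhi s * (1 - stdPhi s))
      (stdpdf t * (1 - stdPhi t) + stdPhi t * (-stdpdf t)) t := by
    have := (stdPhi_hasDerivAt t).mul ((hasDerivAt_const t (1:ℝ)).sub (stdPhi_hasDerivAt t))
    refine this.congr_deriv ?_
    simp only [Pi.sub_apply]
    ring
  have := h2.sub h3
  refine this.congr_deriv ?_
  unfold psiFn stdpdf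
  ring

lemma psiFn_zero : psiFn 0 = 0 := by
  unfold psiFn
  rw [stdPhi_zero]
  ring

lemma hFn_zero : hFn 0 = 0 := by
  unfold hFn
  rw [stdPhi_zero]
  norm_num

lemma psiFn_nonneg_on_Icc : ∀ t ∈ Icc (0:ℝ) cthr, 0 ≤ psiFn t := by
  have hmono : MonotoneOn psiFn (Icc 0 cthr) := by
    apply monotoneOn_of_hasDerivWithinAt_nonneg (convex_Icc 0 cthr)
    · exact fun t _ => (psiFn_hasDerivAt t).continuousAt.continuousWithinAt
    · exact fun t _ => (psiFn_hasDerivAt t).hasDerivWithinAt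
    · intro t ht
      rw [interior_Icc] at ht
      rw [psiFn_deriv_sign_eq]
      have hle : Real.exp (-(cthr^2)/2) ≤ Real.exp (-(t^2)/2) := by
        apply Real.exp_le_exp.2
        have h1 : t^2 ≤ cthr^2 := by
          apply sq_le_sq' <;> nlinarith [ht.1, ht.2, cthr_pos]
        linarith
      rw [exp_neg_half_sq_c] at hle
      have h2 : 1/4 ≤ Real.exp (-(t^2)/2)/π := by
        rw [le_div_iff₀ Real.pi_pos]
        linarith
      linarith
  intro t ht
  have := hmono (left_mem_Icc.2 (le_of_lt cthr_pos)) ht ht.1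
  rwa [psiFn_zero] at this

lemma psiFn_anti : AntitoneOn psiFn (Ici cthr) := by
  apply antitoneOn_of_hasDerivWithinAt_nonpos (convex_Ici cthr)
  · exact fun t _ => (psiFn_hasDerivAt t).continuousAt.continuousWithinAt
  · exact fun t _ => (psiFn_hasDerivAt t).hasDerivWithinAt
  · intro t ht
    rw [interior_Ici] at ht
    rw [psiFn_deriv_sign_eq]
    have hle : Real.exp (-(t^2)/2) ≤ Real.exp (-(cthr^2)/2) := by
      apply Real.exp_le_exp.2
      have h1 : cthr^2 ≤ t^2 := by
        nlinarith [le_of_lt (Set.mem_Ioi.mp ht), cthr_pos]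
      linarith
    rw [exp_neg_half_sq_c] at hle
    have h2 : Real.exp (-(t^2)/2)/π ≤ 1/4 := by
      rw [div_le_iff₀ Real.pi_pos]
      linarith
    linarith

lemma hFn_tendsto_zero : Tendsto hFn atTop (nhds 0) := by
  have h1 : Tendsto (fun t : ℝ => Real.exp (-(t^2)/2)/4) atTop (nhds 0) := by
    have h0 : Tendsto (fun t : ℝ => -(t^2)/2) atTop atBot := by
      apply Tendsto.atBot_div_const two_pos
      exact tendsto_neg_atBot_iff.mpr (tendsto_pow_atTop two_ne_zero)
    have := (Real.tendsto_exp_atBot.comp h0).div_const 4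
    simpa [Function.comp] using this
  have h2 : Tendsto (fun t => stdPhi t * (1 - stdPhi t)) atTop (nhds 0) := by
    have := stdPhi_tendsto_one.mul ((tendsto_const_nhds (x := (1:ℝ)) (f := atTop)).sub
      stdPhi_tendsto_one)
    simpa using this
  have := h1.sub h2
  rw [sub_zero] at this
  exact this

lemma hFn_nonneg (x : ℝ) (hx : 0 ≤ x) : 0 ≤ hFn x := by
  by_cases hψ : 0 ≤ psiFn x
  · -- h monotone on [0, x]
    have hmono : MonotoneOn hFn (Icc 0 x) := by
      apply monotoneOn_of_hasDerivWithinAt_nonneg (convex_Icc 0 x)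
      · exact fun t _ => (hFn_hasDerivAt t).continuousAt.continuousWithinAt
      · exact fun t _ => (hFn_hasDerivAt t).hasDerivWithinAt
      · intro t ht
        rw [interior_Icc] at ht
        have hψt : 0 ≤ psiFn t := by
          rcases le_or_gt t cthr with h | h
          · exact psiFn_nonneg_on_Icc t ⟨le_of_lt ht.1, h⟩
          · calc (0:ℝ) ≤ psiFn x := hψ
              _ ≤ psiFn t := psiFn_anti (le_of_lt h) (le_trans (le_of_lt h) (le_of_lt ht.2))
                  (le_of_lt ht.2)
        positivity
    have := hmono (left_mem_Icc.2 hx) (right_mem_Icc.2 hx) hx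
    rwa [hFn_zero] at this
  · push_neg at hψ
    have hcx : cthr < x := by
      by_contra hc
      push_neg at hc
      exact absurd (psiFn_nonneg_on_Icc x ⟨hx, hc⟩) (not_le.2 hψ)
    have hanti : AntitoneOn hFn (Ici x) := by
      apply antitoneOn_of_hasDerivWithinAt_nonpos (convex_Ici x)
      · exact fun t _ => (hFn_hasDerivAt t).continuousAt.continuousWithinAt
      · exact fun t _ => (hFn_hasDerivAt t).hasDerivWithinAt
      · intro t ht
        rw [interior_Ici] at ht
        have hψt : psiFn t ≤ 0 := by
          calc psiFn t ≤ psiFn x := psiFn_anti (le_of_lt hcx)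
                (le_trans (le_of_lt hcx) (le_of_lt ht)) (le_of_lt ht)
            _ ≤ 0 := le_of_lt hψ
        have he := Real.exp_pos (-(t^2)/2)
        nlinarith
    exact nonneg_of_antitoneOn_tendsto hanti hFn_tendsto_zero

lemma key_quarter (x : ℝ) : Real.exp (x^2/2) * (stdPhi x * (1 - stdPhi x)) ≤ 1/4 := by
  -- reduce to x ≥ 0 by symmetry
  have main : ∀ y : ℝ, 0 ≤ y → Real.exp (y^2/2) * (stdPhi y * (1 - stdPhi y)) ≤ 1/4 := by
    intro y hy
    have h := hFn_nonneg y hy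
    unfold hFn at h
    have h2 : stdPhi y * (1 - stdPhi y) ≤ Real.exp (-(y^2)/2)/4 := by linarith
    have h3 := mul_le_mul_of_nonneg_left h2 (le_of_lt (Real.exp_pos (y^2/2)))
    calc Real.exp (y^2/2) * (stdPhi y * (1 - stdPhi y))
        ≤ Real.exp (y^2/2) * (Real.exp (-(y^2)/2)/4) := h3
      _ = Real.exp (y^2/2) * Real.exp (-(y^2)/2) / 4 := by ring
      _ = 1/4 := by rw [← Real.exp_add, show y^2/2 + -(y^2)/2 = 0 by ring, Real.exp_zero]
  rcases le_or_gt 0 x with hx | hx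
  · exact main x hx
  · have := main (-x) (by linarith)
    rw [stdPhi_symm] at this
    have heq : stdPhi x * (1 - stdPhi x) = (1 - stdPhi x) * (1 - (1 - stdPhi x)) := by ring
    rw [heq]
    have hsq : (-x)^2 = x^2 := by ring
    rw [hsq] at this
    exact this

noncomputable def steinB (x : ℝ) : ℝ := Real.sqrt (2*π) * Real.exp (x^2/2) * stdPhi x
noncomputable def steinC (x : ℝ) : ℝ := Real.sqrt (2*π) * Real.exp (x^2/2) * (1 - stdPhi x)
noncomputable def steinF (z x : ℝ) : ℝ :=
  if x ≤ z then steinB x * (1 - stdPhi z) else steinC x * stdPhi z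
noncomputable def steinF' (z x : ℝ) : ℝ :=
  x * steinF z x + (if x ≤ z then 1 else 0) - stdPhi z

lemma expsq_hasDerivAt (x : ℝ) :
    HasDerivAt (fun s : ℝ => Real.sqrt (2*π) * Real.exp (s^2/2))
      (Real.sqrt (2*π) * Real.exp (x^2/2) * x) x := by
  have h1 : HasDerivAt (fun s : ℝ => s^2/2) x x := by
    have := (hasDerivAt_pow 2 x).div_const 2
    refine this.congr_deriv ?_
    ring
  have := (h1.exp).const_mul (Real.sqrt (2*π))
  refine this.congr_deriv ?_
  ring

lemma steinB_hasDerivAt (x : ℝ) : HasDerivAt steinB (x * steinB x + 1) x := by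
  have := (expsq_hasDerivAt x).mul (stdPhi_hasDerivAt x)
  refine this.congr_deriv ?_
  unfold steinB
  have hk := key_identity x
  nlinarith [hk]

lemma steinC_hasDerivAt (x : ℝ) : HasDerivAt steinC (x * steinC x - 1) x := by
  have := (expsq_hasDerivAt x).mul ((hasDerivAt_const x (1:ℝ)).sub (stdPhi_hasDerivAt x))
  refine this.congr_deriv ?_
  unfold steinC
  have hk := key_identity x
  simp only [Pi.sub_apply]
  nlinarith [hk]

lemma steinB_nonneg (x : ℝ) : 0 ≤ steinB x := by
  unfold steinB
  have := stdPhi_nonneg x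
  positivity

lemma steinC_nonneg (x : ℝ) : 0 ≤ steinC x := by
  unfold steinC
  have := stdPhi_le_one x
  have h2 : 0 ≤ 1 - stdPhi x := by linarith
  positivity

lemma steinF_continuous (z : ℝ) : Continuous (steinF z) := by
  unfold steinF
  apply Continuous.if_le
  · have : Continuous steinB :=
      continuous_iff_continuousAt.2 fun x => (steinB_hasDerivAt x).continuousAt
    exact this.mul continuous_const
  · have : Continuous steinC :=
      continuous_iff_continuousAt.2 fun x => (steinC_hasDerivAt x).continuousAt
    exact this.mul continuous_const
  · exact continuous_id
  · exact continuous_const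
  · intro x hx
    subst hx
    unfold steinB steinC
    ring

lemma steinF_hasDerivAt (z x : ℝ) (hxz : x ≠ z) :
    HasDerivAt (steinF z) (steinF' z x) x := by
  rcases lt_or_gt_of_ne hxz with h | h
  · have heq : steinF z =ᶠ[nhds x] (fun y => steinB y * (1 - stdPhi z)) := by
      filter_upwards [Iio_mem_nhds h] with y hy
      unfold steinF
      rw [if_pos (le_of_lt hy)]
    have hd : HasDerivAt (fun y => steinB y * (1 - stdPhi z))
        ((x * steinB x + 1) * (1 - stdPhi z)) x := (steinB_hasDerivAt x).mul_const _
    have := hd.congr_of_eventuallyEq heq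
    refine this.congr_deriv ?_
    unfold steinF' steinF
    rw [if_pos (le_of_lt h), if_pos (le_of_lt h)]
    ring
  · have heq : steinF z =ᶠ[nhds x] (fun y => steinC y * stdPhi z) := by
      filter_upwards [Ioi_mem_nhds h] with y hy
      unfold steinF
      rw [if_neg (not_le.2 hy)]
    have hd : HasDerivAt (fun y => steinC y * stdPhi z)
        ((x * steinC x - 1) * stdPhi z) x := (steinC_hasDerivAt x).mul_const _
    have := hd.congr_of_eventuallyEq heq
    refine this.congr_deriv ?_
    unfold steinF' steinF
    rw [if_neg (not_le.2 h), if_neg (not_le.2 h)]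
    ring

lemma steinF_bound (z x : ℝ) : |steinF z x| ≤ Real.sqrt (2 * π) / 4 := by
  have hq0 := stdPhi_nonneg z
  have hq1 := stdPhi_le_one z
  have hp0 := stdPhi_nonneg x
  have hp1 := stdPhi_le_one x
  have hKq := key_quarter x
  have hsqrt : (0:ℝ) ≤ Real.sqrt (2*π) := Real.sqrt_nonneg _
  have hnonneg : 0 ≤ steinF z x := by
    unfold steinF
    split
    · exact mul_nonneg (steinB_nonneg x) (by linarith)
    · exact mul_nonneg (steinC_nonneg x) hq0
  rw [abs_of_nonneg hnonneg]
  have hmain : steinF z x ≤ Real.sqrt (2*π) * (Real.exp (x^2/2) * (stdPhi x * (1 - stdPhi x))) := by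
    unfold steinF
    split
    · rename_i hxz
      have hpq : stdPhi x ≤ stdPhi z := stdPhi_mono hxz
      calc steinB x * (1 - stdPhi z) ≤ steinB x * (1 - stdPhi x) :=
            mul_le_mul_of_nonneg_left (by linarith) (steinB_nonneg x)
        _ = Real.sqrt (2*π) * (Real.exp (x^2/2) * (stdPhi x * (1 - stdPhi x))) := by
            unfold steinB; ring
    · rename_i hxz
      have hpq : stdPhi z ≤ stdPhi x := stdPhi_mono (le_of_lt (not_le.1 hxz))
      calc steinC x * stdPhi z ≤ steinC x * stdPhi x :=
            mul_le_mul_of_nonneg_left hpq (steinC_nonneg x)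
        _ = Real.sqrt (2*π) * (Real.exp (x^2/2) * (stdPhi x * (1 - stdPhi x))) := by
            unfold steinC; ring
  calc steinF z x ≤ Real.sqrt (2*π) * (Real.exp (x^2/2) * (stdPhi x * (1 - stdPhi x))) := hmain
    _ ≤ Real.sqrt (2*π) * (1/4) := mul_le_mul_of_nonneg_left hKq hsqrt
    _ = Real.sqrt (2*π) / 4 := by ring

lemma steinF'_bound (z x : ℝ) : |steinF' z x| ≤ 1 := by
  set p := stdPhi x with hp
  set q := stdPhi z with hq
  set K := Real.sqrt (2*π) * Real.exp (x^2/2) with hK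
  have hq0 := stdPhi_nonneg z
  have hq1 := stdPhi_le_one z
  have hp0 := stdPhi_nonneg x
  have hp1 := stdPhi_le_one x
  have hKpos : 0 < K := by rw [hK]; positivity
  have hpdf := stdpdf_pos x
  have hkey : K * stdpdf x = 1 := key_identity x
  rw [abs_le]
  unfold steinF' steinF
  by_cases hxz : x ≤ z
  · rw [if_pos hxz, if_pos hxz]
    have hpq : p ≤ q := stdPhi_mono hxz
    have hBval : steinB x = K * p := by unfold steinB; rw [hK, hp]
    rw [hBval]
    constructor
    · -- -1 ≤ x * (K * p * (1-q)) + 1 - q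
      rcases le_or_gt 0 x with hx | hx
      · nlinarith [mul_nonneg (mul_nonneg hx (mul_nonneg (le_of_lt hKpos) hp0))
          (by linarith : (0:ℝ) ≤ 1 - q)]
      · have hm := mill_left x hx
        have h1 : (K*(1-q)) * ((-x)*p) ≤ (K*(1-q)) * stdpdf x :=
          mul_le_mul_of_nonneg_left hm
            (mul_nonneg hKpos.le (by linarith : (0:ℝ) ≤ 1 - q))
        have h3 : K * (1-q) * stdpdf x = 1 - q := by linear_combination (1-q) * hkey
        nlinarith [h1, h3]
    · -- x * (K * p * (1-q)) + 1 - q ≤ 1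
      rcases le_or_gt x 0 with hx | hx
      · nlinarith [mul_nonpos_of_nonpos_of_nonneg hx
          (mul_nonneg (mul_nonneg (le_of_lt hKpos) hp0) (by linarith : (0:ℝ) ≤ 1 - q))]
      · have hm := mill x hx
        have h0 : x * (1-q) ≤ stdpdf x := by nlinarith
        have h1 : (K*p) * (x*(1-q)) ≤ (K*p) * stdpdf x :=
          mul_le_mul_of_nonneg_left h0 (mul_nonneg hKpos.le hp0)
        have h3 : K * p * stdpdf x = p := by linear_combination p * hkey
        nlinarith [h1, h3]
  · rw [if_neg hxz, if_neg hxz]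
    push_neg at hxz
    have hpq : q ≤ p := stdPhi_mono (le_of_lt hxz)
    have hCval : steinC x = K * (1 - p) := by unfold steinC; rw [hK, hp]
    rw [hCval]
    constructor
    · -- -1 ≤ x * (K * (1-p) * q) + 0 - q
      rcases le_or_gt 0 x with hx | hx
      · nlinarith [mul_nonneg (mul_nonneg hx
          (mul_nonneg (le_of_lt hKpos) (by linarith : (0:ℝ) ≤ 1 - p))) hq0]
      · have hm := mill_left x hx
        have h0 : (-x) * q ≤ stdpdf x :=
          le_trans (mul_le_mul_of_nonneg_left hpq (by linarith : (0:ℝ) ≤ -x)) hm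
        have h1 : (K*(1-p)) * ((-x)*q) ≤ (K*(1-p)) * stdpdf x :=
          mul_le_mul_of_nonneg_left h0
            (mul_nonneg hKpos.le (by linarith : (0:ℝ) ≤ 1 - p))
        have h3 : K * (1-p) * stdpdf x = 1 - p := by linear_combination (1-p) * hkey
        nlinarith [h1, h3]
    · -- x * (K * (1-p) * q) + 0 - q ≤ 1
      rcases le_or_gt x 0 with hx | hx
      · nlinarith [mul_nonpos_of_nonpos_of_nonneg hx
          (mul_nonneg (mul_nonneg (le_of_lt hKpos) (by linarith : (0:ℝ) ≤ 1 - p)) hq0)]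
      · have hm := mill x hx
        have h1 : (K*q) * (x*(1-p)) ≤ (K*q) * stdpdf x :=
          mul_le_mul_of_nonneg_left hm (mul_nonneg hKpos.le hq0)
        have h3 : K * q * stdpdf x = q := by linear_combination q * hkey
        nlinarith [h1, h3]

lemma steinF_piecewiseC1 (z : ℝ) : PiecewiseC1 (steinF z) (steinF' z) := by
  refine ⟨steinF_continuous z, {z}, fun x hx => steinF_hasDerivAt z x (by simpa using hx), ?_⟩
  have hind : ContinuousOn (fun x : ℝ => if x ≤ z then (1:ℝ) else 0) (({z} : Finset ℝ) : Set ℝ)ᶜ := by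
    intro x hx
    have hxz : x ≠ z := by simpa using hx
    apply ContinuousAt.continuousWithinAt
    rcases lt_or_gt_of_ne hxz with h | h
    · apply ContinuousAt.congr (continuousAt_const (y := (1:ℝ)))
      filter_upwards [Iio_mem_nhds h] with y hy
      rw [if_pos (le_of_lt hy)]
    · apply ContinuousAt.congr (continuousAt_const (y := (0:ℝ)))
      filter_upwards [Ioi_mem_nhds h] with y hy
      rw [if_neg (not_le.2 hy)]
  have : ContinuousOn (steinF' z) (({z} : Finset ℝ) : Set ℝ)ᶜ := by
    have h1 : ContinuousOn (fun x => x * steinF z x) (({z} : Finset ℝ) : Set ℝ)ᶜ :=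
      (continuous_id.mul (steinF_continuous z)).continuousOn
    have h2 := (h1.add hind).sub (continuousOn_const (c := stdPhi z))
    apply h2.congr
    intro x _
    rw [show steinF' z x = x * steinF z x + (if x ≤ z then 1 else 0) - stdPhi z from rfl]
    rfl
  exact this

/-- Kolmogorov distance bound: for an integrable random variable `Y` and a standard Gaussian
`Z`, `sup_z |P(Y ≤ z) − P(Z ≤ z)| ≤ sup_{f ∈ F_Kol} |E[f'(Y) − Y f(Y)]|`, where `F_Kol` is the
class of piecewise continuously differentiable functions bounded by `√(2π)/4` with derivative
bounded by `1`. -/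
theorem kolmogorov_distance_stein_bound
    {Ω : Type*} [MeasurableSpace Ω] (P : Measure Ω) [IsProbabilityMeasure P]
    (Y : Ω → ℝ) (hY : Measurable Y) (hYint : Integrable Y P)
    (M : ℝ)
    (hM : ∀ f f' : ℝ → ℝ, PiecewiseC1 f f' →
      (∀ x, |f x| ≤ Real.sqrt (2 * π) / 4) → (∀ x, |f' x| ≤ 1) →
      |∫ ω, (f' (Y ω) - Y ω * f (Y ω)) ∂P| ≤ M) :
    ∀ z : ℝ,
      |(P {ω | Y ω ≤ z}).toReal - ((gaussianReal 0 1) (Set.Iic z)).toReal| ≤ M := by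
  intro z
  have hMz := hM (steinF z) (steinF' z) (steinF_piecewiseC1 z) (steinF_bound z) (steinF'_bound z)
  have hs : MeasurableSet {ω | Y ω ≤ z} := hY measurableSet_Iic
  have heq : ∀ ω, steinF' z (Y ω) - Y ω * steinF z (Y ω)
      = ({ω | Y ω ≤ z}).indicator (fun _ => (1:ℝ)) ω - stdPhi z := by
    intro ω
    rw [show steinF' z (Y ω) = Y ω * steinF z (Y ω) + (if Y ω ≤ z then 1 else 0) - stdPhi z from rfl]
    by_cases h : Y ω ≤ z
    · rw [if_pos h, indicator_of_mem (by exact h)]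
      ring
    · rw [if_neg h, indicator_of_notMem (by exact h)]
      ring
  have hint : Integrable (({ω | Y ω ≤ z}).indicator (fun _ => (1:ℝ))) P :=
    (integrable_const (1:ℝ)).indicator hs
  have hcalc : ∫ ω, (steinF' z (Y ω) - Y ω * steinF z (Y ω)) ∂P
      = (P {ω | Y ω ≤ z}).toReal - stdPhi z := by
    calc ∫ ω, (steinF' z (Y ω) - Y ω * steinF z (Y ω)) ∂P
        = ∫ ω, (({ω | Y ω ≤ z}).indicator (fun _ => (1:ℝ)) ω - stdPhi z) ∂P := by
          congr 1; funext ω; exact heq ω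
      _ = (∫ ω, ({ω | Y ω ≤ z}).indicator (fun _ => (1:ℝ)) ω ∂P) - ∫ _, stdPhi z ∂P :=
          integral_sub hint (integrable_const _)
      _ = (P {ω | Y ω ≤ z}).toReal - stdPhi z := by
          rw [integral_indicator_const _ hs, integral_const]
          simp [Measure.real]
  rw [hcalc] at hMz
  exact hMz
end

section
/- Let −∞ ≤ a < 0 < b ≤ +∞ and let τ : ℝ → ℝ be continuous, nonnegative, with τ(x) > 0 iff x ∈ (a,b), satisfying ∫₀^b (y/τ(y)) dy = +∞ and ∫_a^0 (y/τ(y)) dy = −∞, and let p_τ and E_τ(h) be defined accordingly. For every bounded piecewise continuous h : ℝ → ℝ, let U_τ h be the unique solution of the Stein equation τ(x) f'(x) − x f(x) = h(x) − E_τ(h) which is bounded and continuous on (a,b), given by U_τ h(x) = ∫_a^x (h(y) − E_τ(h)) exp(∫_y^x (z/τ(z)) dz)/τ(y) dy for x ∈ (a,b). Then sup_{x∈(a,b)} ( |x · U_τ h(x)| + |τ(x) · (U_τ h)'(x)| ) ≤ 6 sup_{x∈(a,b)} |h(x)|. -/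
open MeasureTheory Real Set Topology Filter

/-- The density `p_τ(x) = C⁻¹ exp(−∫₀^x y/τ(y) dy)/τ(x) · 1_{(a,b)}(x)` associated with `τ`. -/
noncomputable def pTau (a b : EReal) (τ : ℝ → ℝ) (x : ℝ) : ℝ :=
  if a < (x : EReal) ∧ (x : EReal) < b then
    (Real.exp (-∫ y in (0 : ℝ)..x, y / τ y) / τ x) /
      (∫ z in {z : ℝ | a < (z : EReal) ∧ (z : EReal) < b},
        Real.exp (-∫ y in (0 : ℝ)..z, y / τ y) / τ z)
  else 0

/-- `E_τ(h) = ∫ h(y) p_τ(y) dy`. -/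
noncomputable def ETau (a b : EReal) (τ h : ℝ → ℝ) : ℝ :=
  ∫ y, h y * pTau a b τ y

/-- The solution `U_τ h (x) = ∫_a^x (h(y) − E_τ(h)) exp(∫_y^x z/τ(z) dz)/τ(y) dy` of the
Stein equation associated with `τ` and `h`. -/
noncomputable def UTau (a b : EReal) (τ h : ℝ → ℝ) (x : ℝ) : ℝ :=
  ∫ y in {y : ℝ | a < (y : EReal) ∧ y < x},
    (h y - ETau a b τ h) * Real.exp (∫ z in y..x, z / τ z) / τ y


section SteinAuxTop

theorem lint_mono_union (f : ℝ → ENNReal) (s : ℕ → Set ℝ) (hs : Monotone s) (hsm : ∀ n, MeasurableSet (s n))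
    (hf : AEMeasurable f (volume.restrict (⋃ n, s n))) :
    ∫⁻ x in ⋃ n, s n, f x = ⨆ n, ∫⁻ x in s n, f x := by
  have hU : MeasurableSet (⋃ n, s n) := MeasurableSet.iUnion hsm
  have h1 : ∀ n, AEMeasurable ((s n).indicator f) volume := by
    intro n
    rw [aemeasurable_indicator_iff (hsm n)]
    exact hf.mono_measure (Measure.restrict_mono (subset_iUnion s n) le_rfl)
  have h2 : ((⋃ n, s n).indicator f) = fun x => ⨆ n, (s n).indicator f x := by
    funext x
    by_cases hx : x ∈ ⋃ n, s n
    · obtain ⟨n, hn⟩ := mem_iUnion.1 hx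
      rw [indicator_of_mem hx]
      apply le_antisymm
      · exact le_iSup_of_le n (le_of_eq (indicator_of_mem hn f).symm)
      · exact iSup_le fun m => (indicator_le_self _ _ x)
    · rw [indicator_of_notMem hx]
      symm
      refine iSup_eq_bot.2 fun n => indicator_of_notMem (fun h => hx (mem_iUnion.2 ⟨n, h⟩)) _
  rw [← lintegral_indicator hU f, h2, lintegral_iSup' h1 (Filter.Eventually.of_forall fun x n m hnm => indicator_le_indicator_of_subset (hs hnm) (fun _ => zero_le) x)]
  exact iSup_congr fun n => lintegral_indicator (hsm n) f


theorem exists_seq_lt (a : EReal) (x : ℝ) (hax : a < (x:EReal)) :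
    ∃ u : ℕ → ℝ, Antitone u ∧ (∀ n, a < (u n : EReal) ∧ u n < x) ∧
      (∀ y : ℝ, a < (y:EReal) → y < x → ∃ n, u n < y) := by
  by_cases hbot : a = ⊥
  · refine ⟨fun n => x - (n+1), ?_, ?_, ?_⟩
    · intro m n hmn
      simp only
      have : (m:ℝ) ≤ n := Nat.cast_le.2 hmn
      linarith
    · intro n
      refine ⟨hbot ▸ EReal.bot_lt_coe _, ?_⟩
      have : (0:ℝ) ≤ n := Nat.cast_nonneg n
      simp only
      linarith
    · intro y _ hy
      obtain ⟨n, hn⟩ := exists_nat_gt (x - y)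
      refine ⟨n, ?_⟩
      show x - ((n:ℝ)+1) < y
      linarith
  · have htop : a ≠ ⊤ := (hax.trans (EReal.coe_lt_top x)).ne
    set r := a.toReal with hr
    have har : (r : EReal) = a := EReal.coe_toReal htop hbot
    have hrx : r < x := by rwa [← har, EReal.coe_lt_coe_iff] at hax
    refine ⟨fun n => r + (x - r)/(n+2), ?_, ?_, ?_⟩
    · intro m n hmn
      have h1 : (0:ℝ) < x - r := by linarith
      have h2 : (m:ℝ) + 2 ≤ (n:ℝ) + 2 := by
        have : (m:ℝ) ≤ n := Nat.cast_le.2 hmn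
        linarith
      have := div_le_div_of_nonneg_left h1.le (by positivity : (0:ℝ) < (m:ℝ)+2) h2
      simp only
      linarith
    · intro n
      have h1 : (0:ℝ) < x - r := by linarith
      have h2 : (0:ℝ) < (x - r)/(n+2) := by positivity
      constructor
      · rw [← har, EReal.coe_lt_coe_iff]; linarith
      · have : (x - r)/(n+2) < x - r := by
          rw [div_lt_iff₀ (by positivity : (0:ℝ) < (n:ℝ)+2)]
          nlinarith
        linarith
    · intro y hay hyx
      have hry : r < y := by rwa [← har, EReal.coe_lt_coe_iff] at hay
      obtain ⟨n, hn⟩ := exists_nat_gt ((x - r)/(y - r))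
      refine ⟨n, ?_⟩
      have h1 : (0:ℝ) < y - r := by linarith
      have h2 : x - r < (n+2) * (y - r) := by
        rw [div_lt_iff₀ h1] at hn
        nlinarith
      have : (x - r)/((n:ℝ)+2) < y - r := by
        rw [div_lt_iff₀ (by positivity : (0:ℝ) < (n:ℝ)+2)]
        linarith
      simp only
      linarith

theorem exists_seq_gt (b : EReal) (x : ℝ) (hxb : (x:EReal) < b) :
    ∃ v : ℕ → ℝ, Monotone v ∧ (∀ n, x < v n ∧ (v n : EReal) < b) ∧
      (∀ y : ℝ, x < y → (y:EReal) < b → ∃ n, y < v n) := by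
  have h : -b < ((-x : ℝ) : EReal) := by
    rw [EReal.coe_neg]
    exact EReal.neg_lt_neg_iff.2 hxb
  obtain ⟨u, hu1, hu2, hu3⟩ := exists_seq_lt (-b) (-x) h
  refine ⟨fun n => -(u n), fun m n hmn => neg_le_neg (hu1 hmn), fun n => ?_, fun y hxy hyb => ?_⟩
  · obtain ⟨h1, h2⟩ := hu2 n
    constructor
    · show x < -(u n); linarith
    · show ((-(u n) : ℝ) : EReal) < b
      rw [EReal.coe_neg, EReal.neg_lt_comm]
      exact h1
  · have h1 : -b < ((-y : ℝ):EReal) := by rw [EReal.coe_neg]; exact EReal.neg_lt_neg_iff.2 hyb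
    obtain ⟨n, hn⟩ := hu3 (-y) h1 (by linarith)
    refine ⟨n, ?_⟩
    show y < -(u n)
    linarith


namespace SteinAux

noncomputable def Fi (τ : ℝ → ℝ) (t : ℝ) : ℝ := ∫ y in (0:ℝ)..t, y / τ y
noncomputable def qd (τ : ℝ → ℝ) (z : ℝ) : ℝ := Real.exp (-Fi τ z) / τ z
def Sd (a b : EReal) : Set ℝ := {z : ℝ | a < (z:EReal) ∧ (z:EReal) < b}

def Aset (a : EReal) (x : ℝ) : Set ℝ := {y : ℝ | a < (y:EReal) ∧ y < x}
def Bset (b : EReal) (x : ℝ) : Set ℝ := {y : ℝ | x < y ∧ (y:EReal) < b}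
noncomputable def Cd (a b : EReal) (τ : ℝ → ℝ) : ℝ := ∫ z in Sd a b, qd τ z

variable {a b : EReal} {τ : ℝ → ℝ} {h : ℝ → ℝ}

theorem zero_mem_Sd (ha : a < 0) (hb : 0 < b) : (0:ℝ) ∈ Sd a b := by
  constructor
  · simpa using ha
  · simpa using hb

theorem Sd_open : IsOpen (Sd a b) := by
  have h1 : IsOpen {z : ℝ | a < (z:EReal)} := isOpen_Ioi.preimage continuous_coe_real_ereal
  have h2 : IsOpen {z : ℝ | (z:EReal) < b} := isOpen_Iio.preimage continuous_coe_real_ereal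
  exact h1.inter h2

theorem Sd_meas : MeasurableSet (Sd a b) := Sd_open.measurableSet

theorem mem_Sd_of_le {u v z : ℝ} (hu : u ∈ Sd a b) (hv : v ∈ Sd a b)
    (h1 : u ≤ z) (h2 : z ≤ v) : z ∈ Sd a b := by
  constructor
  · exact lt_of_lt_of_le hu.1 (EReal.coe_le_coe_iff.2 h1)
  · exact lt_of_le_of_lt (EReal.coe_le_coe_iff.2 h2) hv.2

theorem uIcc_subset_Sd {u v : ℝ} (hu : u ∈ Sd a b) (hv : v ∈ Sd a b) :
    uIcc u v ⊆ Sd a b := by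
  intro z hz
  rcases le_total u v with huv | huv
  · rw [uIcc_of_le huv] at hz
    exact mem_Sd_of_le hu hv hz.1 hz.2
  · rw [uIcc_of_ge huv] at hz
    exact mem_Sd_of_le hv hu hz.1 hz.2

theorem tau_pos (hτpos : ∀ x : ℝ, 0 < τ x ↔ (a < (x : EReal) ∧ (x : EReal) < b))
    {z : ℝ} (hz : z ∈ Sd a b) : 0 < τ z := (hτpos z).2 hz

theorem contOn_div (hτc : Continuous τ)
    (hτpos : ∀ x : ℝ, 0 < τ x ↔ (a < (x : EReal) ∧ (x : EReal) < b)) :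
    ContinuousOn (fun y => y / τ y) (Sd a b) :=
  continuousOn_id.div hτc.continuousOn (fun z hz => (tau_pos hτpos hz).ne')

theorem intervalIntegrable_div (hτc : Continuous τ)
    (hτpos : ∀ x : ℝ, 0 < τ x ↔ (a < (x : EReal) ∧ (x : EReal) < b))
    {u v : ℝ} (hu : u ∈ Sd a b) (hv : v ∈ Sd a b) :
    IntervalIntegrable (fun y => y / τ y) volume u v :=
  ((contOn_div hτc hτpos).mono (uIcc_subset_Sd hu hv)).intervalIntegrable

theorem Fi_hasDeriv (ha : a < 0) (hb : 0 < b) (hτc : Continuous τ)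
    (hτpos : ∀ x : ℝ, 0 < τ x ↔ (a < (x : EReal) ∧ (x : EReal) < b))
    {z : ℝ} (hz : z ∈ Sd a b) : HasDerivAt (Fi τ) (z / τ z) z := by
  refine intervalIntegral.integral_hasDerivAt_right
    (intervalIntegrable_div hτc hτpos (zero_mem_Sd ha hb) hz)
    ⟨Sd a b, Sd_open.mem_nhds hz, ((contOn_div hτc hτpos).aestronglyMeasurable Sd_meas)⟩
    (((contOn_div hτc hτpos).continuousAt (Sd_open.mem_nhds hz)))

theorem Fi_contOn (ha : a < 0) (hb : 0 < b) (hτc : Continuous τ)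
    (hτpos : ∀ x : ℝ, 0 < τ x ↔ (a < (x : EReal) ∧ (x : EReal) < b)) :
    ContinuousOn (Fi τ) (Sd a b) := fun z hz =>
  (Fi_hasDeriv ha hb hτc hτpos hz).continuousAt.continuousWithinAt

theorem qd_nonneg (hτ0 : ∀ x, 0 ≤ τ x) (z : ℝ) : 0 ≤ qd τ z :=
  div_nonneg (Real.exp_pos _).le (hτ0 z)

theorem qd_pos (hτpos : ∀ x : ℝ, 0 < τ x ↔ (a < (x : EReal) ∧ (x : EReal) < b))
    {z : ℝ} (hz : z ∈ Sd a b) : 0 < qd τ z :=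
  div_pos (Real.exp_pos _) (tau_pos hτpos hz)

theorem qd_contOn (ha : a < 0) (hb : 0 < b) (hτc : Continuous τ)
    (hτpos : ∀ x : ℝ, 0 < τ x ↔ (a < (x : EReal) ∧ (x : EReal) < b)) :
    ContinuousOn (qd τ) (Sd a b) :=
  (((Fi_contOn ha hb hτc hτpos).neg).rexp).div hτc.continuousOn
    (fun z hz => (tau_pos hτpos hz).ne')

theorem wd_hasDeriv (ha : a < 0) (hb : 0 < b) (hτc : Continuous τ)
    (hτpos : ∀ x : ℝ, 0 < τ x ↔ (a < (x : EReal) ∧ (x : EReal) < b))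
    {z : ℝ} (hz : z ∈ Sd a b) :
    HasDerivAt (fun t => Real.exp (-Fi τ t)) (-(z * qd τ z)) z := by
  have h := ((Fi_hasDeriv ha hb hτc hτpos hz).neg).exp
  convert h using 1
  · rfl
  unfold qd
  simp only [Pi.neg_apply]
  ring

theorem ftc_yq (ha : a < 0) (hb : 0 < b) (hτc : Continuous τ)
    (hτpos : ∀ x : ℝ, 0 < τ x ↔ (a < (x : EReal) ∧ (x : EReal) < b))
    {u v : ℝ} (hu : u ∈ Sd a b) (hv : v ∈ Sd a b) :
    ∫ y in u..v, y * qd τ y = Real.exp (-Fi τ u) - Real.exp (-Fi τ v) := by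
  have hint : IntervalIntegrable (fun y => -(y * qd τ y)) volume u v :=
    (((continuousOn_id.mul (qd_contOn ha hb hτc hτpos)).mono
      (uIcc_subset_Sd hu hv)).intervalIntegrable).neg
  have h := intervalIntegral.integral_eq_sub_of_hasDerivAt
    (f := fun t => Real.exp (-Fi τ t)) (f' := fun y => -(y * qd τ y))
    (fun z hz => wd_hasDeriv ha hb hτc hτpos (uIcc_subset_Sd hu hv hz)) hint
  have h2 : ∫ y in u..v, y * qd τ y = -∫ y in u..v, -(y * qd τ y) := by
    rw [intervalIntegral.integral_neg, neg_neg]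
  rw [h2, h]
  ring


theorem lint_bound_left (ha : a < 0) (hb : 0 < b) (hτc : Continuous τ) (hτ0 : ∀ x, 0 ≤ τ x)
    (hτpos : ∀ x : ℝ, 0 < τ x ↔ (a < (x : EReal) ∧ (x : EReal) < b))
    {x : ℝ} (hx : x ∈ Sd a b) (hx0 : x < 0) :
    ∫⁻ y in {y : ℝ | a < (y:EReal) ∧ y < x}, ENNReal.ofReal (qd τ y)
      ≤ ENNReal.ofReal (Real.exp (-Fi τ x) / (-x)) := by
  obtain ⟨u, hu1, hu2, hu3⟩ := exists_seq_lt a x hx.1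
  have huS : ∀ n, u n ∈ Sd a b := fun n =>
    ⟨(hu2 n).1, lt_trans (EReal.coe_lt_coe_iff.2 (hu2 n).2) hx.2⟩
  set s : ℕ → Set ℝ := fun n => Ioo (u n) x with hs
  have hsm : ∀ n, MeasurableSet (s n) := fun n => measurableSet_Ioo
  have hmono : Monotone s := fun m n hmn => Ioo_subset_Ioo_left (hu1 hmn)
  have hsub : ∀ n, s n ⊆ Sd a b := fun n y hy =>
    mem_Sd_of_le (huS n) hx hy.1.le hy.2.le
  have hA : {y : ℝ | a < (y:EReal) ∧ y < x} = ⋃ n, s n := by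
    ext y
    simp only [mem_setOf_eq, mem_iUnion, hs, mem_Ioo]
    constructor
    · rintro ⟨h1, h2⟩
      obtain ⟨n, hn⟩ := hu3 y h1 h2
      exact ⟨n, hn, h2⟩
    · rintro ⟨n, h1, h2⟩
      exact ⟨lt_trans (hu2 n).1 (EReal.coe_lt_coe_iff.2 h1), h2⟩
  have hq_aem : ∀ (T : Set ℝ), MeasurableSet T → T ⊆ Sd a b →
      AEMeasurable (fun y => ENNReal.ofReal (qd τ y)) (volume.restrict T) := by
    intro T hTm hTS
    exact ENNReal.measurable_ofReal.comp_aemeasurable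
      (((qd_contOn ha hb hτc hτpos).mono hTS).aemeasurable hTm)
  rw [hA, lint_mono_union _ s hmono hsm (hq_aem _ (MeasurableSet.iUnion hsm)
    (iUnion_subset hsub))]
  refine iSup_le fun n => ?_
  have hxneg : (0:ℝ) < -x := by linarith
  have hIccS : Icc (u n) x ⊆ Sd a b := fun y hy => mem_Sd_of_le (huS n) hx hy.1 hy.2
  calc ∫⁻ y in s n, ENNReal.ofReal (qd τ y)
      ≤ ∫⁻ y in s n, ENNReal.ofReal (-y * qd τ y) * ENNReal.ofReal ((-x)⁻¹) := by
        refine lintegral_mono_ae ?_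
        rw [ae_restrict_iff' (hsm n)]
        refine Filter.Eventually.of_forall fun y hy => ?_
        rw [← ENNReal.ofReal_mul' (by positivity)]
        refine ENNReal.ofReal_le_ofReal ?_
        rw [mul_comm (-y) (qd τ y), mul_assoc, ← div_eq_mul_inv]
        refine le_mul_of_one_le_right (qd_nonneg hτ0 y) ?_
        rw [le_div_iff₀ hxneg, one_mul]
        have := hy.2
        linarith
    _ = (∫⁻ y in s n, ENNReal.ofReal (-y * qd τ y)) * ENNReal.ofReal ((-x)⁻¹) := by
        refine lintegral_mul_const'' _ ?_
        exact ENNReal.measurable_ofReal.comp_aemeasurable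
          ((((continuousOn_id.neg).mul ((qd_contOn ha hb hτc hτpos).mono (hsub n))).aemeasurable (hsm n)))
    _ ≤ ENNReal.ofReal (Real.exp (-Fi τ x)) * ENNReal.ofReal ((-x)⁻¹) := by
        refine mul_le_mul_left ?_ _
        have hInt : IntegrableOn (fun y => -y * qd τ y) (Ioo (u n) x) := by
          refine IntegrableOn.mono_set ?_ Ioo_subset_Icc_self
          exact (((continuousOn_id.neg).mul ((qd_contOn ha hb hτc hτpos).mono hIccS)).integrableOn_Icc)
        have hnn : 0 ≤ᵐ[volume.restrict (s n)] (fun y => -y * qd τ y) := by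
          filter_upwards [ae_restrict_mem (hsm n)] with y hy
          have h2 : (0:ℝ) ≤ -y := by have := hy.2; linarith
          exact mul_nonneg h2 (qd_nonneg hτ0 y)
        rw [← ofReal_integral_eq_lintegral_ofReal hInt hnn]
        refine ENNReal.ofReal_le_ofReal ?_
        have heq : ∫ y in s n, -y * qd τ y = ∫ y in (u n)..x, -(y * qd τ y) := by
          rw [intervalIntegral.integral_of_le (hu2 n).2.le, ← integral_Ioc_eq_integral_Ioo]
          simp only [neg_mul]
        rw [heq, intervalIntegral.integral_neg, ftc_yq ha hb hτc hτpos (huS n) hx]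
        have := Real.exp_pos (-Fi τ (u n))
        linarith
    _ = ENNReal.ofReal (Real.exp (-Fi τ x) / (-x)) := by
        rw [← ENNReal.ofReal_mul' (by positivity), div_eq_mul_inv]

theorem lint_bound_right (ha : a < 0) (hb : 0 < b) (hτc : Continuous τ) (hτ0 : ∀ x, 0 ≤ τ x)
    (hτpos : ∀ x : ℝ, 0 < τ x ↔ (a < (x : EReal) ∧ (x : EReal) < b))
    {x : ℝ} (hx : x ∈ Sd a b) (hx0 : 0 < x) :
    ∫⁻ y in {y : ℝ | x < y ∧ (y:EReal) < b}, ENNReal.ofReal (qd τ y)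
      ≤ ENNReal.ofReal (Real.exp (-Fi τ x) / x) := by
  obtain ⟨v, hv1, hv2, hv3⟩ := exists_seq_gt b x hx.2
  have hvS : ∀ n, v n ∈ Sd a b := fun n =>
    ⟨lt_trans hx.1 (EReal.coe_lt_coe_iff.2 (hv2 n).1), (hv2 n).2⟩
  set s : ℕ → Set ℝ := fun n => Ioo x (v n) with hs
  have hsm : ∀ n, MeasurableSet (s n) := fun n => measurableSet_Ioo
  have hmono : Monotone s := fun m n hmn => Ioo_subset_Ioo_right (hv1 hmn)
  have hsub : ∀ n, s n ⊆ Sd a b := fun n y hy =>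
    mem_Sd_of_le hx (hvS n) hy.1.le hy.2.le
  have hA : {y : ℝ | x < y ∧ (y:EReal) < b} = ⋃ n, s n := by
    ext y
    simp only [mem_setOf_eq, mem_iUnion, hs, mem_Ioo]
    constructor
    · rintro ⟨h1, h2⟩
      obtain ⟨n, hn⟩ := hv3 y h1 h2
      exact ⟨n, h1, hn⟩
    · rintro ⟨n, h1, h2⟩
      exact ⟨h1, lt_trans (EReal.coe_lt_coe_iff.2 h2) (hv2 n).2⟩
  have hq_aem : ∀ (T : Set ℝ), MeasurableSet T → T ⊆ Sd a b →
      AEMeasurable (fun y => ENNReal.ofReal (qd τ y)) (volume.restrict T) := by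
    intro T hTm hTS
    exact ENNReal.measurable_ofReal.comp_aemeasurable
      (((qd_contOn ha hb hτc hτpos).mono hTS).aemeasurable hTm)
  rw [hA, lint_mono_union _ s hmono hsm (hq_aem _ (MeasurableSet.iUnion hsm)
    (iUnion_subset hsub))]
  refine iSup_le fun n => ?_
  have hIccS : Icc x (v n) ⊆ Sd a b := fun y hy => mem_Sd_of_le hx (hvS n) hy.1 hy.2
  calc ∫⁻ y in s n, ENNReal.ofReal (qd τ y)
      ≤ ∫⁻ y in s n, ENNReal.ofReal (y * qd τ y) * ENNReal.ofReal (x⁻¹) := by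
        refine lintegral_mono_ae ?_
        rw [ae_restrict_iff' (hsm n)]
        refine Filter.Eventually.of_forall fun y hy => ?_
        rw [← ENNReal.ofReal_mul' (by positivity)]
        refine ENNReal.ofReal_le_ofReal ?_
        rw [mul_comm y (qd τ y), mul_assoc, ← div_eq_mul_inv]
        refine le_mul_of_one_le_right (qd_nonneg hτ0 y) ?_
        rw [le_div_iff₀ hx0, one_mul]
        exact hy.1.le
    _ = (∫⁻ y in s n, ENNReal.ofReal (y * qd τ y)) * ENNReal.ofReal (x⁻¹) := by
        refine lintegral_mul_const'' _ ?_
        exact ENNReal.measurable_ofReal.comp_aemeasurable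
          (((continuousOn_id.mul ((qd_contOn ha hb hτc hτpos).mono (hsub n))).aemeasurable (hsm n)))
    _ ≤ ENNReal.ofReal (Real.exp (-Fi τ x)) * ENNReal.ofReal (x⁻¹) := by
        refine mul_le_mul_left ?_ _
        have hInt : IntegrableOn (fun y => y * qd τ y) (Ioo x (v n)) := by
          refine IntegrableOn.mono_set ?_ Ioo_subset_Icc_self
          exact ((continuousOn_id.mul ((qd_contOn ha hb hτc hτpos).mono hIccS)).integrableOn_Icc)
        have hnn : 0 ≤ᵐ[volume.restrict (s n)] (fun y => y * qd τ y) := by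
          filter_upwards [ae_restrict_mem (hsm n)] with y hy
          have h2 : (0:ℝ) ≤ y := le_trans hx0.le hy.1.le
          exact mul_nonneg h2 (qd_nonneg hτ0 y)
        rw [← ofReal_integral_eq_lintegral_ofReal hInt hnn]
        refine ENNReal.ofReal_le_ofReal ?_
        have heq : ∫ y in s n, y * qd τ y = ∫ y in x..(v n), y * qd τ y := by
          rw [intervalIntegral.integral_of_le (hv2 n).1.le, ← integral_Ioc_eq_integral_Ioo]
        rw [heq, ftc_yq ha hb hτc hτpos hx (hvS n)]
        have := Real.exp_pos (-Fi τ (v n))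
        linarith
    _ = ENNReal.ofReal (Real.exp (-Fi τ x) / x) := by
        rw [← ENNReal.ofReal_mul' (by positivity), div_eq_mul_inv]

theorem Aset_meas {x : ℝ} : MeasurableSet (Aset a x) := by
  have h1 : MeasurableSet {y : ℝ | a < (y:EReal)} :=
    (isOpen_Ioi.preimage continuous_coe_real_ereal).measurableSet
  exact h1.inter measurableSet_Iio

theorem Bset_meas {x : ℝ} : MeasurableSet (Bset b x) := by
  have h1 : MeasurableSet {y : ℝ | (y:EReal) < b} :=
    (isOpen_Iio.preimage continuous_coe_real_ereal).measurableSet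
  exact (measurableSet_Ioi (a := x)).inter h1

theorem Aset_subset_Sd {x : ℝ} (hx : x ∈ Sd a b) : Aset a x ⊆ Sd a b := fun y hy =>
  ⟨hy.1, lt_trans (EReal.coe_lt_coe_iff.2 hy.2) hx.2⟩

theorem Bset_subset_Sd {x : ℝ} (hx : x ∈ Sd a b) : Bset b x ⊆ Sd a b := fun y hy =>
  ⟨lt_trans hx.1 (EReal.coe_lt_coe_iff.2 hy.1), hy.2⟩

/-- From an lintegral bound, integrability and an integral bound. -/
theorem intOn_of_lint (ha : a < 0) (hb : 0 < b) (hτc : Continuous τ) (hτ0 : ∀ x, 0 ≤ τ x)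
    (hτpos : ∀ x : ℝ, 0 < τ x ↔ (a < (x : EReal) ∧ (x : EReal) < b))
    {T : Set ℝ} (hTm : MeasurableSet T) (hTS : T ⊆ Sd a b) {c : ℝ} (hc : 0 ≤ c)
    (hlint : ∫⁻ y in T, ENNReal.ofReal (qd τ y) ≤ ENNReal.ofReal c) :
    IntegrableOn (qd τ) T ∧ ∫ y in T, qd τ y ≤ c := by
  have hsm : AEStronglyMeasurable (qd τ) (volume.restrict T) :=
    ((qd_contOn ha hb hτc hτpos).mono hTS).aestronglyMeasurable hTm
  have hnn : 0 ≤ᵐ[volume.restrict T] qd τ :=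
    Filter.Eventually.of_forall (qd_nonneg hτ0)
  have hfin : HasFiniteIntegral (qd τ) (volume.restrict T) := by
    rw [hasFiniteIntegral_iff_ofReal hnn]
    exact lt_of_le_of_lt hlint ENNReal.ofReal_lt_top
  refine ⟨⟨hsm, hfin⟩, ?_⟩
  rw [integral_eq_lintegral_of_nonneg_ae hnn hsm]
  exact ENNReal.toReal_le_of_le_ofReal hc hlint

theorem exists_neg_mem (ha : a < 0) (hb : 0 < b) : ∃ c : ℝ, c ∈ Sd a b ∧ c < 0 := by
  obtain ⟨c, hc1, hc2⟩ := EReal.exists_between_coe_real ha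
  have hc0 : c < 0 := by exact_mod_cast hc2
  exact ⟨c, ⟨hc1, lt_trans hc2 hb⟩, hc0⟩

theorem exists_pos_mem (ha : a < 0) (hb : 0 < b) : ∃ d : ℝ, d ∈ Sd a b ∧ 0 < d := by
  obtain ⟨d, hd1, hd2⟩ := EReal.exists_between_coe_real hb
  have hd0 : 0 < d := by exact_mod_cast hd1
  exact ⟨d, ⟨lt_trans ha hd1, hd2⟩, hd0⟩

theorem integrableOn_qd_Sd (ha : a < 0) (hb : 0 < b) (hτc : Continuous τ) (hτ0 : ∀ x, 0 ≤ τ x)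
    (hτpos : ∀ x : ℝ, 0 < τ x ↔ (a < (x : EReal) ∧ (x : EReal) < b)) :
    IntegrableOn (qd τ) (Sd a b) := by
  obtain ⟨c, hcS, hc0⟩ := exists_neg_mem ha hb
  obtain ⟨d, hdS, hd0⟩ := exists_pos_mem ha hb
  have hA : IntegrableOn (qd τ) (Aset a c) :=
    (intOn_of_lint ha hb hτc hτ0 hτpos Aset_meas (Aset_subset_Sd hcS)
      (div_nonneg (Real.exp_pos _).le (by linarith)) (lint_bound_left ha hb hτc hτ0 hτpos hcS hc0)).1
  have hB : IntegrableOn (qd τ) (Bset b d) :=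
    (intOn_of_lint ha hb hτc hτ0 hτpos Bset_meas (Bset_subset_Sd hdS)
      (div_nonneg (Real.exp_pos _).le hd0.le) (lint_bound_right ha hb hτc hτ0 hτpos hdS hd0)).1
  have hIcc : IntegrableOn (qd τ) (Icc c d) :=
    ((qd_contOn ha hb hτc hτpos).mono
      (fun y hy => mem_Sd_of_le hcS hdS hy.1 hy.2)).integrableOn_Icc
  refine IntegrableOn.mono_set ((hA.union hIcc).union hB) ?_
  intro y hy
  rcases lt_or_ge y c with h1 | h1
  · exact Or.inl (Or.inl ⟨hy.1, h1⟩)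
  rcases le_or_gt y d with h2 | h2
  · exact Or.inl (Or.inr ⟨h1, h2⟩)
  · exact Or.inr ⟨h2, hy.2⟩

theorem Cd_pos (ha : a < 0) (hb : 0 < b) (hτc : Continuous τ) (hτ0 : ∀ x, 0 ≤ τ x)
    (hτpos : ∀ x : ℝ, 0 < τ x ↔ (a < (x : EReal) ∧ (x : EReal) < b)) :
    0 < Cd a b τ := by
  obtain ⟨c, hcS, hc0⟩ := exists_neg_mem ha hb
  obtain ⟨d, hdS, hd0⟩ := exists_pos_mem ha hb
  have hsub : Ioc c d ⊆ Sd a b := fun y hy => mem_Sd_of_le hcS hdS hy.1.le hy.2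
  have h1 : 0 < ∫ y in c..d, qd τ y := by
    refine intervalIntegral.intervalIntegral_pos_of_pos_on ?_ ?_ (lt_trans hc0 hd0)
    · refine ((qd_contOn ha hb hτc hτpos).mono (fun y hy => ?_)).intervalIntegrable
      rw [uIcc_of_le (lt_trans hc0 hd0).le] at hy
      exact mem_Sd_of_le hcS hdS hy.1 hy.2
    · exact fun y hy => qd_pos hτpos (mem_Sd_of_le hcS hdS hy.1.le hy.2.le)
  have h2 : ∫ y in c..d, qd τ y ≤ Cd a b τ := by
    rw [intervalIntegral.integral_of_le (lt_trans hc0 hd0).le]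
    refine setIntegral_mono_set (integrableOn_qd_Sd ha hb hτc hτ0 hτpos)
      (Filter.Eventually.of_forall (qd_nonneg hτ0)) (HasSubset.Subset.eventuallyLE hsub)
  linarith

theorem h_aesm (hpc : ∃ S : Finset ℝ, ContinuousOn h ((S : Set ℝ)ᶜ)) :
    AEStronglyMeasurable h (volume : Measure ℝ) := by
  obtain ⟨Sh, hSh⟩ := hpc
  have h0 : (volume : Measure ℝ) (Sh : Set ℝ) = 0 :=
    Set.Countable.measure_zero (Sh.countable_toSet) _
  have h2 : ∀ᵐ x : ℝ ∂volume, x ∈ ((Sh : Set ℝ)ᶜ) := by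
    rw [MeasureTheory.ae_iff]
    simpa using h0
  have h1 : volume.restrict ((Sh : Set ℝ)ᶜ) = volume :=
    Measure.restrict_eq_self_of_ae_mem h2
  have h3 := hSh.aestronglyMeasurable (μ := volume) ((Sh.finite_toSet).measurableSet.compl)
  rwa [h1] at h3

theorem ETau_eq (hpc : ∃ S : Finset ℝ, ContinuousOn h ((S : Set ℝ)ᶜ)) :
    ETau a b τ h = (∫ y in Sd a b, h y * qd τ y) / Cd a b τ := by
  unfold ETau
  have key : ∀ y : ℝ, h y * pTau a b τ y
      = (Sd a b).indicator (fun y => (h y * qd τ y) / Cd a b τ) y := by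
    intro y
    unfold pTau
    by_cases hy : a < (y:EReal) ∧ (y:EReal) < b
    · rw [if_pos hy, indicator_of_mem (show y ∈ Sd a b from hy)]
      show h y * (qd τ y / Cd a b τ) = _
      ring
    · rw [if_neg hy, indicator_of_notMem (show y ∉ Sd a b from hy), mul_zero]
  simp_rw [key]
  rw [integral_indicator Sd_meas, integral_div]

theorem integrableOn_h_mul_qd (ha : a < 0) (hb : 0 < b) (hτc : Continuous τ) (hτ0 : ∀ x, 0 ≤ τ x)
    (hτpos : ∀ x : ℝ, 0 < τ x ↔ (a < (x : EReal) ∧ (x : EReal) < b))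
    (hbdd : ∃ M, ∀ x, |h x| ≤ M)
    (hpc : ∃ S : Finset ℝ, ContinuousOn h ((S : Set ℝ)ᶜ))
    {T : Set ℝ} (hT : IntegrableOn (qd τ) T) :
    IntegrableOn (fun y => h y * qd τ y) T := by
  obtain ⟨M', hM'⟩ := hbdd
  exact hT.bdd_mul ((h_aesm hpc).restrict) (c := M') (Filter.Eventually.of_forall fun y => by
    rw [Real.norm_eq_abs]; exact hM' y)

theorem abs_ETau_le (ha : a < 0) (hb : 0 < b) (hτc : Continuous τ) (hτ0 : ∀ x, 0 ≤ τ x)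
    (hτpos : ∀ x : ℝ, 0 < τ x ↔ (a < (x : EReal) ∧ (x : EReal) < b))
    (hbdd : ∃ M, ∀ x, |h x| ≤ M)
    (hpc : ∃ S : Finset ℝ, ContinuousOn h ((S : Set ℝ)ᶜ))
    {M : ℝ} (hM : ∀ y ∈ Sd a b, |h y| ≤ M) :
    |ETau a b τ h| ≤ M := by
  have hC := Cd_pos ha hb hτc hτ0 hτpos
  have hq := integrableOn_qd_Sd ha hb hτc hτ0 hτpos
  have h1 : |∫ y in Sd a b, h y * qd τ y| ≤ M * Cd a b τ := by
    have hn := norm_integral_le_integral_norm (μ := volume.restrict (Sd a b))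
      (fun y => h y * qd τ y)
    simp only [Real.norm_eq_abs] at hn
    refine le_trans hn ?_
    have h2 : ∫ y in Sd a b, |h y * qd τ y| ≤ ∫ y in Sd a b, M * qd τ y := by
      refine setIntegral_mono_on
        ((integrableOn_h_mul_qd ha hb hτc hτ0 hτpos hbdd hpc hq).abs)
        (hq.const_mul M) Sd_meas (fun y hy => ?_)
      rw [abs_mul, abs_of_nonneg (qd_nonneg hτ0 y)]
      exact mul_le_mul_of_nonneg_right (hM y hy) (qd_nonneg hτ0 y)
    rw [integral_const_mul] at h2
    exact h2
  rw [ETau_eq hpc, abs_div, abs_of_pos hC, div_le_iff₀ hC]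
  exact h1

theorem key_zero (ha : a < 0) (hb : 0 < b) (hτc : Continuous τ) (hτ0 : ∀ x, 0 ≤ τ x)
    (hτpos : ∀ x : ℝ, 0 < τ x ↔ (a < (x : EReal) ∧ (x : EReal) < b))
    (hbdd : ∃ M, ∀ x, |h x| ≤ M)
    (hpc : ∃ S : Finset ℝ, ContinuousOn h ((S : Set ℝ)ᶜ)) :
    ∫ y in Sd a b, (h y - ETau a b τ h) * qd τ y = 0 := by
  have hC := Cd_pos ha hb hτc hτ0 hτpos
  have hq := integrableOn_qd_Sd ha hb hτc hτ0 hτpos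
  have hhq := integrableOn_h_mul_qd ha hb hτc hτ0 hτpos hbdd hpc hq
  have hmul : ∫ y in Sd a b, h y * qd τ y = ETau a b τ h * Cd a b τ := by
    rw [ETau_eq hpc, div_mul_cancel₀ _ hC.ne']
  simp_rw [sub_mul]
  rw [integral_sub hhq (hq.const_mul _), hmul, integral_const_mul]
  show ETau a b τ h * Cd a b τ - ETau a b τ h * Cd a b τ = 0
  ring

theorem integrableOn_hE_mul_qd (ha : a < 0) (hb : 0 < b) (hτc : Continuous τ) (hτ0 : ∀ x, 0 ≤ τ x)
    (hτpos : ∀ x : ℝ, 0 < τ x ↔ (a < (x : EReal) ∧ (x : EReal) < b))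
    (hbdd : ∃ M, ∀ x, |h x| ≤ M)
    (hpc : ∃ S : Finset ℝ, ContinuousOn h ((S : Set ℝ)ᶜ))
    {T : Set ℝ} (hT : IntegrableOn (qd τ) T) :
    IntegrableOn (fun y => (h y - ETau a b τ h) * qd τ y) T := by
  simp_rw [sub_mul]
  exact (integrableOn_h_mul_qd ha hb hτc hτ0 hτpos hbdd hpc hT).sub (hT.const_mul _)

theorem abs_G_le (ha : a < 0) (hb : 0 < b) (hτc : Continuous τ) (hτ0 : ∀ x, 0 ≤ τ x)
    (hτpos : ∀ x : ℝ, 0 < τ x ↔ (a < (x : EReal) ∧ (x : EReal) < b))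
    (hbdd : ∃ M, ∀ x, |h x| ≤ M)
    (hpc : ∃ S : Finset ℝ, ContinuousOn h ((S : Set ℝ)ᶜ))
    {M : ℝ} (hM : ∀ y ∈ Sd a b, |h y| ≤ M)
    {T : Set ℝ} (hTm : MeasurableSet T) (hTS : T ⊆ Sd a b) (hT : IntegrableOn (qd τ) T) :
    |∫ y in T, (h y - ETau a b τ h) * qd τ y| ≤ 2 * M * ∫ y in T, qd τ y := by
  have hE := abs_ETau_le ha hb hτc hτ0 hτpos hbdd hpc hM
  have hn := norm_integral_le_integral_norm (μ := volume.restrict T)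
    (fun y => (h y - ETau a b τ h) * qd τ y)
  simp only [Real.norm_eq_abs] at hn
  refine le_trans hn ?_
  have h2 : ∫ y in T, |(h y - ETau a b τ h) * qd τ y| ≤ ∫ y in T, (2*M) * qd τ y := by
    refine setIntegral_mono_on
      ((integrableOn_hE_mul_qd ha hb hτc hτ0 hτpos hbdd hpc hT).abs)
      (hT.const_mul _) hTm (fun y hy => ?_)
    rw [abs_mul, abs_of_nonneg (qd_nonneg hτ0 y)]
    refine mul_le_mul_of_nonneg_right ?_ (qd_nonneg hτ0 y)
    have h4 := hM y (hTS hy)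
    calc |h y - ETau a b τ h| ≤ |h y| + |ETau a b τ h| := abs_sub _ _
      _ ≤ 2 * M := by linarith
  rwa [integral_const_mul] at h2


theorem U_eq (ha : a < 0) (hb : 0 < b) (hτc : Continuous τ)
    (hτpos : ∀ x : ℝ, 0 < τ x ↔ (a < (x : EReal) ∧ (x : EReal) < b))
    {x : ℝ} (hx : x ∈ Sd a b) :
    UTau a b τ h x = Real.exp (Fi τ x) * ∫ y in Aset a x, (h y - ETau a b τ h) * qd τ y := by
  unfold UTau
  rw [← integral_const_mul]
  refine setIntegral_congr_fun Aset_meas (fun y hy => ?_)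
  have hyS : y ∈ Sd a b := Aset_subset_Sd hx hy
  have hiv : ∫ z in y..x, z / τ z = Fi τ x - Fi τ y :=
    (intervalIntegral.integral_interval_sub_left
      (intervalIntegrable_div hτc hτpos (zero_mem_Sd ha hb) hx)
      (intervalIntegrable_div hτc hτpos (zero_mem_Sd ha hb) hyS)).symm
  rw [hiv]
  show (h y - ETau a b τ h) * Real.exp (Fi τ x - Fi τ y) / τ y
    = Real.exp (Fi τ x) * ((h y - ETau a b τ h) * (Real.exp (-Fi τ y) / τ y))
  rw [Real.exp_sub, Real.exp_neg]
  ring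

theorem G_eq_neg (ha : a < 0) (hb : 0 < b) (hτc : Continuous τ) (hτ0 : ∀ x, 0 ≤ τ x)
    (hτpos : ∀ x : ℝ, 0 < τ x ↔ (a < (x : EReal) ∧ (x : EReal) < b))
    (hbdd : ∃ M, ∀ x, |h x| ≤ M)
    (hpc : ∃ S : Finset ℝ, ContinuousOn h ((S : Set ℝ)ᶜ))
    {x : ℝ} (hx : x ∈ Sd a b) :
    ∫ y in Aset a x, (h y - ETau a b τ h) * qd τ y
      = - ∫ y in Bset b x, (h y - ETau a b τ h) * qd τ y := by
  have hq := integrableOn_qd_Sd ha hb hτc hτ0 hτpos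
  have hz := key_zero ha hb hτc hτ0 hτpos hbdd hpc
  have hle : Aset a x ∪ Bset b x ⊆ Sd a b :=
    union_subset (Aset_subset_Sd hx) (Bset_subset_Sd hx)
  have hae : (Aset a x ∪ Bset b x : Set ℝ) =ᵐ[volume] Sd a b := by
    rw [MeasureTheory.ae_eq_set]
    constructor
    · rw [diff_eq_empty.2 hle, measure_empty]
    · refine measure_mono_null (fun y hy => ?_) (measure_singleton x)
      obtain ⟨hyS, hyn⟩ := hy
      have h1 : y ∉ Aset a x := fun hc => hyn (mem_union_left _ hc)
      have h2 : y ∉ Bset b x := fun hc => hyn (mem_union_right _ hc)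
      have hxy : x ≤ y := le_of_not_gt (fun hc => h1 ⟨hyS.1, hc⟩)
      have hyx : y ≤ x := le_of_not_gt (fun hc => h2 ⟨hc, hyS.2⟩)
      exact mem_singleton_iff.2 (le_antisymm hyx hxy)
  have disj : Disjoint (Aset a x) (Bset b x) := by
    rw [Set.disjoint_left]
    intro y h1 h2
    exact absurd h2.1 (not_lt.2 h1.2.le)
  have intA : IntegrableOn (fun y => (h y - ETau a b τ h) * qd τ y) (Aset a x) :=
    integrableOn_hE_mul_qd ha hb hτc hτ0 hτpos hbdd hpc (hq.mono_set (Aset_subset_Sd hx))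
  have intB : IntegrableOn (fun y => (h y - ETau a b τ h) * qd τ y) (Bset b x) :=
    integrableOn_hE_mul_qd ha hb hτc hτ0 hτpos hbdd hpc (hq.mono_set (Bset_subset_Sd hx))
  have hz2 : ∫ y in Aset a x ∪ Bset b x, (h y - ETau a b τ h) * qd τ y = 0 := by
    rw [setIntegral_congr_set hae]
    exact hz
  rw [setIntegral_union disj Bset_meas intA intB] at hz2
  linarith

theorem xU_bound (ha : a < 0) (hb : 0 < b) (hτc : Continuous τ) (hτ0 : ∀ x, 0 ≤ τ x)
    (hτpos : ∀ x : ℝ, 0 < τ x ↔ (a < (x : EReal) ∧ (x : EReal) < b))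
    (hbdd : ∃ M, ∀ x, |h x| ≤ M)
    (hpc : ∃ S : Finset ℝ, ContinuousOn h ((S : Set ℝ)ᶜ))
    {M : ℝ} (hM : ∀ y ∈ Sd a b, |h y| ≤ M)
    {x : ℝ} (hx : x ∈ Sd a b) :
    |x * UTau a b τ h x| ≤ 2 * M := by
  have hM0 : 0 ≤ M := le_trans (abs_nonneg _) (hM 0 (zero_mem_Sd ha hb))
  have hq := integrableOn_qd_Sd ha hb hτc hτ0 hτpos
  rcases lt_trichotomy x 0 with hx0 | hx0 | hx0
  · have hIq := intOn_of_lint ha hb hτc hτ0 hτpos Aset_meas (Aset_subset_Sd hx)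
      (div_nonneg (Real.exp_pos _).le (by linarith)) (lint_bound_left ha hb hτc hτ0 hτpos hx hx0)
    have hG := abs_G_le ha hb hτc hτ0 hτpos hbdd hpc hM Aset_meas (Aset_subset_Sd hx) hIq.1
    have e2 : |∫ y in Aset a x, (h y - ETau a b τ h) * qd τ y|
        ≤ 2 * M * (Real.exp (-Fi τ x) / (-x)) :=
      le_trans hG (mul_le_mul_of_nonneg_left hIq.2 (by linarith))
    rw [U_eq ha hb hτc hτpos hx, show x * (Real.exp (Fi τ x) * ∫ y in Aset a x,
      (h y - ETau a b τ h) * qd τ y) = Real.exp (Fi τ x) * (x * ∫ y in Aset a x,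
      (h y - ETau a b τ h) * qd τ y) from by ring, abs_mul, abs_mul,
      abs_of_pos (Real.exp_pos _), abs_of_neg hx0]
    calc Real.exp (Fi τ x) * (-x * |∫ y in Aset a x, (h y - ETau a b τ h) * qd τ y|)
        ≤ Real.exp (Fi τ x) * (-x * (2 * M * (Real.exp (-Fi τ x) / (-x)))) := by
          refine mul_le_mul_of_nonneg_left
            (mul_le_mul_of_nonneg_left e2 (by linarith)) (Real.exp_pos _).le
      _ = 2 * M := by
          rw [Real.exp_neg]
          have h1 : Real.exp (Fi τ x) ≠ 0 := (Real.exp_pos _).ne'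
          have hx' : x ≠ 0 := by linarith
          field_simp
  · rw [hx0]
    simp only [zero_mul, abs_zero]
    linarith
  · have hIq := intOn_of_lint ha hb hτc hτ0 hτpos Bset_meas (Bset_subset_Sd hx)
      (div_nonneg (Real.exp_pos _).le hx0.le) (lint_bound_right ha hb hτc hτ0 hτpos hx hx0)
    have hG := abs_G_le ha hb hτc hτ0 hτpos hbdd hpc hM Bset_meas (Bset_subset_Sd hx) hIq.1
    have e2 : |∫ y in Aset a x, (h y - ETau a b τ h) * qd τ y|
        ≤ 2 * M * (Real.exp (-Fi τ x) / x) := by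
      rw [G_eq_neg ha hb hτc hτ0 hτpos hbdd hpc hx, abs_neg]
      exact le_trans hG (mul_le_mul_of_nonneg_left hIq.2 (by linarith))
    rw [U_eq ha hb hτc hτpos hx, show x * (Real.exp (Fi τ x) * ∫ y in Aset a x,
      (h y - ETau a b τ h) * qd τ y) = Real.exp (Fi τ x) * (x * ∫ y in Aset a x,
      (h y - ETau a b τ h) * qd τ y) from by ring, abs_mul, abs_mul,
      abs_of_pos (Real.exp_pos _), abs_of_pos hx0]
    calc Real.exp (Fi τ x) * (x * |∫ y in Aset a x, (h y - ETau a b τ h) * qd τ y|)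
        ≤ Real.exp (Fi τ x) * (x * (2 * M * (Real.exp (-Fi τ x) / x))) := by
          refine mul_le_mul_of_nonneg_left
            (mul_le_mul_of_nonneg_left e2 (by linarith)) (Real.exp_pos _).le
      _ = 2 * M := by
          rw [Real.exp_neg]
          have h1 : Real.exp (Fi τ x) ≠ 0 := (Real.exp_pos _).ne'
          have hx' : x ≠ 0 := by linarith
          field_simp

theorem stein_deriv (ha : a < 0) (hb : 0 < b) (hτc : Continuous τ) (hτ0 : ∀ x, 0 ≤ τ x)
    (hτpos : ∀ x : ℝ, 0 < τ x ↔ (a < (x : EReal) ∧ (x : EReal) < b))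
    (hbdd : ∃ M, ∀ x, |h x| ≤ M)
    (hpc : ∃ S : Finset ℝ, ContinuousOn h ((S : Set ℝ)ᶜ))
    {x : ℝ} (hx : x ∈ Sd a b) (hcx : ContinuousAt h x) :
    HasDerivAt (UTau a b τ h)
      ((x * UTau a b τ h x + (h x - ETau a b τ h)) / τ x) x := by
  set E := ETau a b τ h with hEdef
  have hq := integrableOn_qd_Sd ha hb hτc hτ0 hτpos
  have hIhE : IntegrableOn (fun y => (h y - E) * qd τ y) (Sd a b) :=
    integrableOn_hE_mul_qd ha hb hτc hτ0 hτpos hbdd hpc hq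
  obtain ⟨c, hc1, hc2⟩ := EReal.exists_between_coe_real hx.1
  have hcx' : c < x := by exact_mod_cast hc2
  have hcS : c ∈ Sd a b := ⟨hc1, lt_trans hc2 hx.2⟩
  set Φ : ℝ → ℝ := fun t => (∫ y in Aset a c, (h y - E) * qd τ y)
    + ∫ y in c..t, (h y - E) * qd τ y with hΦdef
  have hGeq : ∀ t, t ∈ Sd a b → c < t →
      (∫ y in Aset a t, (h y - E) * qd τ y) = Φ t := by
    intro t htS hct
    have hsplit : Aset a t = Aset a c ∪ Ico c t := by
      ext y
      simp only [Aset, mem_setOf_eq, mem_union, mem_Ico]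
      constructor
      · rintro ⟨h1, h2⟩
        rcases lt_or_ge y c with h3 | h3
        · exact Or.inl ⟨h1, h3⟩
        · exact Or.inr ⟨h3, h2⟩
      · rintro (⟨h1, h2⟩ | ⟨h1, h2⟩)
        · exact ⟨h1, lt_trans h2 hct⟩
        · exact ⟨lt_of_lt_of_le hc1 (EReal.coe_le_coe_iff.2 h1), h2⟩
    have disj : Disjoint (Aset a c) (Ico c t) := by
      rw [Set.disjoint_left]
      intro y h1 h2
      exact absurd h2.1 (not_le.2 h1.2)
    have hIcoS : Ico c t ⊆ Sd a b := fun y hy => mem_Sd_of_le hcS htS hy.1 hy.2.le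
    rw [hsplit, setIntegral_union disj measurableSet_Ico
      (hIhE.mono_set (Aset_subset_Sd hcS)) (hIhE.mono_set hIcoS), hΦdef]
    simp only
    congr 1
    rw [integral_Ico_eq_integral_Ioo, ← integral_Ioc_eq_integral_Ioo,
      ← intervalIntegral.integral_of_le hct.le]
  have hΦd : HasDerivAt Φ ((h x - E) * qd τ x) x := by
    refine HasDerivAt.const_add _ ?_
    refine intervalIntegral.integral_hasDerivAt_right
      ((hIhE.mono_set (uIcc_subset_Sd hcS hx)).intervalIntegrable) ?_ ?_
    · exact ⟨Sd a b, Sd_open.mem_nhds hx, hIhE.1⟩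
    · exact (hcx.sub continuousAt_const).mul
        ((qd_contOn ha hb hτc hτpos).continuousAt (Sd_open.mem_nhds hx))
  have hGd : HasDerivAt (fun t => ∫ y in Aset a t, (h y - E) * qd τ y)
      ((h x - E) * qd τ x) x := by
    refine hΦd.congr_of_eventuallyEq ?_
    filter_upwards [(Sd_open.inter isOpen_Ioi).mem_nhds (⟨hx, hcx'⟩ :
      x ∈ Sd a b ∩ Ioi c)] with t ht
    exact hGeq t ht.1 ht.2
  have hexp : HasDerivAt (fun t => Real.exp (Fi τ t))
      (Real.exp (Fi τ x) * (x / τ x)) x := (Fi_hasDeriv ha hb hτc hτpos hx).exp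
  have hUd := hexp.mul hGd
  have hUeq : UTau a b τ h =ᶠ[𝓝 x]
      (fun t => Real.exp (Fi τ t) * ∫ y in Aset a t, (h y - E) * qd τ y) := by
    filter_upwards [Sd_open.mem_nhds hx] with t ht
    exact U_eq ha hb hτc hτpos ht
  have hfinal := hUd.congr_of_eventuallyEq hUeq
  refine hfinal.congr_deriv ?_
  symm
  rw [U_eq ha hb hτc hτpos hx]
  have hτx : τ x ≠ 0 := (tau_pos hτpos hx).ne'
  have hex : Real.exp (Fi τ x) ≠ 0 := (Real.exp_pos _).ne'
  show (x * (Real.exp (Fi τ x) * ∫ y in Aset a x, (h y - E) * qd τ y) + (h x - E)) / τ x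
    = Real.exp (Fi τ x) * (x / τ x) * (∫ y in Aset a x, (h y - E) * qd τ y)
      + Real.exp (Fi τ x) * ((h x - E) * qd τ x)
  unfold qd
  rw [Real.exp_neg]
  field_simp


end SteinAux

end SteinAuxTop

open SteinAux

/-- Stein's bound: `sup_{x ∈ (a,b)} (|x U_τ h(x)| + |τ(x) (U_τ h)'(x)|) ≤ 6 sup_{(a,b)} |h|`. -/
theorem stein_solution_bound
    (a b : EReal) (ha : a < 0) (hb : 0 < b) (τ : ℝ → ℝ)
    (hτc : Continuous τ) (hτ0 : ∀ x, 0 ≤ τ x)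
    (hτpos : ∀ x : ℝ, 0 < τ x ↔ (a < (x : EReal) ∧ (x : EReal) < b))
    (hdiv_pos : ∫⁻ y in {y : ℝ | 0 < y ∧ (y : EReal) < b},
      ENNReal.ofReal (y / τ y) = ⊤)
    (hdiv_neg : ∫⁻ y in {y : ℝ | a < (y : EReal) ∧ y < 0},
      ENNReal.ofReal (-y / τ y) = ⊤)
    (h : ℝ → ℝ) (hbdd : ∃ M, ∀ x, |h x| ≤ M)
    (hpc : ∃ S : Finset ℝ, ContinuousOn h ((S : Set ℝ)ᶜ))
    (U' : ℝ → ℝ)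
    (hU' : ∀ x : ℝ, a < (x : EReal) → (x : EReal) < b →
      HasDerivAt (UTau a b τ h) (U' x) x) :
    ∀ M : ℝ, (∀ x : ℝ, a < (x : EReal) → (x : EReal) < b → |h x| ≤ M) →
      ∀ x : ℝ, a < (x : EReal) → (x : EReal) < b →
        |x * UTau a b τ h x| + |τ x * U' x| ≤ 6 * M := by

  intro M hM x hax hxb
  have hx : x ∈ Sd a b := ⟨hax, hxb⟩
  have hMS : ∀ y ∈ Sd a b, |h y| ≤ M := fun y hy => hM y hy.1 hy.2
  have hM0 : 0 ≤ M := le_trans (abs_nonneg _) (hMS 0 (zero_mem_Sd ha hb))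
  have hE := abs_ETau_le ha hb hτc hτ0 hτpos hbdd hpc hMS
  have hxU := xU_bound ha hb hτc hτ0 hτpos hbdd hpc hMS hx
  -- the Stein identity gives the bound at continuity points
  have keybound : ∀ z ∈ Sd a b, ContinuousAt h z → |τ z * U' z| ≤ 4 * M := by
    intro z hz hcz
    have hd := stein_deriv ha hb hτc hτ0 hτpos hbdd hpc hz hcz
    have hu : U' z = (z * UTau a b τ h z + (h z - ETau a b τ h)) / τ z :=
      (hU' z hz.1 hz.2).unique hd
    have hτz : τ z ≠ 0 := (tau_pos hτpos hz).ne'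
    have he : τ z * U' z = z * UTau a b τ h z + (h z - ETau a b τ h) := by
      rw [hu]; field_simp
    rw [he]
    have h1 := xU_bound ha hb hτc hτ0 hτpos hbdd hpc hMS hz
    have h2 : |h z - ETau a b τ h| ≤ 2 * M := by
      have := hMS z hz
      calc |h z - ETau a b τ h| ≤ |h z| + |ETau a b τ h| := abs_sub _ _
        _ ≤ 2 * M := by linarith
    calc |z * UTau a b τ h z + (h z - ETau a b τ h)|
        ≤ |z * UTau a b τ h z| + |h z - ETau a b τ h| := abs_add_le _ _
      _ ≤ 4 * M := by linarith
  obtain ⟨Sh, hSh⟩ := hpc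
  have hτx := tau_pos hτpos hx
  have hτU : |τ x * U' x| ≤ 4 * M := by
    by_cases hxSh : x ∈ (Sh : Set ℝ)
    swap
    · refine keybound x hx (hSh.continuousAt ?_)
      exact (Sh.finite_toSet.isClosed.isOpen_compl).mem_nhds hxSh
    · -- x is a discontinuity point: limit argument from the right
      by_contra hcon
      push_neg at hcon
      set ε := (|τ x * U' x| - 4 * M) / 2 with hεdef
      have hε : 0 < ε := by simp only [hεdef]; linarith
      -- threshold for τ
      set c0 := (4 * M * τ x) / (4 * M + ε) with hc0def
      have h4Mε : 0 < 4 * M + ε := by linarith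
      have hc0lt : c0 < τ x := by
        rw [hc0def, div_lt_iff₀ h4Mε]
        nlinarith
      obtain ⟨δ₁, hδ₁0, hδ₁⟩ := Metric.eventually_nhds_iff.1
        ((hτc.tendsto x).eventually (eventually_gt_nhds hc0lt))
      obtain ⟨δ₂, hδ₂0, hδ₂⟩ := Metric.mem_nhds_iff.1 (Sd_open.mem_nhds hx)
      have hav : ∀ᶠ t in 𝓝[>] x, ∀ s ∈ Sh, x < s → t ≤ s := by
        rw [eventually_all_finset]
        intro s hs
        by_cases hxs : x < s
        · filter_upwards [nhdsWithin_le_nhds (Iio_mem_nhds hxs)] with t ht _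
          exact le_of_lt ht
        · filter_upwards with t hcontra
          exact absurd hcontra hxs
      have hclose : ∀ᶠ t in 𝓝[>] x, t < x + min δ₁ δ₂ :=
        nhdsWithin_le_nhds (Iio_mem_nhds (lt_add_of_pos_right _ (lt_min hδ₁0 hδ₂0)))
      have hslope : ∀ᶠ t in 𝓝[>] x,
          |slope (UTau a b τ h) x t| ≤ (4 * M + ε) / τ x := by
        filter_upwards [hav, hclose, self_mem_nhdsWithin] with t h1 h2 h3
        have hxt : x < t := h3
        have hIccSd : Icc x t ⊆ Sd a b := by
          intro z hz
          apply hδ₂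
          rw [Metric.mem_ball, Real.dist_eq, abs_of_nonneg (by linarith [hz.1])]
          have hz2 := hz.2
          have hmin := min_le_right δ₁ δ₂
          linarith
        have hcontOn : ContinuousOn (UTau a b τ h) (Icc x t) := fun z hz =>
          ((hU' z (hIccSd hz).1 (hIccSd hz).2).continuousAt).continuousWithinAt
        obtain ⟨ξ, hξmem, hξ⟩ := exists_hasDerivAt_eq_slope (UTau a b τ h) U' hxt hcontOn
          (fun z hz => hU' z ((hIccSd (Ioo_subset_Icc_self hz)).1)
            ((hIccSd (Ioo_subset_Icc_self hz)).2))
        have hξS : ξ ∈ Sd a b := hIccSd (Ioo_subset_Icc_self hξmem)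
        have hξSh : ξ ∉ (Sh : Set ℝ) := by
          intro hmem
          have := h1 ξ hmem hξmem.1
          exact absurd hξmem.2 (not_lt.2 this)
        have hcξ : ContinuousAt h ξ := hSh.continuousAt
          ((Sh.finite_toSet.isClosed.isOpen_compl).mem_nhds hξSh)
        have hkb := keybound ξ hξS hcξ
        have hτξ : 0 < τ ξ := tau_pos hτpos hξS
        have hτξc : c0 < τ ξ := by
          refine hδ₁ ?_
          rw [Real.dist_eq, abs_of_pos (by linarith [hξmem.1])]
          have hm := min_le_left δ₁ δ₂
          have := hξmem.2
          linarith
        have hU'ξ : |U' ξ| ≤ 4 * M / τ ξ := by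
          rw [le_div_iff₀ hτξ]
          calc |U' ξ| * τ ξ = |τ ξ * U' ξ| := by
                rw [abs_mul, abs_of_pos hτξ]; ring
            _ ≤ 4 * M := hkb
        have hstep : 4 * M / τ ξ ≤ (4 * M + ε) / τ x := by
          rw [div_le_div_iff₀ hτξ hτx]
          have hc0 : (4 * M + ε) * c0 = 4 * M * τ x := by
            rw [hc0def]; field_simp
          nlinarith [hτξc, h4Mε]
        rw [slope_def_field, ← hξ]
        exact le_trans hU'ξ hstep
      have htend : Tendsto (slope (UTau a b τ h) x) (𝓝[>] x) (𝓝 (U' x)) :=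
        (hasDerivAt_iff_tendsto_slope.1 (hU' x hx.1 hx.2)).mono_left
          (nhdsWithin_mono x (fun y hy => ne_of_gt hy))
      have habs : |U' x| ≤ (4 * M + ε) / τ x := le_of_tendsto htend.abs hslope
      have hfin : |τ x * U' x| ≤ 4 * M + ε := by
        rw [abs_mul, abs_of_pos hτx]
        calc τ x * |U' x| ≤ τ x * ((4 * M + ε) / τ x) :=
              mul_le_mul_of_nonneg_left habs hτx.le
          _ = 4 * M + ε := by field_simp
      rw [hεdef] at hfin
      linarith
  calc |x * UTau a b τ h x| + |τ x * U' x| ≤ 2 * M + 4 * M := add_le_add hxU hτU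
    _ = 6 * M := by ring
end

section
/- Let Z be a real random variable whose law has density p with respect to Lebesgue measure such that E|Z| < ∞, E[Z] = 0, and there exist −∞ ≤ a < 0 < b ≤ +∞ with p(x) > 0 if, and only if, x ∈ (a,b). Define τ(x) = (∫_x^{+∞} y p(y) dy)/p(x) for x ∈ (a,b) and τ(x) = 0 otherwise. Then for every differentiable f : ℝ → ℝ such that E|τ(Z) f'(Z)| < ∞, one has E|Z f(Z)| < ∞ and E[τ(Z) f'(Z) − Z f(Z)] = 0. -/
open MeasureTheory Real Set Filter
open scoped NNReal ENNReal

/-- Stein-type identity: if `Z` has a centered integrable density `p` supported on `(a,b)`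
with `−∞ ≤ a < 0 < b ≤ +∞`, and `τ(x) = (∫_x^∞ y p(y) dy)/p(x) · 1_{(a,b)}(x)`, then for
every differentiable `f` with `E|τ(Z) f'(Z)| < ∞` one has `E|Z f(Z)| < ∞` and
`E[τ(Z) f'(Z) − Z f(Z)] = 0`. -/
theorem stein_identity_general_density
    {Ω : Type*} [MeasurableSpace Ω] (P : Measure Ω) [IsProbabilityMeasure P]
    (Z : Ω → ℝ) (hZmeas : Measurable Z)
    (p : ℝ → ℝ) (hpmeas : Measurable p) (hp0 : ∀ x, 0 ≤ p x)
    (hdens : P.map Z = volume.withDensity (fun x => ENNReal.ofReal (p x)))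
    (a b : EReal) (ha : a < 0) (hb : 0 < b)
    (hsupp : ∀ x : ℝ, 0 < p x ↔ (a < (x : EReal) ∧ (x : EReal) < b))
    (hZint : Integrable Z P) (hZmean : ∫ ω, Z ω ∂P = 0)
    (τ : ℝ → ℝ)
    (hτ : ∀ x : ℝ, τ x =
      if a < (x : EReal) ∧ (x : EReal) < b then (∫ y in Set.Ioi x, y * p y) / p x
      else 0)
    (f f' : ℝ → ℝ) (hf : ∀ x, HasDerivAt f (f' x) x)
    (hint : Integrable (fun ω => τ (Z ω) * f' (Z ω)) P) :
    Integrable (fun ω => Z ω * f (Z ω)) P ∧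
      ∫ ω, (τ (Z ω) * f' (Z ω) - Z ω * f (Z ω)) ∂P = 0 := by
  classical
  have hfc : Continuous f := by
    rw [continuous_iff_continuousAt]; exact fun x => (hf x).continuousAt
  have hfm : Measurable f := hfc.measurable
  have hf'm : Measurable f' := by
    have h : f' = deriv f := funext fun x => ((hf x).deriv).symm
    rw [h]; exact measurable_deriv f
  have hhm : Measurable (fun y : ℝ => y * p y) := measurable_id.mul hpmeas
  have hpm : Measurable fun x => ENNReal.ofReal (p x) := hpmeas.ennreal_ofReal
  have htrans_int : ∀ φ : ℝ → ℝ, Measurable φ →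
      (Integrable (fun ω => φ (Z ω)) P ↔ Integrable (fun x => φ x * p x) volume) := by
    intro φ hφ
    have h1 : Integrable (fun ω => φ (Z ω)) P ↔ Integrable φ (P.map Z) :=
      (integrable_map_measure hφ.aestronglyMeasurable hZmeas.aemeasurable).symm
    rw [h1, hdens,
      integrable_withDensity_iff hpm (Eventually.of_forall fun x => ENNReal.ofReal_lt_top)]
    constructor <;> intro h2 <;> refine h2.congr (Eventually.of_forall fun x => ?_) <;>
      simp [ENNReal.toReal_ofReal (hp0 x)]
  have htrans_eq : ∀ φ : ℝ → ℝ, Measurable φ →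
      (∫ ω, φ (Z ω) ∂P) = ∫ x, φ x * p x := by
    intro φ hφ
    have h1 : (∫ ω, φ (Z ω) ∂P) = ∫ x, φ x ∂(P.map Z) :=
      (integral_map hZmeas.aemeasurable hφ.aestronglyMeasurable).symm
    rw [h1, hdens]
    have h2 : (volume.withDensity fun x => ENNReal.ofReal (p x))
        = volume.withDensity fun x => ((Real.toNNReal (p x) : ℝ≥0) : ℝ≥0∞) := rfl
    rw [h2, integral_withDensity_eq_integral_smul hpmeas.real_toNNReal]
    refine integral_congr_ae (Eventually.of_forall fun x => ?_)
    simp [NNReal.smul_def, Real.coe_toNNReal _ (hp0 x), mul_comm]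
  have hh_int : Integrable (fun y : ℝ => y * p y) volume := by
    have := (htrans_int id measurable_id).mp (by simpa using hZint)
    simpa using this
  have hh0 : (∫ y : ℝ, y * p y) = 0 := by
    have := htrans_eq id measurable_id
    simp only [id] at this
    rw [← this]; exact hZmean
  -- the primitive g
  set g : ℝ → ℝ := fun x => ∫ y in Ioi x, y * p y with hg_def
  have hsplit : ∀ x : ℝ, (∫ y in Iic x, y * p y) + g x = 0 := by
    intro x
    rw [hg_def]
    rw [intervalIntegral.integral_Iic_add_Ioi hh_int.integrableOn hh_int.integrableOn, hh0]
  have hgcont : Continuous g := by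
    have hc : Continuous fun x => ∫ t in (0:ℝ)..x, t * p t :=
      intervalIntegral.continuous_primitive
        (fun u v => hh_int.integrableOn.intervalIntegrable) 0
    have he : g = fun x => (0 - (∫ y in Iic (0:ℝ), y * p y)) - ∫ t in (0:ℝ)..x, t * p t := by
      funext x
      have h1 := hsplit x
      have h2 : (∫ y in Iic x, y * p y) - ∫ y in Iic (0:ℝ), y * p y
          = ∫ t in (0:ℝ)..x, t * p t :=
        intervalIntegral.integral_Iic_sub_Iic hh_int.integrableOn hh_int.integrableOn
      linarith
    rw [he]
    exact continuous_const.sub hc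
  -- the support interval S
  set S : Set ℝ := {x : ℝ | a < (x : EReal) ∧ (x : EReal) < b} with hS_def
  have h0S : (0:ℝ) ∈ S := by
    constructor
    · simpa using ha
    · simpa using hb
  have hSmeas : MeasurableSet S := by
    have h : S = (fun x : ℝ => (x : EReal)) ⁻¹' (Ioo a b) := rfl
    rw [h]
    exact measurable_coe_real_ereal measurableSet_Ioo
  have hpS : ∀ x, x ∉ S → p x = 0 := by
    intro x hx
    have h1 : ¬ 0 < p x := fun hc => hx ((hsupp x).mp hc)
    linarith [hp0 x]
  have hg0 : ∀ x, x ∉ S → g x = 0 := by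
    intro x hx
    rcases not_and_or.mp hx with hxa | hxb
    · push_neg at hxa
      have hz : (∫ y in Iic x, y * p y) = 0 := by
        apply MeasureTheory.setIntegral_eq_zero_of_forall_eq_zero
        intro y hy
        have hyS : y ∉ S := by
          intro hyS
          exact absurd (lt_of_lt_of_le hyS.1 (le_trans (EReal.coe_le_coe_iff.mpr hy) hxa))
            (lt_irrefl a)
        rw [hpS y hyS, mul_zero]
      have := hsplit x
      linarith
    · push_neg at hxb
      rw [hg_def]
      apply MeasureTheory.setIntegral_eq_zero_of_forall_eq_zero
      intro y hy
      have hyS : y ∉ S := by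
        intro hyS
        exact absurd (lt_of_le_of_lt (le_trans hxb (EReal.coe_le_coe_iff.mpr hy.le)) hyS.2)
          (lt_irrefl b)
      rw [hpS y hyS, mul_zero]
  have hτp : ∀ x, τ x * p x = g x := by
    intro x
    by_cases hx : x ∈ S
    · have hx' : a < (x : EReal) ∧ (x : EReal) < b := hx
      rw [hτ x, if_pos hx', div_mul_cancel₀ _ (ne_of_gt ((hsupp x).mpr hx))]
    · have hx' : ¬ (a < (x : EReal) ∧ (x : EReal) < b) := hx
      rw [hτ x, if_neg hx', zero_mul, hg0 x hx]
  have hgnn : ∀ x, 0 ≤ g x := by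
    intro x
    rcases le_or_gt 0 x with hx | hx
    · apply setIntegral_nonneg measurableSet_Ioi
      intro y hy
      exact mul_nonneg (hx.trans (le_of_lt hy)) (hp0 y)
    · have h1 : (∫ y in Iic x, y * p y) ≤ 0 := by
        apply setIntegral_nonpos measurableSet_Iic
        intro y hy
        exact mul_nonpos_iff.mpr (Or.inr ⟨le_trans hy hx.le, hp0 y⟩)
      have := hsplit x
      linarith
  have hgpos : ∀ x ∈ S, 0 < g x := by
    intro x hx
    rcases le_or_gt 0 x with h0x | h0x
    · obtain ⟨t, hxt, htb⟩ := EReal.exists_between_coe_real hx.2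
      have hxt' : x < t := by exact_mod_cast hxt
      have hnn : 0 ≤ᵐ[volume.restrict (Ioi x)] fun y => y * p y :=
        (ae_restrict_iff' measurableSet_Ioi).mpr
          (Eventually.of_forall fun y hy => mul_nonneg (h0x.trans (le_of_lt hy)) (hp0 y))
      rw [hg_def]
      refine (setIntegral_pos_iff_support_of_nonneg_ae hnn hh_int.integrableOn).mpr ?_
      have hsub : Ioo x t ⊆ Function.support (fun y => y * p y) ∩ Ioi x := by
        intro y hy
        have hy0 : 0 < y := lt_of_le_of_lt h0x hy.1
        have hpy : 0 < p y := (hsupp y).mpr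
          ⟨lt_trans hx.1 (by exact_mod_cast hy.1), lt_trans (by exact_mod_cast hy.2) htb⟩
        exact ⟨ne_of_gt (mul_pos hy0 hpy), hy.1⟩
      calc (0:ℝ≥0∞) < volume (Ioo x t) := by
            rw [Real.volume_Ioo]; exact ENNReal.ofReal_pos.mpr (by linarith)
        _ ≤ _ := measure_mono hsub
    · obtain ⟨t, hat, htx⟩ := EReal.exists_between_coe_real hx.1
      have htx' : t < x := by exact_mod_cast htx
      have hnn : 0 ≤ᵐ[volume.restrict (Iic x)] fun y => -(y * p y) :=
        (ae_restrict_iff' measurableSet_Iic).mpr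
          (Eventually.of_forall fun y hy =>
            neg_nonneg.mpr (mul_nonpos_iff.mpr (Or.inr ⟨le_trans hy h0x.le, hp0 y⟩)))
      have hpos : 0 < ∫ y in Iic x, -(y * p y) := by
        refine (setIntegral_pos_iff_support_of_nonneg_ae hnn hh_int.neg.integrableOn).mpr ?_
        have hsub : Ioo t x ⊆ Function.support (fun y => -(y * p y)) ∩ Iic x := by
          intro y hy
          have hy0 : y < 0 := lt_trans hy.2 h0x
          have hya : a < (y : EReal) := lt_trans hat (by exact_mod_cast hy.1)
          have hyb : (y : EReal) < b := lt_trans (show (y:EReal) < (0:EReal) by exact_mod_cast hy0) hb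
          have hpy : 0 < p y := (hsupp y).mpr ⟨hya, hyb⟩
          refine ⟨?_, hy.2.le⟩
          show -(y * p y) ≠ 0
          exact neg_ne_zero.mpr (ne_of_lt (mul_neg_of_neg_of_pos hy0 hpy))
        calc (0:ℝ≥0∞) < volume (Ioo t x) := by
              rw [Real.volume_Ioo]; exact ENNReal.ofReal_pos.mpr (by linarith)
          _ ≤ _ := measure_mono hsub
      rw [integral_neg] at hpos
      have := hsplit x
      linarith
  have hτm : Measurable τ := by
    have he : τ = fun x : ℝ => if a < (x : EReal) ∧ (x : EReal) < b
        then (∫ y in Ioi x, y * p y) / p x else 0 := funext hτ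
    rw [he]
    exact Measurable.ite hSmeas (hgcont.measurable.div hpmeas) measurable_const
  have hG : Integrable (fun x => f' x * g x) volume := by
    have h1 := (htrans_int (fun x => τ x * f' x) (hτm.mul hf'm)).mp hint
    have h2 : (fun x => τ x * f' x * p x) = fun x => f' x * g x := by
      funext x
      rw [← hτp x]; ring
    rwa [h2] at h1
  have hS_Icc : ∀ {c d : ℝ}, c ∈ S → d ∈ S → uIcc c d ⊆ S := by
    intro c d hc hd x hx
    have ha' : a < ((min c d : ℝ) : EReal) := by
      rcases min_choice c d with h | h <;> rw [h]
      exacts [hc.1, hd.1]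
    have hb' : ((max c d : ℝ) : EReal) < b := by
      rcases max_choice c d with h | h <;> rw [h]
      exacts [hc.2, hd.2]
    exact ⟨lt_of_lt_of_le ha' (EReal.coe_le_coe_iff.mpr hx.1),
      lt_of_le_of_lt (EReal.coe_le_coe_iff.mpr hx.2) hb'⟩
  have hloc : ∀ c ∈ S, ∀ d ∈ S, IntervalIntegrable f' volume c d := by
    intro c hc d hd
    obtain ⟨z, hzmem, hzmin⟩ := isCompact_uIcc.exists_isMinOn nonempty_uIcc
      hgcont.continuousOn
    have hε : 0 < g z := hgpos z (hS_Icc hc hd hzmem)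
    apply MeasureTheory.IntegrableOn.intervalIntegrable
    refine Integrable.mono ((hG.norm.const_mul (g z)⁻¹).integrableOn)
      hf'm.aestronglyMeasurable.restrict ?_
    rw [ae_restrict_iff' measurableSet_uIcc]
    refine Eventually.of_forall fun x hx => ?_
    have hgx : g z ≤ g x := hzmin hx
    simp only [Real.norm_eq_abs]
    have h2 : |f' x| ≤ (g z)⁻¹ * |f' x * g x| := by
      rw [abs_mul, abs_of_nonneg (hgnn x)]
      calc |f' x| = (g z)⁻¹ * (|f' x| * g z) := by field_simp
        _ ≤ (g z)⁻¹ * (|f' x| * g x) := by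
            apply mul_le_mul_of_nonneg_left _ (inv_nonneg.mpr hε.le)
            exact mul_le_mul_of_nonneg_left hgx (abs_nonneg _)
    exact h2.trans (le_abs_self _)
  have hFTC : ∀ y ∈ S, (∫ x in (0:ℝ)..y, f' x) = f y - f 0 := fun y hy =>
    intervalIntegral.integral_eq_sub_of_hasDerivAt (fun x _ => hf x) (hloc 0 h0S y hy)
  have hFTC2 : ∀ c ∈ S, ∀ d ∈ S, (∫ x in c..d, f' x) = f d - f c := fun c hc d hd =>
    intervalIntegral.integral_eq_sub_of_hasDerivAt (fun x _ => hf x) (hloc c hc d hd)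
  -- positive-side kernel
  set K1 : ℝ × ℝ → ℝ := fun q => if 0 ≤ q.1 ∧ q.1 < q.2 then f' q.1 * (q.2 * p q.2) else 0
    with hK1_def
  have hK1m : Measurable K1 := by
    refine Measurable.ite ?_ ((hf'm.comp measurable_fst).mul (hhm.comp measurable_snd))
      measurable_const
    exact (measurableSet_le measurable_const measurable_fst).inter
      (measurableSet_lt measurable_fst measurable_snd)
  have hK1sec : ∀ x : ℝ, (fun y => K1 (x, y)) =
      fun y => if 0 ≤ x then (Ioi x).indicator (fun y => f' x * (y * p y)) y else 0 := by
    intro x; funext y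
    by_cases h0 : 0 ≤ x
    · by_cases hxy : x < y
      · simp [hK1_def, h0, hxy, Set.indicator_of_mem (show y ∈ Ioi x from hxy)]
      · simp [hK1_def, h0, hxy, Set.indicator_of_notMem (show y ∉ Ioi x from hxy)]
    · simp [hK1_def, h0]
  have hnorm1 : ∀ x : ℝ, (∫ y, ‖K1 (x, y)‖) = if 0 ≤ x then |f' x| * g x else 0 := by
    intro x
    by_cases h0 : 0 ≤ x
    · rw [if_pos h0]
      have he : ∀ y, ‖K1 (x, y)‖ = (Ioi x).indicator (fun y => |f' x| * (y * p y)) y := by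
        intro y
        rw [congrFun (hK1sec x) y, if_pos h0]
        by_cases hxy : y ∈ Ioi x
        · rw [Set.indicator_of_mem hxy, Set.indicator_of_mem hxy, Real.norm_eq_abs, abs_mul,
            abs_of_nonneg (mul_nonneg (h0.trans (le_of_lt hxy)) (hp0 y))]
        · rw [Set.indicator_of_notMem hxy, Set.indicator_of_notMem hxy, norm_zero]
      simp only [he]
      rw [integral_indicator measurableSet_Ioi, integral_const_mul]
    · rw [if_neg h0]
      have he : ∀ y, ‖K1 (x, y)‖ = 0 := fun y => by
        rw [congrFun (hK1sec x) y, if_neg h0, norm_zero]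
      simp only [he, integral_zero]
  have hK1int : Integrable K1 (volume.prod volume) := by
    refine (integrable_prod_iff hK1m.aestronglyMeasurable).mpr ⟨?_, ?_⟩
    · refine Eventually.of_forall fun x => ?_
      rw [hK1sec x]
      by_cases h0 : 0 ≤ x
      · simp only [if_pos h0]
        exact (hh_int.const_mul (f' x)).indicator measurableSet_Ioi
      · simp only [if_neg h0]
        exact integrable_zero _ _ _
    · have he : (fun x => ∫ y, ‖K1 (x, y)‖) =
          fun x => if 0 ≤ x then |f' x| * g x else 0 := funext hnorm1
      rw [he]
      refine Integrable.mono hG.norm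
        ((Measurable.ite (measurableSet_le measurable_const measurable_id)
          (hf'm.abs.mul hgcont.measurable) measurable_const).aestronglyMeasurable) ?_
      refine Eventually.of_forall fun x => ?_
      by_cases h0 : 0 ≤ x
      · simp only [if_pos h0, Real.norm_eq_abs, abs_mul, abs_abs, abs_of_nonneg (hgnn x)]
        exact le_rfl
      · rw [if_neg h0, norm_zero]
        exact norm_nonneg _
  have hinner1 : ∀ x : ℝ, (∫ y, K1 (x, y)) = if 0 ≤ x then f' x * g x else 0 := by
    intro x
    rw [hK1sec x]
    by_cases h0 : 0 ≤ x
    · simp only [if_pos h0]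
      rw [integral_indicator measurableSet_Ioi, integral_const_mul]
    · simp only [if_neg h0, integral_zero]
  have hK1secx : ∀ y : ℝ, (fun x => K1 (x, y)) =
      (Ico 0 y).indicator (fun x => f' x * (y * p y)) := by
    intro y; funext x
    by_cases hx : 0 ≤ x ∧ x < y
    · simp [hK1_def, hx, Set.indicator_of_mem (show x ∈ Ico 0 y from hx)]
    · simp [hK1_def, hx, Set.indicator_of_notMem (show x ∉ Ico 0 y from hx)]
  have hinner1x : ∀ y : ℝ,
      (∫ x, K1 (x, y)) = (y * p y) * (if 0 < y then f y - f 0 else 0) := by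
    intro y
    rw [hK1secx y, integral_indicator measurableSet_Ico]
    rcases le_or_gt y 0 with hy | hy
    · rw [if_neg (not_lt.mpr hy), mul_zero, Ico_eq_empty (by simpa using not_lt.mpr hy)]
      simp
    · rw [if_pos hy]
      by_cases hpy : p y = 0
      · simp [hpy]
      · have hyS : y ∈ S := (hsupp y).mp (lt_of_le_of_ne (hp0 y) (Ne.symm hpy))
        rw [integral_mul_const, MeasureTheory.integral_Ico_eq_integral_Ioo,
          ← MeasureTheory.integral_Ioc_eq_integral_Ioo,
          ← intervalIntegral.integral_of_le hy.le, hFTC y hyS]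
        ring
  -- negative-side kernel
  set K2 : ℝ × ℝ → ℝ := fun q => if q.2 ≤ q.1 ∧ q.1 < 0 then f' q.1 * (q.2 * p q.2) else 0
    with hK2_def
  have hK2m : Measurable K2 := by
    refine Measurable.ite ?_ ((hf'm.comp measurable_fst).mul (hhm.comp measurable_snd))
      measurable_const
    exact (measurableSet_le measurable_snd measurable_fst).inter
      (measurableSet_lt measurable_fst measurable_const)
  have hK2sec : ∀ x : ℝ, (fun y => K2 (x, y)) =
      fun y => if x < 0 then (Iic x).indicator (fun y => f' x * (y * p y)) y else 0 := by
    intro x; funext y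
    by_cases h0 : x < 0
    · by_cases hxy : y ≤ x
      · simp [hK2_def, h0, hxy, Set.indicator_of_mem (show y ∈ Iic x from hxy)]
      · simp [hK2_def, h0, hxy, Set.indicator_of_notMem (show y ∉ Iic x from hxy)]
    · simp [hK2_def, h0]
  have hIic : ∀ x : ℝ, (∫ y in Iic x, y * p y) = -g x := by
    intro x
    have := hsplit x
    linarith
  have hnorm2 : ∀ x : ℝ, (∫ y, ‖K2 (x, y)‖) = if x < 0 then |f' x| * g x else 0 := by
    intro x
    by_cases h0 : x < 0
    · rw [if_pos h0]
      have he : ∀ y, ‖K2 (x, y)‖ = (Iic x).indicator (fun y => |f' x| * (-(y * p y))) y := by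
        intro y
        rw [congrFun (hK2sec x) y, if_pos h0]
        by_cases hxy : y ∈ Iic x
        · rw [Set.indicator_of_mem hxy, Set.indicator_of_mem hxy, Real.norm_eq_abs, abs_mul]
          congr 1
          rw [abs_of_nonpos (mul_nonpos_iff.mpr (Or.inr ⟨le_trans hxy h0.le, hp0 y⟩))]
        · rw [Set.indicator_of_notMem hxy, Set.indicator_of_notMem hxy, norm_zero]
      simp only [he]
      rw [integral_indicator measurableSet_Iic, integral_const_mul, integral_neg, hIic x,
        neg_neg]
    · rw [if_neg h0]
      have he : ∀ y, ‖K2 (x, y)‖ = 0 := fun y => by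
        rw [congrFun (hK2sec x) y, if_neg h0, norm_zero]
      simp only [he, integral_zero]
  have hK2int : Integrable K2 (volume.prod volume) := by
    refine (integrable_prod_iff hK2m.aestronglyMeasurable).mpr ⟨?_, ?_⟩
    · refine Eventually.of_forall fun x => ?_
      rw [hK2sec x]
      by_cases h0 : x < 0
      · simp only [if_pos h0]
        exact (hh_int.const_mul (f' x)).indicator measurableSet_Iic
      · simp only [if_neg h0]
        exact integrable_zero _ _ _
    · have he : (fun x => ∫ y, ‖K2 (x, y)‖) =
          fun x => if x < 0 then |f' x| * g x else 0 := funext hnorm2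
      rw [he]
      refine Integrable.mono hG.norm
        ((Measurable.ite (measurableSet_lt measurable_id measurable_const)
          (hf'm.abs.mul hgcont.measurable) measurable_const).aestronglyMeasurable) ?_
      refine Eventually.of_forall fun x => ?_
      by_cases h0 : x < 0
      · simp only [if_pos h0, Real.norm_eq_abs, abs_mul, abs_abs, abs_of_nonneg (hgnn x)]
        exact le_rfl
      · rw [if_neg h0, norm_zero]
        exact norm_nonneg _
  have hinner2 : ∀ x : ℝ, (∫ y, K2 (x, y)) = if x < 0 then -(f' x * g x) else 0 := by
    intro x
    rw [hK2sec x]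
    by_cases h0 : x < 0
    · simp only [if_pos h0]
      rw [integral_indicator measurableSet_Iic, integral_const_mul, hIic x, mul_neg]
    · simp only [if_neg h0, integral_zero]
  have hK2secx : ∀ y : ℝ, (fun x => K2 (x, y)) =
      (Ico y 0).indicator (fun x => f' x * (y * p y)) := by
    intro y; funext x
    by_cases hx : y ≤ x ∧ x < 0
    · simp [hK2_def, hx, Set.indicator_of_mem (show x ∈ Ico y 0 from hx)]
    · simp [hK2_def, hx, Set.indicator_of_notMem (show x ∉ Ico y 0 from hx)]
  have hinner2x : ∀ y : ℝ,
      (∫ x, K2 (x, y)) = (y * p y) * (if y < 0 then f 0 - f y else 0) := by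
    intro y
    rw [hK2secx y, integral_indicator measurableSet_Ico]
    rcases le_or_gt 0 y with hy | hy
    · rw [if_neg (not_lt.mpr hy), mul_zero, Ico_eq_empty (by simpa using hy)]
      simp
    · rw [if_pos hy]
      by_cases hpy : p y = 0
      · simp [hpy]
      · have hyS : y ∈ S := (hsupp y).mp (lt_of_le_of_ne (hp0 y) (Ne.symm hpy))
        rw [integral_mul_const, MeasureTheory.integral_Ico_eq_integral_Ioo,
          ← MeasureTheory.integral_Ioc_eq_integral_Ioo,
          ← intervalIntegral.integral_of_le hy.le, hFTC2 y hyS 0 h0S]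
        ring
  -- swap both
  have hswap1 : (∫ x, ∫ y, K1 (x, y)) = ∫ y, ∫ x, K1 (x, y) :=
    integral_integral_swap hK1int
  have hswap2 : (∫ x, ∫ y, K2 (x, y)) = ∫ y, ∫ x, K2 (x, y) :=
    integral_integral_swap hK2int
  simp only [hinner1, hinner1x] at hswap1
  simp only [hinner2, hinner2x] at hswap2
  -- integrable marginals
  have hQ1 : Integrable (fun y => (y * p y) * (if 0 < y then f y - f 0 else 0)) volume := by
    have h1 := hK1int.integral_prod_right
    exact h1.congr (Eventually.of_forall fun y => hinner1x y)
  have hQ2 : Integrable (fun y => (y * p y) * (if y < 0 then f 0 - f y else 0)) volume := by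
    have h1 := hK2int.integral_prod_right
    exact h1.congr (Eventually.of_forall fun y => hinner2x y)
  have hP1 : Integrable (fun x => if 0 ≤ x then f' x * g x else 0) volume := by
    have h1 := hK1int.integral_prod_left
    exact h1.congr (Eventually.of_forall fun x => hinner1 x)
  have hP2 : Integrable (fun x => if x < 0 then -(f' x * g x) else 0) volume := by
    have h1 := hK2int.integral_prod_left
    exact h1.congr (Eventually.of_forall fun x => hinner2 x)
  -- the key identity
  have hP2' : Integrable (fun x => if x < 0 then f' x * g x else 0) volume := by
    refine hP2.neg.congr (Eventually.of_forall fun x => ?_)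
    by_cases h0 : x < 0
    · simp [h0]
    · simp [h0]
  have hP2neg : (∫ x, if x < 0 then f' x * g x else 0)
      = - ∫ x, if x < 0 then -(f' x * g x) else 0 := by
    rw [← integral_neg]
    refine integral_congr_ae (Eventually.of_forall fun x => ?_)
    by_cases h0 : x < 0
    · simp [h0]
    · simp [h0]
  have hH_int : Integrable (fun y => (y * p y) * (f y - f 0)) volume := by
    refine (hQ1.sub hQ2).congr (Eventually.of_forall fun y => ?_)
    simp only [Pi.sub_apply]
    rcases lt_trichotomy y 0 with hy | hy | hy
    · simp only [if_neg (not_lt.mpr hy.le), if_pos hy]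
      ring
    · simp [hy]
    · simp only [if_pos hy, if_neg (not_lt.mpr hy.le)]
      ring
  have hKEY : (∫ x, f' x * g x) = ∫ y, (y * p y) * (f y - f 0) := by
    have hsum : (∫ x, f' x * g x) =
        (∫ x, if 0 ≤ x then f' x * g x else 0) + ∫ x, if x < 0 then f' x * g x else 0 := by
      rw [← integral_add hP1 hP2']
      refine integral_congr_ae (Eventually.of_forall fun x => ?_)
      by_cases h0 : 0 ≤ x
      · simp [h0, not_lt.mpr h0]
      · simp [h0, not_le.mp h0]
    have hsum2 : (∫ y, (y * p y) * (f y - f 0)) =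
        (∫ y, (y * p y) * (if 0 < y then f y - f 0 else 0)) -
          ∫ y, (y * p y) * (if y < 0 then f 0 - f y else 0) := by
      rw [← integral_sub hQ1 hQ2]
      refine integral_congr_ae (Eventually.of_forall fun y => ?_)
      simp only [Pi.sub_apply]
      rcases lt_trichotomy y 0 with hy | hy | hy
      · simp only [if_neg (not_lt.mpr hy.le), if_pos hy]
        ring
      · simp [hy]
      · simp only [if_pos hy, if_neg (not_lt.mpr hy.le)]
        ring
    rw [hsum, hsum2, hswap1, hP2neg, hswap2]
    ring
  -- assemble the conclusion
  have hZf_int : Integrable (fun ω => Z ω * f (Z ω)) P := by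
    apply (htrans_int (fun x => x * f x) (measurable_id.mul hfm)).mpr
    have he : (fun x => (x * f x) * p x) =
        fun y => (y * p y) * (f y - f 0) + f 0 * (y * p y) := funext fun y => by ring
    rw [he]
    exact hH_int.add (hh_int.const_mul (f 0))
  refine ⟨hZf_int, ?_⟩
  have hτf'_eq : (∫ ω, τ (Z ω) * f' (Z ω) ∂P) = ∫ x, f' x * g x := by
    have e1 : (∫ ω, τ (Z ω) * f' (Z ω) ∂P) = ∫ x, (τ x * f' x) * p x :=
      htrans_eq (fun x => τ x * f' x) (hτm.mul hf'm)
    rw [e1]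
    refine integral_congr_ae (Eventually.of_forall fun x => ?_)
    show (τ x * f' x) * p x = f' x * g x
    rw [← hτp x]
    ring
  have hZf_eq : (∫ ω, Z ω * f (Z ω) ∂P) = ∫ x, f' x * g x := by
    have e1 : (∫ ω, Z ω * f (Z ω) ∂P) = ∫ x, (x * f x) * p x :=
      htrans_eq (fun x => x * f x) (measurable_id.mul hfm)
    have e2 : (fun x => (x * f x) * p x) =
        fun y => (y * p y) * (f y - f 0) + f 0 * (y * p y) := funext fun y => by ring
    rw [e1, e2, integral_add hH_int (hh_int.const_mul (f 0)), integral_const_mul, hh0,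
      mul_zero, add_zero, hKEY]
  rw [integral_sub hint hZf_int, hτf'_eq, hZf_eq, sub_self]
end
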